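/- arXiv:1111.1996 — 10 statements merged into one kernel-verified Lean document; each statement's English description precedes it below -/
import Mathlib

section
/- Let K be a complete non-Archimedean valued field of characteristic p > 0, and λ ∈ K with |λ| = 1. Suppose m = min{n ≥ 1 : |1 - λ^n| < 1} exists. Then for every n ≥ 1: if m does not divide n, then |1 - λ^n| = 1; and if n = m·a·p^j with p not dividing a, then |1 - λ^n| = |1 - λ^m|^{p^j}. -/
open IsUltrametricDist Finset

/-- Let `K` be a complete non-Archimedean valued field of characteristic `p > 0`, `λ ∈ K` with
`‖λ‖ = 1`, and `m` the least positive integer with `‖1 - λ ^ m‖ < 1`.  Then for every `n ≥ 1`: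
if `m ∤ n` then `‖1 - λ ^ n‖ = 1`, and if `n = m * a * p ^ j` with `p ∤ a`, then
`‖1 - λ ^ n‖ = ‖1 - λ ^ m‖ ^ (p ^ j)`. -/
theorem norm_one_sub_pow_formula {K : Type*} [NontriviallyNormedField K] [IsUltrametricDist K]
    [CompleteSpace K] (p : ℕ) (hp : p.Prime) [CharP K p]
    (lam : K) (hlam : ‖lam‖ = 1) (m : ℕ) (hm1 : 1 ≤ m)
    (hm2 : ‖1 - lam ^ m‖ < 1)
    (hmin : ∀ n : ℕ, 1 ≤ n → ‖1 - lam ^ n‖ < 1 → m ≤ n) :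
    ∀ n : ℕ, 1 ≤ n →
      (¬ m ∣ n → ‖1 - lam ^ n‖ = 1) ∧
      (∀ a j : ℕ, ¬ p ∣ a → n = m * a * p ^ j →
        ‖1 - lam ^ n‖ = ‖1 - lam ^ m‖ ^ (p ^ j)) := by
  have hpow : ∀ k : ℕ, ‖lam ^ k‖ = 1 := fun k => by rw [norm_pow, hlam, one_pow]
  have hfac : ∀ (x : K) (k : ℕ), 1 - x ^ k = (∑ i ∈ range k, x ^ i) * (1 - x) := by
    intro x k
    linear_combination geom_sum_mul x k
  have hgeo : ∀ (x : K) (k : ℕ), ‖x‖ = 1 → ‖1 - x ^ k‖ ≤ ‖1 - x‖ := by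
    intro x k hx
    rw [hfac x k, norm_mul]
    have hs : ‖∑ i ∈ range k, x ^ i‖ ≤ 1 := by
      apply norm_sum_le_of_forall_le_of_nonneg zero_le_one
      intro i _; rw [norm_pow, hx, one_pow]
    nlinarith [norm_nonneg (1 - x)]
  have hr1 : ∀ r : ℕ, 1 ≤ r → r < m → ‖1 - lam ^ r‖ = 1 := by
    intro r hr hrm
    have hle : ‖1 - lam ^ r‖ ≤ 1 := by
      simpa [sub_eq_add_neg, hpow r] using norm_add_le_max (1 : K) (-(lam ^ r))
    rcases lt_or_eq_of_le hle with h | h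
    · exact absurd (hmin r hr h) (not_le.mpr hrm)
    · exact h
  have hkey : ∀ a : ℕ, ¬ p ∣ a → ‖1 - lam ^ (m * a)‖ = ‖1 - lam ^ m‖ := by
    intro a ha
    have h1 : 1 - lam ^ (m * a) = (∑ i ∈ range a, (lam ^ m) ^ i) * (1 - lam ^ m) := by
      rw [pow_mul]; exact hfac _ _
    rw [h1, norm_mul]
    have hcast : (a : K) ≠ 0 := by
      rw [Ne, CharP.cast_eq_zero_iff K p]; exact ha
    have hna : ‖(a : K)‖ = 1 := by
      have hfrob : ((a : K)) ^ p = (a : K) := by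
        haveI := Fact.mk hp
        rw [← Nat.cast_pow]
        apply CharP.natCast_eq_natCast' K p
        have : ((a ^ p : ℕ) : ZMod p) = ((a : ℕ) : ZMod p) := by
          push_cast; exact ZMod.pow_card _
        exact (ZMod.natCast_eq_natCast_iff _ _ _).mp this
      have hnpos : 0 < ‖(a : K)‖ := norm_pos_iff.mpr hcast
      have h3 : ‖(a : K)‖ ^ p = ‖(a : K)‖ := by rw [← norm_pow, hfrob]
      rcases lt_trichotomy ‖(a : K)‖ 1 with h | h | h
      · exfalso
        have h2 : ‖(a : K)‖ ^ p < ‖(a : K)‖ ^ 1 :=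
          pow_lt_pow_right_of_lt_one₀ hnpos h hp.one_lt
        rw [h3, pow_one] at h2
        exact lt_irrefl _ h2
      · exact h
      · exfalso
        have h2 : ‖(a : K)‖ ^ 1 < ‖(a : K)‖ ^ p := pow_lt_pow_right₀ h hp.one_lt
        rw [h3, pow_one] at h2
        exact lt_irrefl _ h2
    have hsum : ‖∑ i ∈ range a, (lam ^ m) ^ i‖ = 1 := by
      have hdiff : ‖(∑ i ∈ range a, (lam ^ m) ^ i) - (a : K)‖ < 1 := by
        have heq : (∑ i ∈ range a, (lam ^ m) ^ i) - (a : K) = ∑ i ∈ range a, ((lam ^ m) ^ i - 1) := by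
          rw [Finset.sum_sub_distrib]; simp
        rw [heq]
        rcases Nat.eq_zero_or_pos a with rfl | hapos
        · simpa using zero_lt_one
        apply lt_of_le_of_lt _ hm2
        apply norm_sum_le_of_forall_le_of_nonneg (norm_nonneg _)
        intro i _
        have := hgeo (lam ^ m) i (hpow m)
        rw [← norm_neg, neg_sub]; exact this
      have hne : ‖(∑ i ∈ range a, (lam ^ m) ^ i) - (a : K)‖ ≠ ‖(a : K)‖ := by
        rw [hna]; exact ne_of_lt hdiff
      have := norm_add_eq_max_of_norm_ne_norm hne
      rw [sub_add_cancel] at this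
      rw [this, hna, max_eq_right hdiff.le]
    rw [hsum, one_mul]
  intro n hn
  constructor
  · intro hnd
    set q := n / m with hq
    set r := n % m with hr
    have hrpos : 1 ≤ r := Nat.one_le_iff_ne_zero.mpr (fun h => hnd (Nat.dvd_of_mod_eq_zero h))
    have hrlt : r < m := Nat.mod_lt _ hm1
    have hneq : n = m * q + r := (Nat.div_add_mod n m).symm
    have hdecomp : 1 - lam ^ n =
        (1 - lam ^ (m * q)) + lam ^ (m * q) * (1 - lam ^ r) := by
      rw [hneq, pow_add]; ring
    have hA : ‖1 - lam ^ (m * q)‖ < 1 := by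
      rw [pow_mul]
      exact lt_of_le_of_lt (hgeo (lam ^ m) q (hpow m)) hm2
    have hB : ‖lam ^ (m * q) * (1 - lam ^ r)‖ = 1 := by
      rw [norm_mul, hpow, hr1 r hrpos hrlt, one_mul]
    rw [hdecomp]
    have hne : ‖1 - lam ^ (m * q)‖ ≠ ‖lam ^ (m * q) * (1 - lam ^ r)‖ := by
      rw [hB]; exact ne_of_lt hA
    rw [norm_add_eq_max_of_norm_ne_norm hne, hB, max_eq_right hA.le]
  · intro a j ha hnaj
    haveI := Fact.mk hp
    have h1 : 1 - lam ^ n = (1 - lam ^ (m * a)) ^ p ^ j := by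
      rw [hnaj, pow_mul, sub_pow_char_pow, one_pow]
    rw [h1, norm_pow, hkey a ha]
end

section
/- Let K be a field of characteristic p > 0 with a non-Archimedean absolute value, and λ ∈ K with |λ| = 1 and |1 - λ| < 1. Then for every integer N ≥ 1, the product ∏_{i=1}^{p^{N-1}} |1 - λ^{i·p}| equals |1 - λ|^{p^N · ((p-1)/p · (N-1) + 1)}. -/
open Finset

private lemma aux_geom {K : Type*} [NontriviallyNormedField K] (lam : K) (n : ℕ) :
    1 - lam ^ n = (∑ i ∈ range n, lam ^ i) * (1 - lam) := by
  have := geom_sum_mul lam n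
  linear_combination this

private lemma aux_le {K : Type*} [NontriviallyNormedField K] [IsUltrametricDist K]
    (lam : K) (hlam : ‖lam‖ = 1) (n : ℕ) : ‖1 - lam ^ n‖ ≤ ‖1 - lam‖ := by
  rw [aux_geom, norm_mul]
  have h1 : ‖∑ i ∈ range n, lam ^ i‖ ≤ 1 := by
    apply IsUltrametricDist.norm_sum_le_of_forall_le_of_nonneg zero_le_one
    intro i _
    simp [norm_pow, hlam]
  calc ‖∑ i ∈ range n, lam ^ i‖ * ‖1 - lam‖ ≤ 1 * ‖1 - lam‖ :=
        mul_le_mul_of_nonneg_right h1 (norm_nonneg _)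
    _ = ‖1 - lam‖ := one_mul _

private lemma aux_coprime {K : Type*} [NontriviallyNormedField K] [IsUltrametricDist K]
    (p : ℕ) (hp : p.Prime) [CharP K p] (lam : K) (hlam : ‖lam‖ = 1)
    (hsmall : ‖1 - lam‖ < 1) (a : ℕ) (ha : ¬ p ∣ a) : ‖1 - lam ^ a‖ = ‖1 - lam‖ := by
  rw [aux_geom, norm_mul]
  suffices hs : ‖∑ i ∈ range a, lam ^ i‖ = 1 by rw [hs, one_mul]
  haveI := Fact.mk hp
  have hcast : ‖(a : K)‖ = 1 := by
    have hpow : (a : K) ^ (p - 1) = 1 := by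
      have h1 : ((a : ZMod p)) ≠ 0 := by
        rwa [Ne, ZMod.natCast_eq_zero_iff]
      have h2 : ((a : ZMod p)) ^ (p - 1) = 1 := ZMod.pow_card_sub_one_eq_one h1
      have h3 := congrArg (ZMod.castHom (dvd_refl p) K) h2
      simpa using h3
    have h4 := congrArg norm hpow
    rw [norm_pow, norm_one] at h4
    have hp1 : p - 1 ≠ 0 := Nat.sub_ne_zero_of_lt hp.one_lt
    rcases pow_eq_one_iff_cases.mp h4 with h | h | h
    · exact absurd h hp1
    · exact h
    · refine absurd h.1 ?_
      have := norm_nonneg (a : K)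
      intro hh; rw [hh] at this; linarith
  have hdiff : ‖∑ i ∈ range a, lam ^ i - (a : K)‖ < 1 := by
    have heq : (∑ i ∈ range a, lam ^ i) - (a : K) = ∑ i ∈ range a, (lam ^ i - 1) := by
      rw [Finset.sum_sub_distrib]; simp
    rw [heq]
    calc ‖∑ i ∈ range a, (lam ^ i - 1)‖ ≤ ‖1 - lam‖ := by
          apply IsUltrametricDist.norm_sum_le_of_forall_le_of_nonneg (norm_nonneg _)
          intro i _
          rw [← norm_neg]
          simpa using aux_le lam hlam i
      _ < 1 := hsmall
  have hsplit : ∑ i ∈ range a, lam ^ i = (a : K) + (∑ i ∈ range a, lam ^ i - (a : K)) := by ring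
  rw [hsplit, IsUltrametricDist.norm_add_eq_max_of_norm_ne_norm
    (by rw [hcast]; exact hdiff.ne'), hcast, max_eq_left hdiff.le]

/-- Let `K` be a field of characteristic `p > 0` with a non-Archimedean absolute value and
`λ ∈ K` with `‖λ‖ = 1`, `λ` not a root of unity, and `‖1 - λ‖ < 1`.  Then for every `N ≥ 1`,
`∏_{i=1}^{p^{N-1}} ‖1 - λ^{i·p}‖ = ‖1 - λ‖ ^ (p^N ((p-1)/p (N-1) + 1))`. -/
theorem prod_small_divisors {K : Type*} [NontriviallyNormedField K] [IsUltrametricDist K]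
    (p : ℕ) (hp : p.Prime) [CharP K p]
    (lam : K) (hlam : ‖lam‖ = 1) (hroot : ∀ n : ℕ, 1 ≤ n → lam ^ n ≠ 1)
    (hsmall : ‖1 - lam‖ < 1) :
    ∀ N : ℕ, 1 ≤ N →
      ∏ i ∈ Finset.Icc 1 (p ^ (N - 1)), ‖1 - lam ^ (i * p)‖ =
        ‖1 - lam‖ ^ ((p : ℝ) ^ N * (((p : ℝ) - 1) / p * ((N : ℝ) - 1) + 1)) := by
  have hb0 : 0 < ‖1 - lam‖ := by
    rw [norm_pos_iff, sub_ne_zero]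
    intro h
    exact hroot 1 le_rfl (by simpa using h.symm)
  have hp0 : (p : ℝ) ≠ 0 := Nat.cast_ne_zero.mpr hp.pos.ne'
  -- norm of 1 - lam^(i*p) when p ∤ i
  haveI := Fact.mk hp
  have hval : ∀ i : ℕ, ¬ p ∣ i → ‖1 - lam ^ (i * p)‖ = ‖1 - lam‖ ^ p := by
    intro i hi
    have h1 : lam ^ (i * p) = (lam ^ i) ^ p := by rw [pow_mul]
    have h2 : ((1 : K) - lam ^ i) ^ p = 1 - (lam ^ i) ^ p := by
      rw [sub_pow_char, one_pow]
    rw [h1, ← h2, norm_pow, aux_coprime p hp lam hlam hsmall i hi]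
  intro N hN
  obtain ⟨M, rfl⟩ : ∃ M, N = M + 1 := ⟨N - 1, (Nat.succ_pred_eq_of_pos hN).symm⟩
  clear hN
  induction M with
  | zero =>
    simp only [Nat.add_sub_cancel, pow_zero, Finset.Icc_self, Finset.prod_singleton, one_mul]
    have := hval 1 (by simpa using hp.one_lt.ne')
    rw [one_mul] at this
    rw [this]
    rw [← Real.rpow_natCast ‖1 - lam‖ p]
    congr 1
    push_cast
    ring
  | succ M IH =>
    simp only [Nat.add_sub_cancel] at IH ⊢
    -- split product into p ∤ i and p ∣ i parts
    rw [← Finset.prod_filter_mul_prod_filter_not (Finset.Icc 1 (p ^ (M + 1))) (fun i => p ∣ i)]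
    -- the non-divisible part
    have hcard : ((Finset.Icc 1 (p ^ (M + 1))).filter (fun i => p ∣ i)).card = p ^ M := by
      rw [show Finset.Icc 1 (p ^ (M + 1)) = Finset.Ioc 0 (p ^ (M + 1)) from
        Finset.Icc_add_one_left_eq_Ioc 0 _, Nat.Ioc_filter_dvd_card_eq_div, pow_succ, Nat.mul_div_cancel _ hp.pos]
    have hcard' : ((Finset.Icc 1 (p ^ (M + 1))).filter (fun i => ¬ p ∣ i)).card
        = p ^ (M + 1) - p ^ M := by
      have := Finset.card_filter_add_card_filter_not (s := Finset.Icc 1 (p ^ (M + 1)))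
        (p := fun i => p ∣ i)
      rw [hcard] at this
      simp only [Nat.card_Icc, Nat.add_sub_cancel] at this
      omega
    have hnd : ∏ i ∈ (Finset.Icc 1 (p ^ (M + 1))).filter (fun i => ¬ p ∣ i),
        ‖1 - lam ^ (i * p)‖ = (‖1 - lam‖ ^ p) ^ (p ^ (M + 1) - p ^ M) := by
      rw [Finset.prod_congr rfl (fun i hi => hval i (Finset.mem_filter.mp hi).2),
        Finset.prod_const, hcard']
    -- the divisible part
    have hd : ∏ i ∈ (Finset.Icc 1 (p ^ (M + 1))).filter (fun i => p ∣ i),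
        ‖1 - lam ^ (i * p)‖ = (∏ k ∈ Finset.Icc 1 (p ^ M), ‖1 - lam ^ (k * p)‖) ^ p := by
      rw [← Finset.prod_pow]
      apply Finset.prod_bij' (fun i _ => i / p) (fun k _ => p * k)
      · intro i hi
        obtain ⟨hi1, hi2⟩ := Finset.mem_filter.mp hi
        obtain ⟨h1, h2⟩ := Finset.mem_Icc.mp hi1
        obtain ⟨c, rfl⟩ := hi2
        rw [Nat.mul_div_cancel_left c hp.pos]
        refine Finset.mem_Icc.mpr ⟨?_, ?_⟩
        · rcases Nat.eq_zero_or_pos c with rfl | h; · omega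
          · exact h
        · rw [pow_succ, mul_comm (p ^ M) p] at h2
          exact Nat.le_of_mul_le_mul_left h2 hp.pos
      · intro k hk
        obtain ⟨h1, h2⟩ := Finset.mem_Icc.mp hk
        refine Finset.mem_filter.mpr ⟨Finset.mem_Icc.mpr ⟨?_, ?_⟩, ⟨k, rfl⟩⟩
        · exact Nat.one_le_iff_ne_zero.mpr (Nat.mul_ne_zero hp.pos.ne' (by omega))
        · rw [pow_succ, mul_comm (p ^ M) p]
          exact Nat.mul_le_mul_left p h2
      · intro i hi
        obtain ⟨c, rfl⟩ := (Finset.mem_filter.mp hi).2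
        rw [Nat.mul_div_cancel_left c hp.pos]
      · intro k hk
        rw [Nat.mul_div_cancel_left k hp.pos]
      · intro i hi
        obtain ⟨c, rfl⟩ := (Finset.mem_filter.mp hi).2
        rw [Nat.mul_div_cancel_left c hp.pos]
        have h1 : lam ^ (p * c * p) = (lam ^ (c * p)) ^ p := by
          rw [← pow_mul]; ring_nf
        have h2 : ((1 : K) - lam ^ (c * p)) ^ p = 1 - (lam ^ (c * p)) ^ p := by
          rw [sub_pow_char, one_pow]
        rw [h1, ← h2, norm_pow]
    rw [hnd, hd, IH]
    -- now pure real arithmetic with rpow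
    rw [← Real.rpow_natCast (‖1 - lam‖ ^ p) (p ^ (M + 1) - p ^ M),
      ← Real.rpow_natCast ‖1 - lam‖ p, ← Real.rpow_mul hb0.le,
      ← Real.rpow_natCast (‖1 - lam‖ ^ (((p : ℝ) ^ (M + 1)) *
        (((p : ℝ) - 1) / p * ((M + 1 : ℕ) - 1 : ℝ) + 1))) p,
      ← Real.rpow_mul hb0.le, ← Real.rpow_add hb0]
    congr 1
    have hle : p ^ M ≤ p ^ (M + 1) := Nat.pow_le_pow_right hp.pos (by omega)
    rw [Nat.cast_sub hle]
    push_cast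
    field_simp
    ring
end

section
/- Let K be a field of characteristic p > 0 and f(x) = λx + a_{p+1}x^{p+1} ∈ K[x] with λ not a root of unity. Then the formal solution g(x) = Σ b_k x^k of the Schröder equation g∘f = λg (with b_1 = 1) satisfies b_k = 0 unless k ≡ 1 mod p, and for all j ≥ 1, b_{jp+1} = (1/(λ(1-λ^{jp}))) · Σ_{i=⌈(j-1)/(p+1)⌉}^{j-1} b_{ip+1} · C(ip+1, j-i) · λ^{ip+1-(j-i)} · a_{p+1}^{j-i}. -/
open PowerSeries

private lemma coeffF {K : Type*} [Field K] (lam a : K) (p k n : ℕ) :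
    (PowerSeries.coeff n) ((PowerSeries.C lam * PowerSeries.X +
      PowerSeries.C a * PowerSeries.X ^ (p + 1)) ^ k) =
    ∑ m ∈ Finset.range (k + 1),
      if k + m * p = n then (k.choose m : K) * lam ^ (k - m) * a ^ m else 0 := by
  rw [add_pow, map_sum]
  conv_rhs => rw [← Finset.sum_range_reflect]
  refine Finset.sum_congr rfl fun m hm => ?_
  simp only [Nat.add_sub_cancel]
  have hm' : m ≤ k := Nat.lt_succ_iff.mp (Finset.mem_range.mp hm)
  have h2 : k - (k - m) = m := Nat.sub_sub_self hm'
  have hX : (PowerSeries.X : PowerSeries K) ^ (m + (p + 1) * (k - m)) =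
      PowerSeries.X ^ m * (PowerSeries.X ^ (p + 1)) ^ (k - m) := by
    rw [← pow_mul, ← pow_add]
  have h3 : (PowerSeries.C lam * PowerSeries.X) ^ m *
      (PowerSeries.C a * PowerSeries.X ^ (p + 1)) ^ (k - m) * (k.choose m : PowerSeries K)
      = PowerSeries.C ((k.choose m : K) * lam ^ m * a ^ (k - m)) *
        PowerSeries.X ^ (m + (p + 1) * (k - m)) := by
    rw [map_mul, map_mul, map_natCast, map_pow, map_pow, hX]
    ring
  rw [h3, PowerSeries.coeff_C_mul, PowerSeries.coeff_X_pow, h2, Nat.choose_symm hm']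
  have hq : (p + 1) * (k - m) = (k - m) * p + (k - m) := by ring
  by_cases h : n = m + (p + 1) * (k - m)
  · rw [if_pos h, if_pos (by omega), mul_one]
  · rw [if_neg h, if_neg (by omega), mul_zero]

/-- The Schröder functional equation `g ∘ f = λ·g`, stated coefficient-wise for the formal
power series `f = F` and `g = ∑ b k · xᵏ`.  Since `F` has zero constant term, the coefficient
of `xⁿ` in `g ∘ F` only involves `Fᵏ` for `k ≤ n`. -/
def SchroderEq {K : Type*} [Field K] (lam : K) (F : PowerSeries K) (b : ℕ → K) : Prop :=
  ∀ n : ℕ,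
    (PowerSeries.coeff n) (∑ k ∈ Finset.range (n + 1), PowerSeries.C (b k) * F ^ k) =
      lam * b n


private lemma keyrec {K : Type*} [Field K] (p : ℕ) (lam a : K) (b : ℕ → K)
    (hS : SchroderEq lam (PowerSeries.C lam * PowerSeries.X +
      PowerSeries.C a * PowerSeries.X ^ (p + 1)) b) (n : ℕ) :
    (∑ m ∈ Finset.range (n + 1),
      if m * p ≤ n then b (n - m * p) *
        (((n - m * p).choose m : K) * lam ^ (n - m * p - m) * a ^ m) else 0) = lam * b n := by
  have h := hS n
  rw [map_sum] at h
  simp only [PowerSeries.coeff_C_mul, coeffF, Finset.mul_sum, mul_ite, mul_zero] at h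
  have step1 : ∀ k ∈ Finset.range (n + 1),
      (∑ m ∈ Finset.range (k + 1),
        if k + m * p = n then b k * ((k.choose m : K) * lam ^ (k - m) * a ^ m) else 0) =
      ∑ m ∈ Finset.range (n + 1),
        if k + m * p = n ∧ m ≤ k then b k * ((k.choose m : K) * lam ^ (k - m) * a ^ m) else 0 := by
    intro k hk
    have hk' : k ≤ n := Nat.lt_succ_iff.mp (Finset.mem_range.mp hk)
    have e1 : (∑ m ∈ Finset.range (k + 1),
        if k + m * p = n then b k * ((k.choose m : K) * lam ^ (k - m) * a ^ m) else 0) =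
        ∑ m ∈ Finset.range (k + 1),
        if k + m * p = n ∧ m ≤ k then b k * ((k.choose m : K) * lam ^ (k - m) * a ^ m) else 0 :=
      Finset.sum_congr rfl fun m hm => by
        rw [Finset.mem_range] at hm
        by_cases h' : k + m * p = n
        · rw [if_pos h', if_pos ⟨h', by omega⟩]
        · rw [if_neg h', if_neg (by tauto)]
    rw [e1]
    refine Finset.sum_subset (Finset.range_subset_range.mpr (show k + 1 ≤ n + 1 by omega))
      fun m hm hm2 => ?_
    rw [Finset.mem_range] at hm2
    exact if_neg (by omega)
  have step2 : ∀ m ∈ Finset.range (n + 1),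
      (∑ k ∈ Finset.range (n + 1),
        if k + m * p = n ∧ m ≤ k then b k * ((k.choose m : K) * lam ^ (k - m) * a ^ m) else 0) =
      if m * p ≤ n then b (n - m * p) *
        (((n - m * p).choose m : K) * lam ^ (n - m * p - m) * a ^ m) else 0 := by
    intro m hm
    by_cases hmp : m * p ≤ n
    · rw [if_pos hmp, Finset.sum_eq_single (n - m * p)]
      · by_cases hmk : m ≤ n - m * p
        · rw [if_pos ⟨by omega, hmk⟩]
        · rw [if_neg (by omega), Nat.choose_eq_zero_of_lt (by omega)]
          simp
      · intro k _ hne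
        exact if_neg (by omega)
      · intro hmem
        exact absurd (Finset.mem_range.mpr (by omega)) hmem
    · rw [if_neg hmp]
      exact Finset.sum_eq_zero fun k _ => if_neg (by omega)
  rw [Finset.sum_congr rfl step1, Finset.sum_comm, Finset.sum_congr rfl step2] at h
  exact h

/-- Let `K` be a field of characteristic `p > 0` and `f(x) = λx + a x^{p+1}` with `λ` not a
root of unity.  The formal solution `g = ∑ b_k xᵏ` of the Schröder equation (with `b₀ = 0`,
`b₁ = 1`) satisfies `b_k = 0` unless `k ≡ 1 (mod p)`, and for all `j ≥ 1`,
`b_{jp+1} = (1/(λ(1-λ^{jp}))) ∑_{i=⌈(j-1)/(p+1)⌉}^{j-1} b_{ip+1} C(ip+1, j-i) λ^{ip+1-(j-i)} a^{j-i}`. -/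
theorem schroder_coeff_recursion_p_plus_one {K : Type*} [Field K]
    (p : ℕ) (hp : p.Prime) [CharP K p]
    (lam : K) (hlam0 : lam ≠ 0) (hroot : ∀ n : ℕ, 1 ≤ n → lam ^ n ≠ 1)
    (a : K)
    (b : ℕ → K) (hb0 : b 0 = 0) (hb1 : b 1 = 1)
    (hS : SchroderEq lam (PowerSeries.C lam * PowerSeries.X +
      PowerSeries.C a * PowerSeries.X ^ (p + 1)) b) :
    (∀ k : ℕ, k % p ≠ 1 → b k = 0) ∧
      ∀ j : ℕ, 1 ≤ j →
        b (j * p + 1) = (1 / (lam * (1 - lam ^ (j * p)))) *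
          ∑ i ∈ Finset.Icc ((j - 1 + p) / (p + 1)) (j - 1),
            b (i * p + 1) * (Nat.choose (i * p + 1) (j - i) : K) *
              lam ^ (i * p + 1 - (j - i)) * a ^ (j - i) := by
  have hp2 : 2 ≤ p := hp.two_le
  constructor
  · -- part 1
    intro k
    induction k using Nat.strong_induction_on with
    | _ n IH =>
      intro hn
      rcases Nat.eq_zero_or_pos n with h0 | h1
      · rw [h0]; exact hb0
      have hkey := keyrec p lam a b hS n
      rw [Finset.sum_range_succ'] at hkey
      have hz : ∀ m ∈ Finset.range n,
          (if (m + 1) * p ≤ n then b (n - (m + 1) * p) *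
            (((n - (m + 1) * p).choose (m + 1) : K) *
              lam ^ (n - (m + 1) * p - (m + 1)) * a ^ (m + 1)) else 0) = 0 := by
        intro m _
        by_cases hmp : (m + 1) * p ≤ n
        · rw [if_pos hmp]
          have hmod : (n - (m + 1) * p) % p = n % p := by
            rw [Nat.mul_comm] at hmp ⊢
            exact Nat.sub_mul_mod hmp
          have hpos : 1 ≤ (m + 1) * p := Nat.mul_pos (by omega) (by omega)
          have hlt : n - (m + 1) * p < n := by omega
          rw [IH _ hlt (by rw [hmod]; exact hn), zero_mul]
        · rw [if_neg hmp]
      rw [Finset.sum_eq_zero hz, zero_add] at hkey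
      simp only [Nat.zero_mul, Nat.sub_zero, Nat.choose_zero_right, Nat.cast_one, pow_zero,
        mul_one, one_mul, Nat.zero_le, if_true, if_pos (Nat.zero_le n)] at hkey
      -- hkey : b n * lam ^ n = lam * b n
      have hn1 : n ≠ 1 := fun h => hn (by rw [h, Nat.one_mod_eq_one.mpr (by omega)])
      have hn2 : 2 ≤ n := by omega
      have hpowne := hroot (n - 1) (by omega)
      have hps : lam ^ n = lam * lam ^ (n - 1) := by
        rw [← pow_succ']
        congr 1
        omega
      have h5 : lam * (b n * (lam ^ (n - 1) - 1)) = 0 := by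
        rw [hps] at hkey
        linear_combination hkey
      rcases mul_eq_zero.mp h5 with h | h
      · exact absurd h hlam0
      · rcases mul_eq_zero.mp h with h | h
        · exact h
        · exact absurd (by linear_combination h) hpowne
  · -- part 2
    intro j hj
    have hkey := keyrec p lam a b hS (j * p + 1)
    rw [Finset.sum_range_succ'] at hkey
    simp only [Nat.zero_mul, Nat.sub_zero, Nat.choose_zero_right, Nat.cast_one, pow_zero,
      mul_one, one_mul, Nat.zero_le, if_true, if_pos (Nat.zero_le (j * p + 1))] at hkey
    have hjp : j ≤ j * p := Nat.le_mul_of_pos_right j (by omega)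
    -- step A : truncate sum to range j
    have stepA : (∑ m ∈ Finset.range (j * p + 1),
        if (m + 1) * p ≤ j * p + 1 then b (j * p + 1 - (m + 1) * p) *
          (((j * p + 1 - (m + 1) * p).choose (m + 1) : K) *
            lam ^ (j * p + 1 - (m + 1) * p - (m + 1)) * a ^ (m + 1)) else 0) =
        ∑ m ∈ Finset.range j,
        if (m + 1) * p ≤ j * p + 1 then b (j * p + 1 - (m + 1) * p) *
          (((j * p + 1 - (m + 1) * p).choose (m + 1) : K) *
            lam ^ (j * p + 1 - (m + 1) * p - (m + 1)) * a ^ (m + 1)) else 0 := by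
      refine (Finset.sum_subset (Finset.range_subset_range.mpr (by omega)) fun m hm hm2 => ?_).symm
      rw [Finset.mem_range] at hm hm2
      refine if_neg fun hcon => ?_
      have h1 : (j + 1) * p ≤ (m + 1) * p := Nat.mul_le_mul_right p (by omega)
      have h2 : (j + 1) * p = j * p + p := Nat.succ_mul j p
      omega
    -- step B : reindex
    have stepB : (∑ m ∈ Finset.range j,
        if (m + 1) * p ≤ j * p + 1 then b (j * p + 1 - (m + 1) * p) *
          (((j * p + 1 - (m + 1) * p).choose (m + 1) : K) *
            lam ^ (j * p + 1 - (m + 1) * p - (m + 1)) * a ^ (m + 1)) else 0) =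
        ∑ i ∈ Finset.range j,
          b (i * p + 1) * (Nat.choose (i * p + 1) (j - i) : K) *
            lam ^ (i * p + 1 - (j - i)) * a ^ (j - i) := by
      conv_rhs => rw [← Finset.sum_range_reflect]
      refine Finset.sum_congr rfl fun m hm => ?_
      rw [Finset.mem_range] at hm
      have hcond : (m + 1) * p ≤ j * p + 1 :=
        le_trans (Nat.mul_le_mul_right p (show m + 1 ≤ j by omega)) (by omega)
      rw [if_pos hcond]
      have e0 : j - (j - 1 - m) = m + 1 := by omega
      have e1 : j * p + 1 - (m + 1) * p = (j - 1 - m) * p + 1 := by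
        have h' : (j - 1 - m) + (m + 1) = j := by omega
        have h'' : (j - 1 - m) * p + (m + 1) * p = j * p := by
          rw [← Nat.add_mul, h']
        omega
      rw [e0, e1]
      ring
    -- step C : shrink range j to Icc
    have stepC : (∑ i ∈ Finset.range j,
          b (i * p + 1) * (Nat.choose (i * p + 1) (j - i) : K) *
            lam ^ (i * p + 1 - (j - i)) * a ^ (j - i)) =
        ∑ i ∈ Finset.Icc ((j - 1 + p) / (p + 1)) (j - 1),
          b (i * p + 1) * (Nat.choose (i * p + 1) (j - i) : K) *
            lam ^ (i * p + 1 - (j - i)) * a ^ (j - i) := by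
      refine (Finset.sum_subset (fun i hi => Finset.mem_range.mpr ?_) fun i hi hi2 => ?_).symm
      · rw [Finset.mem_Icc] at hi; omega
      · rw [Finset.mem_range] at hi
        rw [Finset.mem_Icc, not_and_or] at hi2
        have hiL : (j - 1 + p) / (p + 1) > i := by
          rcases hi2 with h | h
          · omega
          · omega
        have hiL' : i + 1 ≤ (j - 1 + p) / (p + 1) := hiL
        have key2 : (i + 1) * (p + 1) ≤ j - 1 + p := (Nat.le_div_iff_mul_le (by omega)).mp hiL'
        have e : (i + 1) * (p + 1) = i * p + i + p + 1 := by ring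
        have hlt : i * p + 1 < j - i := by omega
        rw [Nat.choose_eq_zero_of_lt hlt, Nat.cast_zero, mul_zero, zero_mul, zero_mul]
    rw [stepA, stepB, stepC] at hkey
    -- conclude
    have hjp1 : 1 ≤ j * p := by omega
    have hD : lam * (1 - lam ^ (j * p)) ≠ 0 :=
      mul_ne_zero hlam0 (sub_ne_zero.mpr (Ne.symm (hroot (j * p) hjp1)))
    have hps : lam ^ (j * p + 1) = lam * lam ^ (j * p) := pow_succ' lam (j * p)
    have hmain : b (j * p + 1) * (lam * (1 - lam ^ (j * p))) =
        ∑ i ∈ Finset.Icc ((j - 1 + p) / (p + 1)) (j - 1),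
          b (i * p + 1) * (Nat.choose (i * p + 1) (j - i) : K) *
            lam ^ (i * p + 1 - (j - i)) * a ^ (j - i) := by
      linear_combination (-1 : K) * hkey + b (j * p + 1) * hps
    rw [one_div_mul_eq_div, eq_div_iff hD]
    exact hmain
end

section
/- Let K be a non-Archimedean valued field of characteristic p > 0 and f(x) = λx + a_{p+1}x^{p+1} with |λ| = 1, λ not a root of unity, and |1 - λ| < 1. Then the formal conjugacy g = x + Σ b_k x^k solving g∘f = λg satisfies |b_{jp+1}| = |a_{p+1}|^j / ∏_{i=1}^{j} |1 - λ^{ip}| for all j ≥ 1, and b_k = 0 for all other k ≥ 2. -/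
open PowerSeries

open Finset in
lemma coeffFk {K : Type*} [Field K] (lam a : K) (p n k : ℕ) :
    (coeff n) ((PowerSeries.C lam * PowerSeries.X +
      PowerSeries.C a * PowerSeries.X ^ (p + 1)) ^ k) =
    ∑ m ∈ range (k+1), if k + (k-m)*p = n then lam ^ m * a ^ (k-m) * (k.choose m : K) else 0 := by
  rw [add_pow, map_sum]
  refine Finset.sum_congr rfl fun m hm => ?_
  have hmk : m ≤ k := Nat.lt_succ_iff.mp (mem_range.mp hm)
  rw [mul_pow, mul_pow, ← pow_mul, ← map_pow, ← map_pow, mul_mul_mul_comm, ← map_mul,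
    ← map_natCast (PowerSeries.C (R := K)) (k.choose m), mul_comm _ ((PowerSeries.C (R := K)) ((k.choose m : K))),
    ← mul_assoc, ← map_mul, ← pow_add, coeff_C_mul, coeff_X_pow, mul_ite, mul_zero]
  ring_nf
  exact if_congr (by omega) rfl rfl


open Finset in
lemma master {K : Type*} [Field K] {lam a : K} {p : ℕ} {b : ℕ → K}
    (hS : SchroderEq lam (PowerSeries.C lam * PowerSeries.X +
      PowerSeries.C a * PowerSeries.X ^ (p + 1)) b) (n : ℕ) :
    ∑ k ∈ range (n+1), b k * (∑ m ∈ range (k+1),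
      if k + (k-m)*p = n then lam ^ m * a ^ (k-m) * (k.choose m : K) else 0) = lam * b n := by
  have := hS n
  rw [map_sum] at this
  simp only [coeff_C_mul, coeffFk] at this
  exact this

section SchroderAux
open Finset
variable {K : Type*} [Field K] {lam a : K} {p : ℕ} {b : ℕ → K}

lemma vanish (hp : p.Prime) (hroot : ∀ n : ℕ, 1 ≤ n → lam ^ n ≠ 1) (hlam0 : lam ≠ 0)
    (hb0 : b 0 = 0)
    (hmaster : ∀ n : ℕ, ∑ k ∈ range (n+1), b k * (∑ m ∈ range (k+1),
      if k + (k-m)*p = n then lam ^ m * a ^ (k-m) * (k.choose m : K) else 0) = lam * b n) :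
    ∀ k : ℕ, 2 ≤ k → k % p ≠ 1 → b k = 0 := by
  intro n
  induction n using Nat.strong_induction_on with
  | _ n IH =>
    intro hn2 hnp
    have hmain := hmaster n
    have hmain2 : ∑ k ∈ range (n+1), b k * (∑ m ∈ range (k+1),
        if k + (k-m)*p = n then lam ^ m * a ^ (k-m) * (k.choose m : K) else 0)
        = b n * lam ^ n := by
      rw [Finset.sum_eq_single_of_mem n (self_mem_range_succ n)]
      · congr 1
        rw [Finset.sum_eq_single_of_mem n (self_mem_range_succ n)]
        · rw [if_pos (by simp), Nat.sub_self, pow_zero, Nat.choose_self, Nat.cast_one, mul_one,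
            mul_one]
        · intro m hm hmn
          have hm' : m ≤ n := Nat.lt_succ_iff.mp (mem_range.mp hm)
          rw [if_neg]
          intro h
          have h2 : (n - m) * p = 0 := by omega
          rcases Nat.mul_eq_zero.mp h2 with h3 | h3
          · exact hmn (by omega)
          · exact hp.pos.ne' h3
      · intro k hk hkn
        have hk' : k ≤ n := by simpa using Nat.lt_succ_iff.mp (mem_range.mp hk)
        by_cases hbk : b k = 0
        · rw [hbk, zero_mul]
        · -- b k ≠ 0; show inner sum is 0
          have hkp : k % p = 1 := by
            rcases Nat.lt_or_ge k 2 with h2 | h2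
            · interval_cases k
              · exact absurd hb0 hbk
              · simp [Nat.one_mod_eq_one.mpr hp.one_lt.ne']
            · by_contra hne
              exact hbk (IH k (lt_of_le_of_ne hk' hkn) h2 hne)
          rw [Finset.sum_eq_zero, mul_zero]
          intro m hm
          rw [if_neg]
          intro h
          apply hnp
          rw [← h, Nat.add_mul_mod_self_right, hkp]
    rw [hmain2] at hmain
    have : b n * (lam ^ n - lam) = 0 := by rw [mul_sub, hmain]; ring
    rcases mul_eq_zero.mp this with h | h
    · exact h
    · exfalso
      apply hroot (n-1) (by omega)
      have hn : lam ^ n = lam := by linear_combination h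
      have : lam ^ (n-1) * lam = 1 * lam := by
        rw [one_mul, ← pow_succ]
        rw [show n - 1 + 1 = n by omega, hn]
      exact mul_right_cancel₀ hlam0 this

lemma recurrence (hp : p.Prime) (hb0 : b 0 = 0)
    (hvanish : ∀ k : ℕ, 2 ≤ k → k % p ≠ 1 → b k = 0)
    (hmaster : ∀ n : ℕ, ∑ k ∈ range (n+1), b k * (∑ m ∈ range (k+1),
      if k + (k-m)*p = n then lam ^ m * a ^ (k-m) * (k.choose m : K) else 0) = lam * b n)
    (j : ℕ) :
    ∑ i ∈ range (j+1), b (i*p+1) *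
      (lam ^ (i*p+1-(j-i)) * a ^ (j-i) * (((i*p+1).choose (j-i)) : K))
      = lam * b (j*p+1) := by
  rw [← hmaster (j*p+1)]
  have hsub : ((range (j+1)).image (fun i => i*p+1)) ⊆ range (j*p+1+1) := by
    intro k hk
    simp only [mem_image, mem_range] at hk ⊢
    obtain ⟨i, hi, rfl⟩ := hk
    have := Nat.mul_le_mul_right p (show i ≤ j by omega)
    omega
  have hzero : ∀ k ∈ range (j*p+1+1), k ∉ (range (j+1)).image (fun i => i*p+1) →
      b k * (∑ m ∈ range (k+1),
        if k + (k-m)*p = j*p+1 then lam ^ m * a ^ (k-m) * (k.choose m : K) else 0) = 0 := by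
    intro k hk hki
    have hk' : k ≤ j*p+1 := Nat.lt_succ_iff.mp (mem_range.mp hk)
    have hkp : k % p ≠ 1 := by
      intro h
      apply hki
      simp only [mem_image, mem_range]
      have hcm : p * (k/p) = k/p * p := Nat.mul_comm _ _
      have h1 := Nat.div_add_mod k p
      refine ⟨k / p, ?_, ?_⟩
      · have := Nat.le_of_mul_le_mul_right (show k/p * p ≤ j * p by omega) hp.pos
        omega
      · omega
    rcases Nat.lt_or_ge k 2 with h2 | h2
    · interval_cases k
      · rw [hb0, zero_mul]
      · exact absurd (Nat.one_mod_eq_one.mpr hp.one_lt.ne') hkp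
    · rw [hvanish k h2 hkp, zero_mul]
  rw [← Finset.sum_subset hsub hzero, Finset.sum_image (by
    intro x _ y _ h
    exact Nat.eq_of_mul_eq_mul_right hp.pos (by simp only at h; omega))]
  refine Finset.sum_congr rfl fun i hi => ?_
  have hij : i ≤ j := Nat.lt_succ_iff.mp (mem_range.mp hi)
  have h1 : i*p + (j-i)*p = j*p := by rw [← Nat.add_mul]; congr 2; omega
  congr 1
  by_cases hle : j - i ≤ i*p+1
  · rw [Finset.sum_eq_single_of_mem (i*p+1-(j-i)) (mem_range.mpr (by omega))]
    · rw [show i*p+1-(i*p+1-(j-i)) = j-i from by omega, if_pos (by omega),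
        Nat.choose_symm hle]
    · intro m hm hmne
      have hm' : m ≤ i*p+1 := Nat.lt_succ_iff.mp (mem_range.mp hm)
      rw [if_neg]
      intro hcond
      have h2 : (i*p+1-m)*p = (j-i)*p := by omega
      have h3 : i*p+1-m = j-i := Nat.eq_of_mul_eq_mul_right hp.pos h2
      exact hmne (by omega)
  · rw [Nat.choose_eq_zero_of_lt (by omega), Nat.cast_zero, mul_zero]
    rw [eq_comm]
    apply Finset.sum_eq_zero
    intro m hm
    have hm' : m ≤ i*p+1 := Nat.lt_succ_iff.mp (mem_range.mp hm)
    rw [if_neg]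
    intro hcond
    have h2 : (i*p+1-m)*p = (j-i)*p := by omega
    have h3 : i*p+1-m = j-i := Nat.eq_of_mul_eq_mul_right hp.pos h2
    omega

end SchroderAux

section SchroderNorm
open Finset
variable {K : Type*} [NontriviallyNormedField K] [IsUltrametricDist K]
  {lam a : K} {p : ℕ} {b : ℕ → K}

lemma normlemma (hp : p.Prime) [CharP K p]
    (hlam : ‖lam‖ = 1) (hroot : ∀ n : ℕ, 1 ≤ n → lam ^ n ≠ 1)
    (hsmall : ‖1 - lam‖ < 1) (hb1 : b 1 = 1)
    (hrec : ∀ j : ℕ, ∑ i ∈ range (j+1), b (i*p+1) *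
      (lam ^ (i*p+1-(j-i)) * a ^ (j-i) * (((i*p+1).choose (j-i)) : K))
      = lam * b (j*p+1)) :
    ∀ j : ℕ, ‖b (j * p + 1)‖ = ‖a‖ ^ j / ∏ i ∈ Finset.Icc 1 j, ‖1 - lam ^ (i * p)‖ := by
  have hlam0 : lam ≠ 0 := by intro h; rw [h, norm_zero] at hlam; norm_num at hlam
  have hlt1 : ∀ m : ℕ, 1 ≤ m → ‖1 - lam ^ m‖ < 1 := by
    intro m hm
    have hgeom : 1 - lam ^ m = (∑ i ∈ range m, lam ^ i) * (1 - lam) := by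
      linear_combination geom_sum_mul lam m
    rw [hgeom, norm_mul]
    calc ‖∑ i ∈ range m, lam ^ i‖ * ‖1 - lam‖ ≤ 1 * ‖1 - lam‖ := by
          apply mul_le_mul_of_nonneg_right _ (norm_nonneg _)
          exact IsUltrametricDist.norm_sum_le_of_forall_le_of_nonneg zero_le_one
            (fun i _ => by rw [norm_pow, hlam, one_pow])
      _ = ‖1 - lam‖ := one_mul _
      _ < 1 := hsmall
  have hpos : ∀ m : ℕ, 1 ≤ m → 0 < ‖1 - lam ^ m‖ := by
    intro m hm
    exact norm_pos_iff.mpr (sub_ne_zero.mpr (Ne.symm (hroot m hm)))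
  set D : ℕ → ℝ := fun j => ∏ i ∈ Finset.Icc 1 j, ‖1 - lam ^ (i * p)‖ with hD
  have hDsucc : ∀ j : ℕ, D (j+1) = D j * ‖1 - lam ^ ((j+1) * p)‖ := by
    intro j
    exact Finset.prod_Icc_succ_top (by omega) _
  have hDpos : ∀ j, 0 < D j := by
    intro j
    exact Finset.prod_pos fun i hi => hpos _ (Nat.le_mul_of_pos_right _ hp.pos |>.trans'
      (by exact (mem_Icc.mp hi).1))
  have hDanti : StrictAnti D := by
    apply strictAnti_nat_of_succ_lt
    intro j
    rw [hDsucc j]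
    calc D j * ‖1 - lam ^ ((j+1) * p)‖ < D j * 1 :=
          (mul_lt_mul_iff_right₀ (hDpos j)).mpr (hlt1 _ (Nat.le_mul_of_pos_right _ hp.pos |>.trans'
            (by omega)))
      _ = D j := mul_one _
  have hcast : ∀ i : ℕ, ‖((i*p+1 : ℕ) : K)‖ = 1 := by
    intro i
    have : ((i*p+1 : ℕ) : K) = 1 := by
      push_cast [CharP.cast_eq_zero K p]
      ring
    rw [this, norm_one]
  intro j
  induction j using Nat.strong_induction_on with
  | _ j IH =>
    match j with
    | 0 => simp [hb1]
    | (j+1) =>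
      have hr := hrec (j+1)
      rw [Finset.sum_range_succ] at hr
      simp only [Nat.sub_self, Nat.sub_zero, pow_zero, Nat.choose_zero_right, Nat.cast_one,
        mul_one] at hr
      -- hr : ∑ i ∈ range (j+1), t i + b ((j+1)*p+1) * lam ^ ((j+1)*p+1) = lam * b ((j+1)*p+1)
      have hsum : ∑ i ∈ range (j+1), b (i*p+1) *
          (lam ^ (i*p+1-(j+1-i)) * a ^ (j+1-i) * (((i*p+1).choose (j+1-i)) : K))
          = (lam - lam ^ ((j+1)*p+1)) * b ((j+1)*p+1) := by
        linear_combination hr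
      have hfac : ‖lam - lam ^ ((j+1)*p+1)‖ = ‖1 - lam ^ ((j+1)*p)‖ := by
        have : lam - lam ^ ((j+1)*p+1) = lam * (1 - lam ^ ((j+1)*p)) := by
          rw [mul_sub, mul_one, ← pow_succ']
        rw [this, norm_mul, hlam, one_mul]
      by_cases ha : a = 0
      · have hz : ∑ i ∈ range (j+1), b (i*p+1) *
            (lam ^ (i*p+1-(j+1-i)) * a ^ (j+1-i) * (((i*p+1).choose (j+1-i)) : K)) = 0 := by
          apply Finset.sum_eq_zero
          intro i hi
          have : j + 1 - i ≠ 0 := by have := mem_range.mp hi; omega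
          rw [ha, zero_pow this, mul_zero, zero_mul, mul_zero]
        rw [hz] at hsum
        have hb : b ((j+1)*p+1) = 0 := by
          rcases mul_eq_zero.mp hsum.symm with h | h
          · exfalso
            have : lam - lam ^ ((j+1)*p+1) ≠ 0 := by
              intro h2
              apply hroot ((j+1)*p) (Nat.le_mul_of_pos_right _ hp.pos |>.trans' (by omega))
              have : lam ^ ((j+1)*p) * lam = 1 * lam := by
                rw [one_mul, ← pow_succ]
                linear_combination -h2
              exact mul_right_cancel₀ hlam0 this
            exact this h
          · exact h
        rw [hb, norm_zero, ha, norm_zero, zero_pow (by omega : j + 1 ≠ 0), zero_div]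
      · -- a ≠ 0
        have hapos : 0 < ‖a‖ := norm_pos_iff.mpr ha
        have htle : ∀ i, i ≤ j → ‖b (i*p+1) *
            (lam ^ (i*p+1-(j+1-i)) * a ^ (j+1-i) * (((i*p+1).choose (j+1-i)) : K))‖
            ≤ ‖a‖ ^ (j+1) / D i := by
          intro i hij
          rw [norm_mul, norm_mul, norm_mul, norm_pow, norm_pow, hlam, one_pow, one_mul,
            IH i (by omega)]
          calc ‖a‖ ^ i / D i * (‖a‖ ^ (j+1-i) * ‖((((i*p+1).choose (j+1-i)) : ℕ) : K)‖)
              ≤ ‖a‖ ^ i / D i * (‖a‖ ^ (j+1-i) * 1) := by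
                apply mul_le_mul_of_nonneg_left _ (by positivity)
                exact mul_le_mul_of_nonneg_left (IsUltrametricDist.norm_natCast_le_one K _)
                  (by positivity)
            _ = ‖a‖ ^ (j+1) / D i := by
                rw [mul_one, div_mul_eq_mul_div, ← pow_add]
                congr 2
                omega
        have hdom : ‖b (j*p+1) *
            (lam ^ (j*p+1-(j+1-j)) * a ^ (j+1-j) * (((j*p+1).choose (j+1-j)) : K))‖
            = ‖a‖ ^ (j+1) / D j := by
          have h1 : j + 1 - j = 1 := by omega
          rw [h1, Nat.choose_one_right, pow_one, norm_mul, norm_mul, norm_mul, norm_pow, hlam,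
            one_pow, one_mul, hcast j, mul_one, IH j (by omega), div_mul_eq_mul_div, ← pow_succ]
        have hnormsum : ‖∑ i ∈ range (j+1), b (i*p+1) *
            (lam ^ (i*p+1-(j+1-i)) * a ^ (j+1-i) * (((i*p+1).choose (j+1-i)) : K))‖
            = ‖a‖ ^ (j+1) / D j := by
          rw [Finset.sum_range_succ]
          rcases Nat.eq_zero_or_pos j with rfl | hj
          · rw [Finset.sum_range_zero, zero_add, hdom]
          · have hrest : ‖∑ i ∈ range j, b (i*p+1) *
                (lam ^ (i*p+1-(j+1-i)) * a ^ (j+1-i) * (((i*p+1).choose (j+1-i)) : K))‖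
                < ‖a‖ ^ (j+1) / D j := by
              obtain ⟨i, hi, hle⟩ := IsUltrametricDist.exists_norm_finset_sum_le_of_nonempty
                (show (Finset.range j).Nonempty from Finset.nonempty_range_iff.mpr (by omega))
                (fun i => b (i*p+1) *
                  (lam ^ (i*p+1-(j+1-i)) * a ^ (j+1-i) * (((i*p+1).choose (j+1-i)) : K)))
              have hi' : i < j := mem_range.mp hi
              calc _ ≤ _ := hle
                _ ≤ ‖a‖ ^ (j+1) / D i := htle i (by omega)
                _ < ‖a‖ ^ (j+1) / D j := by
                    apply div_lt_div_of_pos_left (by positivity) (hDpos j) (hDanti hi')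
            rw [IsUltrametricDist.norm_add_eq_max_of_norm_ne_norm (by rw [hdom]; exact hrest.ne),
              hdom, max_eq_right (le_of_lt (hdom ▸ hrest))]
        rw [hsum, norm_mul, hfac] at hnormsum
        have h1p : 0 < ‖1 - lam ^ ((j+1)*p)‖ :=
          hpos _ (Nat.le_mul_of_pos_right _ hp.pos |>.trans' (by omega))
        show ‖b ((j+1)*p+1)‖ = ‖a‖ ^ (j+1) / D (j+1)
        rw [hDsucc j, eq_div_iff (mul_pos (hDpos j) h1p).ne']
        have hD0 := hDpos j
        field_simp at hnormsum
        nlinarith [hnormsum]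

end SchroderNorm

/-- Let `K` be a non-Archimedean valued field of characteristic `p > 0` and
`f(x) = λx + a x^{p+1}` with `‖λ‖ = 1`, `λ` not a root of unity and `‖1 - λ‖ < 1`.  Then the
formal conjugacy `g = x + ∑ b_k xᵏ` solving `g ∘ f = λ·g` satisfies
`‖b_{jp+1}‖ = ‖a‖ʲ / ∏_{i=1}^{j} ‖1 - λ^{ip}‖` for all `j ≥ 1`, and `b_k = 0` for all other
`k ≥ 2`. -/
theorem schroder_coeff_norm_p_plus_one {K : Type*} [NontriviallyNormedField K]
    [IsUltrametricDist K] (p : ℕ) (hp : p.Prime) [CharP K p]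
    (lam : K) (hlam : ‖lam‖ = 1) (hroot : ∀ n : ℕ, 1 ≤ n → lam ^ n ≠ 1)
    (hsmall : ‖1 - lam‖ < 1) (a : K)
    (b : ℕ → K) (hb0 : b 0 = 0) (hb1 : b 1 = 1)
    (hS : SchroderEq lam (PowerSeries.C lam * PowerSeries.X +
      PowerSeries.C a * PowerSeries.X ^ (p + 1)) b) :
    (∀ j : ℕ, 1 ≤ j →
        ‖b (j * p + 1)‖ = ‖a‖ ^ j / ∏ i ∈ Finset.Icc 1 j, ‖1 - lam ^ (i * p)‖) ∧
      ∀ k : ℕ, 2 ≤ k → k % p ≠ 1 → b k = 0 := by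
  have hlam0 : lam ≠ 0 := by intro h; rw [h, norm_zero] at hlam; norm_num at hlam
  have hmaster := master hS
  have hvanish := vanish hp hroot hlam0 hb0 hmaster
  have hrec := recurrence hp hb0 hvanish hmaster
  exact ⟨fun j _ => normlemma hp hlam hroot hsmall hb1 hrec j, hvanish⟩
end

section
/- Let K be a complete non-Archimedean valued field of characteristic p > 0 and f(x) = λx + a_{p+1}x^{p+1} ∈ K[x] with a_{p+1} ≠ 0, |λ| = 1, and |1 - λ| < 1. Then the formal conjugacy g solving g∘f = λg has radius of convergence zero; in particular, f is not analytically linearizable at the fixed point 0. -/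
open PowerSeries

set_option linter.unusedSectionVars false

section SchroderAux

lemma coeff_Fk {K : Type*} [Field K] (lam a : K) (p k n : ℕ) :
    (PowerSeries.coeff n) ((PowerSeries.C lam * PowerSeries.X +
        PowerSeries.C a * PowerSeries.X ^ (p + 1)) ^ k) =
      ∑ j ∈ Finset.range (k + 1),
        if n = k + p * j then (k.choose j : K) * lam ^ (k - j) * a ^ j else 0 := by
  rw [add_comm (PowerSeries.C lam * PowerSeries.X), add_pow, map_sum]
  refine Finset.sum_congr rfl fun j hj => ?_
  rw [Finset.mem_range, Nat.lt_succ_iff] at hj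
  have : (PowerSeries.C a * PowerSeries.X ^ (p+1)) ^ j *
      (PowerSeries.C lam * PowerSeries.X) ^ (k - j) * ((k.choose j : ℕ) : K⟦X⟧) =
      PowerSeries.C ((k.choose j : K) * lam ^ (k-j) * a ^ j) * PowerSeries.X ^ (k + p * j) := by
    have hc : ((k.choose j : ℕ) : K⟦X⟧) = PowerSeries.C ((k.choose j : ℕ) : K) := by
      simp
    rw [mul_pow, mul_pow, ← map_pow, ← map_pow, ← pow_mul]
    have hXe : (p+1) * j + (k - j) = k + p * j := by
      have : (p+1) * j = p * j + j := by ring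
      omega
    rw [hc, show C (a ^ j) * (X ^ ((p+1) * j)) * (C (lam ^ (k-j)) * X ^ (k-j)) * C ((k.choose j : ℕ) : K) = C ((k.choose j : K) * (lam ^ (k-j)) * a ^ j) * (X ^ ((p+1)*j) * X ^ (k-j) : K⟦X⟧) by rw [map_mul, map_mul]; ring]
    rw [← pow_add, hXe]
  rw [this, PowerSeries.coeff_C_mul, PowerSeries.coeff_X_pow]
  by_cases h : n = k + p * j <;> simp [h]

noncomputable def Dprod {K : Type*} [NontriviallyNormedField K] (lam : K) (p t : ℕ) : ℝ :=
  ∏ i ∈ Finset.range t, ‖lam ^ (p * (i + 1)) - 1‖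

variable {K : Type*} [NontriviallyNormedField K] [IsUltrametricDist K]

lemma norm_pow_sub_one_le (lam : K) (hlam : ‖lam‖ = 1) (m : ℕ) :
    ‖lam ^ m - 1‖ ≤ ‖1 - lam‖ := by
  have hg : (∑ i ∈ Finset.range m, lam ^ i) * (lam - 1) = lam ^ m - 1 := geom_sum_mul lam m
  rw [← hg, norm_mul, norm_sub_rev lam 1]
  have h1 : ‖∑ i ∈ Finset.range m, lam ^ i‖ ≤ 1 := by
    refine IsUltrametricDist.norm_sum_le_of_forall_le_of_nonneg zero_le_one fun i _ => ?_
    rw [norm_pow, hlam, one_pow]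
  nlinarith [norm_nonneg (1 - lam)]

lemma Dprod_pos (lam : K) (p : ℕ) (hp2 : 1 ≤ p)
    (hroot : ∀ n : ℕ, 1 ≤ n → lam ^ n ≠ 1) (t : ℕ) : 0 < Dprod lam p t := by
  refine Finset.prod_pos fun i _ => norm_pos_iff.2 (sub_ne_zero.2 (hroot _ ?_))
  have := Nat.le_mul_of_pos_left (i+1) (by omega : 0 < p); omega

lemma Dprod_succ {lam : K} {p : ℕ} (t : ℕ) :
    Dprod lam p (t + 1) = Dprod lam p t * ‖lam ^ (p * (t + 1)) - 1‖ :=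
  Finset.prod_range_succ _ t

lemma Dprod_lt (lam : K) (p : ℕ) (hp2 : 1 ≤ p) (hlam : ‖lam‖ = 1)
    (hroot : ∀ n : ℕ, 1 ≤ n → lam ^ n ≠ 1) (hsmall : ‖1 - lam‖ < 1)
    (u v : ℕ) (huv : u < v) : Dprod lam p v < Dprod lam p u := by
  have hfac : ∀ i : ℕ, ‖lam ^ (p * (i + 1)) - 1‖ < 1 :=
    fun i => lt_of_le_of_lt (norm_pow_sub_one_le lam hlam _) hsmall
  induction v with
  | zero => omega
  | succ v IH =>
    have hstep : Dprod lam p (v+1) < Dprod lam p v := by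
      rw [Dprod_succ v]
      have hpos := Dprod_pos lam p hp2 hroot v
      nlinarith [hfac v, norm_nonneg (lam ^ (p * (v+1)) - 1)]
    rcases Nat.lt_succ_iff_lt_or_eq.1 huv with h | h
    · exact hstep.trans (IH h)
    · subst h; exact hstep

lemma Dprod_le (lam : K) (p : ℕ) (hp2 : 1 ≤ p) (hlam : ‖lam‖ = 1)
    (hroot : ∀ n : ℕ, 1 ≤ n → lam ^ n ≠ 1) (hsmall : ‖1 - lam‖ < 1)
    (u v : ℕ) (huv : u ≤ v) : Dprod lam p v ≤ Dprod lam p u := by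
  rcases eq_or_lt_of_le huv with rfl | h
  · exact le_refl _
  · exact le_of_lt (Dprod_lt lam p hp2 hlam hroot hsmall u v h)

noncomputable def Pprod {K : Type*} [NontriviallyNormedField K] (lam : K) (t : ℕ) : ℝ :=
  ∏ i ∈ Finset.range t, ‖lam ^ (i + 1) - 1‖

lemma frob (p : ℕ) (hp : p.Prime) [CharP K p] (lam : K) (m : ℕ) :
    ‖lam ^ (p * m) - 1‖ = ‖lam ^ m - 1‖ ^ p := by
  have : Fact p.Prime := ⟨hp⟩
  rw [mul_comm, pow_mul, ← norm_pow, sub_pow_char (lam ^ m) 1, one_pow]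

lemma Dprod_eq_Pprod (p : ℕ) (hp : p.Prime) [CharP K p] (lam : K) (t : ℕ) :
    Dprod lam p t = Pprod lam t ^ p := by
  rw [Dprod, Pprod, ← Finset.prod_pow]
  exact Finset.prod_congr rfl fun i _ => frob p hp lam (i + 1)

lemma Pprod_nonneg (lam : K) (t : ℕ) : 0 ≤ Pprod lam t :=
  Finset.prod_nonneg fun i _ => norm_nonneg _

lemma Pprod_mul_le (p : ℕ) (hp : p.Prime) [CharP K p] (lam : K) (hlam : ‖lam‖ = 1)
    (N : ℕ) : Pprod lam (p * N) ≤ Pprod lam N ^ p * ‖1 - lam‖ ^ ((p - 1) * N) := by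
  induction N with
  | zero => simp [Pprod]
  | succ N IH =>
    have hpN : p * (N + 1) = p * N + p := by ring
    have hsplit : Pprod lam (p * (N + 1)) =
        Pprod lam (p * N) * ∏ i ∈ Finset.range p, ‖lam ^ (p * N + i + 1) - 1‖ := by
      simp only [Pprod, hpN, Finset.prod_range_add]
    have hblock : ∏ i ∈ Finset.range p, ‖lam ^ (p * N + i + 1) - 1‖ ≤
        ‖1 - lam‖ ^ (p - 1) * ‖lam ^ (N + 1) - 1‖ ^ p := by
      have hp1 : p = (p - 1) + 1 := by have := hp.one_lt; omega
      rw [hp1, Finset.prod_range_succ, ← hp1]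
      have hlast : p * N + (p - 1) + 1 = p * (N + 1) := by
        have h1 := hp.one_lt
        have h2 : p * (N+1) = p * N + p := by ring
        omega
      rw [hlast, frob p hp lam (N + 1)]
      have hfirst : ∏ i ∈ Finset.range (p - 1), ‖lam ^ (p * N + i + 1) - 1‖ ≤
          ‖1 - lam‖ ^ (p - 1) := by
        calc ∏ i ∈ Finset.range (p - 1), ‖lam ^ (p * N + i + 1) - 1‖
            ≤ ∏ _i ∈ Finset.range (p - 1), ‖1 - lam‖ := by
              refine Finset.prod_le_prod (fun i _ => norm_nonneg _) fun i _ => ?_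
              exact norm_pow_sub_one_le lam hlam _
          _ = ‖1 - lam‖ ^ (p - 1) := by rw [Finset.prod_const, Finset.card_range]
      exact mul_le_mul_of_nonneg_right hfirst (pow_nonneg (norm_nonneg _) p)
    calc Pprod lam (p * (N + 1))
        = Pprod lam (p * N) * ∏ i ∈ Finset.range p, ‖lam ^ (p * N + i + 1) - 1‖ := hsplit
      _ ≤ (Pprod lam N ^ p * ‖1 - lam‖ ^ ((p - 1) * N)) *
            (‖1 - lam‖ ^ (p - 1) * ‖lam ^ (N + 1) - 1‖ ^ p) := by
          exact mul_le_mul IH hblock (Finset.prod_nonneg fun i _ => norm_nonneg _)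
            (mul_nonneg (pow_nonneg (Pprod_nonneg lam N) p) (pow_nonneg (norm_nonneg _) _))
      _ = Pprod lam (N + 1) ^ p * ‖1 - lam‖ ^ ((p - 1) * (N + 1)) := by
          simp only [Pprod, Finset.prod_range_succ, mul_pow]
          rw [show (p - 1) * (N + 1) = (p - 1) * N + (p - 1) by ring, pow_add]
          ring

lemma Pprod_pow_sq_le (p : ℕ) (hp : p.Prime) [CharP K p] (lam : K) (hlam : ‖lam‖ = 1)
    (hsmall : ‖1 - lam‖ < 1) (s : ℕ) :
    Pprod lam (p ^ s) ^ 2 ≤ ‖1 - lam‖ ^ (s * p ^ s) := by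
  set E := ‖1 - lam‖ with hE
  have hE0 : 0 ≤ E := norm_nonneg _
  have hp2 : 2 ≤ p := hp.two_le
  induction s with
  | zero =>
    have h1 : Pprod lam 1 = E := by
      simp only [Pprod, Finset.prod_range_one, Nat.zero_add, pow_one]
      rw [norm_sub_rev]
    simp only [pow_zero, Nat.zero_mul]
    rw [h1]
    nlinarith
  | succ s IH =>
    have hstep := Pprod_mul_le p hp lam hlam (p ^ s)
    have hps : p * p ^ s = p ^ (s + 1) := by rw [pow_succ]; ring
    rw [hps] at hstep
    have hsq : Pprod lam (p ^ (s + 1)) ^ 2 ≤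
        (Pprod lam (p ^ s) ^ 2) ^ p * (E ^ ((p - 1) * p ^ s)) ^ 2 := by
      calc Pprod lam (p ^ (s + 1)) ^ 2
          ≤ (Pprod lam (p ^ s) ^ p * E ^ ((p - 1) * p ^ s)) ^ 2 := by
            refine pow_le_pow_left₀ (Pprod_nonneg lam _) hstep 2
        _ = (Pprod lam (p ^ s) ^ 2) ^ p * (E ^ ((p - 1) * p ^ s)) ^ 2 := by
            rw [mul_pow, ← pow_mul, ← pow_mul, mul_comm p 2, pow_mul]
    calc Pprod lam (p ^ (s + 1)) ^ 2
        ≤ (Pprod lam (p ^ s) ^ 2) ^ p * (E ^ ((p - 1) * p ^ s)) ^ 2 := hsq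
      _ ≤ (E ^ (s * p ^ s)) ^ p * (E ^ ((p - 1) * p ^ s)) ^ 2 := by
          refine mul_le_mul_of_nonneg_right (pow_le_pow_left₀ (by positivity) IH p) ?_
          positivity
      _ = E ^ (s * p ^ s * p + (p - 1) * p ^ s * 2) := by
          rw [← pow_mul, ← pow_mul, ← pow_add]
      _ ≤ E ^ ((s + 1) * p ^ (s + 1)) := by
          refine pow_le_pow_of_le_one hE0 (le_of_lt hsmall) ?_
          have h1 : p ^ (s+1) = p ^ s * p := pow_succ p s
          have h2 : 2 * (p - 1) ≥ p := by omega
          calc (s + 1) * p ^ (s + 1) = s * p ^ s * p + p ^ s * p := by rw [h1]; ring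
            _ ≤ s * p ^ s * p + (p - 1) * p ^ s * 2 := by nlinarith [pow_pos (by omega : 0 < p) s]

lemma norm_b (p : ℕ) (hp : p.Prime) [CharP K p] (lam : K) (hlam : ‖lam‖ = 1)
    (hroot : ∀ n : ℕ, 1 ≤ n → lam ^ n ≠ 1) (hsmall : ‖1 - lam‖ < 1)
    (a : K) (ha : a ≠ 0) (b : ℕ → K) (hb1 : b 1 = 1)
    (hrec : ∀ t : ℕ, lam * b (p * t + 1) =
      ∑ j ∈ Finset.range (t + 1),
        ((p * (t - j) + 1).choose j : K) * lam ^ (p * (t - j) + 1 - j) * a ^ j *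
          b (p * (t - j) + 1)) :
    ∀ t : ℕ, ‖b (p * t + 1)‖ = ‖a‖ ^ t / Dprod lam p t := by
  have hp1 : 1 ≤ p := hp.one_lt.le.trans' (by omega)
  have hA : 0 < ‖a‖ := norm_pos_iff.2 ha
  have hDpos : ∀ s, 0 < Dprod lam p s := Dprod_pos lam p hp1 hroot
  intro t
  induction t using Nat.strong_induction_on with
  | _ t IH =>
    rcases t with _ | u
    · simp [Dprod, hb1]
    set g : ℕ → K := fun j => ((p * (u + 1 - j) + 1).choose j : K) *
        lam ^ (p * (u + 1 - j) + 1 - j) * a ^ j * b (p * (u + 1 - j) + 1) with hg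
    have h := hrec (u + 1)
    rw [Finset.sum_range_succ' g (u + 1)] at h
    have hg0 : g 0 = lam ^ (p * (u + 1) + 1) * b (p * (u + 1) + 1) := by
      simp [hg]
    rw [hg0] at h
    have hmain : (lam - lam ^ (p * (u + 1) + 1)) * b (p * (u + 1) + 1) =
        ∑ j ∈ Finset.range (u + 1), g (j + 1) := by
      rw [sub_mul, h]; ring
    have hgj : ∀ j, g (j + 1) = ((p * (u - j) + 1).choose (j+1) : K) *
        lam ^ (p * (u - j) + 1 - (j+1)) * a ^ (j+1) * b (p * (u - j) + 1) := by
      intro j; simp only [hg, Nat.succ_sub_succ_eq_sub]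
    have hchoose1 : (((p * u + 1).choose 1 : ℕ) : K) = 1 := by
      rw [Nat.choose_one_right]
      push_cast
      rw [CharP.cast_eq_zero K p]
      ring
    have hnorm_g1 : ‖g 1‖ = ‖a‖ ^ (u + 1) / Dprod lam p u := by
      have h0 := hgj 0
      rw [Nat.sub_zero] at h0
      rw [h0, hchoose1, one_mul, norm_mul, norm_mul, norm_pow, norm_pow, hlam, one_pow,
        one_mul, pow_one, IH u (by omega), pow_succ]
      field_simp
    have hg1pos : 0 < ‖g 1‖ := by
      rw [hnorm_g1]; exact div_pos (pow_pos hA _) (hDpos u)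
    have hbound : ∀ j ∈ Finset.range (u + 1), j ≠ 0 →
        ‖g (j + 1)‖ ≤ ‖a‖ ^ (u + 1) / Dprod lam p (u - 1) := by
      intro j hj hj0
      rw [Finset.mem_range] at hj
      rw [hgj j, norm_mul, norm_mul, norm_mul, norm_pow lam, hlam, one_pow, mul_one,
        norm_pow, IH (u - j) (by omega)]
      have h1 : ‖(((p * (u - j) + 1).choose (j+1) : ℕ) : K)‖ ≤ 1 :=
        IsUltrametricDist.norm_natCast_le_one K _
      have hle : ‖a‖ ^ (j + 1) * (‖a‖ ^ (u - j) / Dprod lam p (u - j)) =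
          ‖a‖ ^ (u + 1) / Dprod lam p (u - j) := by
        rw [← mul_div_assoc, ← pow_add]
        have he : j + 1 + (u - j) = u + 1 := by omega
        rw [he]
      calc ‖(((p * (u - j) + 1).choose (j+1) : ℕ) : K)‖ * ‖a‖ ^ (j+1) *
            (‖a‖ ^ (u - j) / Dprod lam p (u - j))
          ≤ 1 * ‖a‖ ^ (j+1) * (‖a‖ ^ (u - j) / Dprod lam p (u - j)) := by
            have hnn : (0:ℝ) ≤ ‖a‖ ^ (u - j) / Dprod lam p (u - j) :=
              le_of_lt (div_pos (pow_pos hA _) (hDpos _))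
            gcongr
        _ = ‖a‖ ^ (u + 1) / Dprod lam p (u - j) := by rw [one_mul, hle]
        _ ≤ ‖a‖ ^ (u + 1) / Dprod lam p (u - 1) := by
            apply div_le_div_of_nonneg_left (le_of_lt (pow_pos hA _)) (hDpos (u-1))
            exact Dprod_le lam p hp1 hlam hroot hsmall (u - j) (u - 1) (by omega)
    have hmem : (0:ℕ) ∈ Finset.range (u + 1) := Finset.mem_range.2 (by omega)
    have hS' : ‖∑ j ∈ (Finset.range (u + 1)).erase 0, g (j + 1)‖ < ‖g 1‖ := by
      rcases Nat.eq_zero_or_pos u with rfl | hu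
      · simpa using hg1pos
      · have hc : ‖∑ j ∈ (Finset.range (u + 1)).erase 0, g (j + 1)‖ ≤
            ‖a‖ ^ (u + 1) / Dprod lam p (u - 1) := by
          refine IsUltrametricDist.norm_sum_le_of_forall_le_of_nonneg
            (le_of_lt (div_pos (pow_pos hA _) (hDpos _))) fun j hj => ?_
          exact hbound j (Finset.mem_of_mem_erase hj) (Finset.ne_of_mem_erase hj)
        refine lt_of_le_of_lt hc ?_
        rw [hnorm_g1]
        apply div_lt_div_of_pos_left (pow_pos hA _) (hDpos u)
        exact Dprod_lt lam p hp1 hlam hroot hsmall (u - 1) u (by omega)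
    have hSnorm : ‖∑ j ∈ Finset.range (u + 1), g (j + 1)‖ = ‖g 1‖ := by
      rw [← Finset.sum_erase_add _ _ hmem]
      rw [IsUltrametricDist.norm_add_eq_max_of_norm_ne_norm (ne_of_lt hS'),
        max_eq_right hS'.le]
    have hlhs : ‖lam - lam ^ (p * (u + 1) + 1)‖ = ‖lam ^ (p * (u + 1)) - 1‖ := by
      have hfac : lam - lam ^ (p * (u + 1) + 1) = lam * (1 - lam ^ (p * (u + 1))) := by
        ring
      rw [hfac, norm_mul, hlam, one_mul, norm_sub_rev]
    have hfin := congrArg norm hmain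
    rw [norm_mul, hlhs, hSnorm, hnorm_g1] at hfin
    have hne : ‖lam ^ (p * (u + 1)) - 1‖ ≠ 0 := by
      refine ne_of_gt (norm_pos_iff.2 (sub_ne_zero.2 (hroot _ ?_)))
      have := Nat.le_mul_of_pos_left (u+1) (by omega : 0 < p); omega
    rw [Dprod_succ u, ← div_div]
    rw [mul_comm] at hfin
    exact eq_div_of_mul_eq hne hfin

end SchroderAux


open Finset in
lemma schroder_rec {K : Type*} [Field K] (p : ℕ) (hp : 2 ≤ p) (lam a : K) (b : ℕ → K)
    (hS : SchroderEq lam (PowerSeries.C lam * PowerSeries.X +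
      PowerSeries.C a * PowerSeries.X ^ (p + 1)) b) (t : ℕ) :
    lam * b (p * t + 1) =
      ∑ j ∈ Finset.range (t + 1),
        ((p * (t - j) + 1).choose j : K) * lam ^ (p * (t - j) + 1 - j) * a ^ j *
          b (p * (t - j) + 1) := by
  have h := hS (p * t + 1)
  set n := p * t + 1 with hn
  rw [map_sum] at h
  -- rewrite each interior coefficient
  have h2 : ∑ k ∈ Finset.range (n+1), ∑ j ∈ Finset.range (n+1),
      (if n = k + p * j then b k * ((k.choose j : K) * lam ^ (k - j) * a ^ j) else 0) =
      lam * b n := by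
    rw [← h]
    refine Finset.sum_congr rfl fun k hk => ?_
    rw [PowerSeries.coeff_C_mul, coeff_Fk, Finset.mul_sum]
    rw [Finset.mem_range, Nat.lt_succ_iff] at hk
    rw [← Finset.sum_subset (Finset.range_subset_range.2 (by omega : k + 1 ≤ n + 1))]
    · exact Finset.sum_congr rfl fun j _ => by
        by_cases hc : n = k + p * j <;> simp [hc]
    · intro j hj hj'
      rw [Finset.mem_range, Nat.lt_succ_iff] at hj hj'
      have hjk : k < j := by omega
      by_cases hc : n = k + p * j <;> simp [hc, Nat.choose_eq_zero_of_lt hjk]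
  rw [Finset.sum_comm] at h2
  rw [← h2]
  -- now reduce outer j-range to t+1 and inner k-sum to the single k = p*(t-j)+1
  rw [← Finset.sum_subset (Finset.range_subset_range.2 (by have := Nat.le_mul_of_pos_left t (by omega : 0 < p); omega : t + 1 ≤ n + 1))]
  · refine Finset.sum_congr rfl fun j hj => ?_
    rw [Finset.mem_range, Nat.lt_succ_iff] at hj
    have hk0 : p * (t - j) + 1 + p * j = n := by
      have : p * (t - j) + p * j = p * t := by
        rw [← Nat.mul_add]
        congr 1
        omega
      omega
    rw [Finset.sum_eq_single (p * (t - j) + 1)]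
    · rw [if_pos hk0.symm]; ring
    · intro k hk hkne
      rw [if_neg]
      intro hc
      exact hkne (by omega)
    · intro hmem
      exact absurd (Finset.mem_range.2 (by omega)) hmem
  · intro j hj hj'
    rw [Finset.mem_range, Nat.lt_succ_iff] at hj hj'
    have hjt : t < j := by omega
    refine Finset.sum_eq_zero fun k hk => ?_
    rw [if_neg]
    intro hc
    have : p * j ≥ p * (t + 1) := Nat.mul_le_mul_left p (by omega)
    have : p * (t+1) = p * t + p := by ring
    omega

/-- Let `K` be a complete non-Archimedean valued field of characteristic `p > 0` and
`f(x) = λx + a x^{p+1}` with `a ≠ 0`, `‖λ‖ = 1` and `‖1 - λ‖ < 1`.  Then the formal conjugacy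
`g = ∑ b_k xᵏ` solving `g ∘ f = λ·g` has radius of convergence zero: for every `x ≠ 0` the
terms `b_k xᵏ` do not tend to `0`, so `f` is not analytically linearizable at `0`. -/
theorem schroder_divergence_p_plus_one {K : Type*} [NontriviallyNormedField K]
    [IsUltrametricDist K] [CompleteSpace K] (p : ℕ) (hp : p.Prime) [CharP K p]
    (lam : K) (hlam : ‖lam‖ = 1) (hroot : ∀ n : ℕ, 1 ≤ n → lam ^ n ≠ 1)
    (hsmall : ‖1 - lam‖ < 1)
    (a : K) (ha : a ≠ 0)
    (b : ℕ → K) (hb0 : b 0 = 0) (hb1 : b 1 = 1)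
    (hS : SchroderEq lam (PowerSeries.C lam * PowerSeries.X +
      PowerSeries.C a * PowerSeries.X ^ (p + 1)) b) :
    ∀ x : K, x ≠ 0 →
      ¬ Filter.Tendsto (fun k : ℕ => b k * x ^ k) Filter.atTop (nhds 0) := by
  intro x hx hT
  have hp2 : 2 ≤ p := hp.two_le
  have hX : 0 < ‖x‖ := norm_pos_iff.2 hx
  have hA : 0 < ‖a‖ := norm_pos_iff.2 ha
  have hE1 : ‖1 - lam‖ < 1 := hsmall
  have hE0 : 0 < ‖1 - lam‖ := by
    refine norm_pos_iff.2 (sub_ne_zero.2 fun h => ?_)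
    exact hroot 1 le_rfl (by rw [pow_one, ← h])
  set E := ‖1 - lam‖ with hE
  set A := ‖a‖ with hAdef
  set X := ‖x‖ with hXdef
  have hrec := schroder_rec p hp2 lam a b hS
  have hnb := norm_b p hp lam hlam hroot hsmall a ha b hb1 hrec
  -- from convergence, eventually small
  obtain ⟨N, hN⟩ := Metric.tendsto_atTop.mp hT X hX
  -- choose the exponent s
  have hc : (0:ℝ) < A ^ 2 * X ^ (2 * p) := by positivity
  obtain ⟨M, hM⟩ := Filter.eventually_atTop.mp
    ((tendsto_pow_atTop_nhds_zero_of_lt_one hE0.le hE1).eventually_le_const hc)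
  set s := max N M with hs
  set m := p * p ^ s with hm
  have hsp : s < p ^ s := Nat.lt_pow_self hp.one_lt
  have hkN : N ≤ m + 1 := by
    have h1 : s ≤ m := le_trans hsp.le (Nat.le_mul_of_pos_left _ (by omega))
    omega
  have hsmallterm := hN (m + 1) hkN
  rw [dist_zero_right] at hsmallterm
  -- the divisor bound
  have hDpos : 0 < Dprod lam p (p ^ s) := Dprod_pos lam p (by omega) hroot _
  have hD2 : Dprod lam p (p ^ s) ^ 2 ≤ (A ^ p ^ s * X ^ m) ^ 2 := by
    have e1 : Dprod lam p (p ^ s) ^ 2 = (Pprod lam (p ^ s) ^ 2) ^ p := by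
      rw [Dprod_eq_Pprod p hp lam, ← pow_mul, ← pow_mul, mul_comm]
    have e2 : (Pprod lam (p ^ s) ^ 2) ^ p ≤ (E ^ (s * p ^ s)) ^ p :=
      pow_le_pow_left₀ (by positivity) (Pprod_pow_sq_le p hp lam hlam hsmall s) p
    have e3 : (E ^ (s * p ^ s)) ^ p = (E ^ (p * s)) ^ p ^ s := by
      rw [← pow_mul, ← pow_mul]; ring_nf
    have e4 : (E ^ (p * s)) ^ p ^ s ≤ (A ^ 2 * X ^ (2 * p)) ^ p ^ s := by
      refine pow_le_pow_left₀ (by positivity) ?_ _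
      exact hM (p * s) (le_trans (le_max_right N M) (Nat.le_mul_of_pos_left _ (by omega)))
    have e5 : (A ^ 2 * X ^ (2 * p)) ^ p ^ s = (A ^ p ^ s * X ^ m) ^ 2 := by
      rw [mul_pow, mul_pow, ← pow_mul, ← pow_mul, ← pow_mul, ← pow_mul, hm]
      ring_nf
    calc Dprod lam p (p ^ s) ^ 2 = (Pprod lam (p ^ s) ^ 2) ^ p := e1
      _ ≤ (E ^ (s * p ^ s)) ^ p := e2
      _ = (E ^ (p * s)) ^ p ^ s := e3
      _ ≤ (A ^ 2 * X ^ (2 * p)) ^ p ^ s := e4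
      _ = (A ^ p ^ s * X ^ m) ^ 2 := e5
  have hD : Dprod lam p (p ^ s) ≤ A ^ p ^ s * X ^ m :=
    (pow_le_pow_iff_left₀ hDpos.le (by positivity) two_ne_zero).1 hD2
  -- lower bound on the term
  have hterm : ‖b (m + 1) * x ^ (m + 1)‖ = (A ^ p ^ s / Dprod lam p (p ^ s)) * X ^ (m + 1) := by
    rw [norm_mul, norm_pow, hm, hnb (p ^ s)]
  have hge : X ≤ ‖b (m + 1) * x ^ (m + 1)‖ := by
    rw [hterm]
    have h6 : A ^ p ^ s / (A ^ p ^ s * X ^ m) ≤ A ^ p ^ s / Dprod lam p (p ^ s) :=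
      div_le_div_of_nonneg_left (by positivity) hDpos hD
    have h7 : A ^ p ^ s / (A ^ p ^ s * X ^ m) = 1 / X ^ m := by
      rw [div_mul_eq_div_div, div_self (by positivity)]
    have h8 : (1 / X ^ m) * X ^ (m + 1) = X := by
      rw [pow_succ]
      field_simp
    calc X = (1 / X ^ m) * X ^ (m + 1) := h8.symm
      _ = (A ^ p ^ s / (A ^ p ^ s * X ^ m)) * X ^ (m + 1) := by rw [h7]
      _ ≤ (A ^ p ^ s / Dprod lam p (p ^ s)) * X ^ (m + 1) := by
          exact mul_le_mul_of_nonneg_right h6 (by positivity)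
  linarith
end

section
/- Let K be a complete non-Archimedean valued field of characteristic p > 0, λ ∈ K with |λ| = 1 not a root of unity, and f(x) = λx + Σ_{p | i} a_i x^i a formal power series whose nonlinear monomials all have degree divisible by p. Then the formal conjugacy g(x) = x + Σ_{k≥2} b_k x^k solving g∘f = λg satisfies b_k = 0 whenever p does not divide k (for k ≥ 2). -/
open PowerSeries

/-- Let `K` be a complete non-Archimedean valued field of characteristic `p > 0`, `λ` with
`‖λ‖ = 1` not a root of unity, and `f(x) = λx + ∑_{p ∣ i} aᵢ xⁱ` a formal power series whose
nonlinear monomials all have degree divisible by `p`.  Then the formal conjugacy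
`g(x) = x + ∑_{k ≥ 2} b_k xᵏ` solving `g ∘ f = λ·g` satisfies `b_k = 0` whenever `p ∤ k`
(for `k ≥ 2`). -/
theorem schroder_coeff_vanish_of_not_dvd {K : Type*} [NontriviallyNormedField K]
    [IsUltrametricDist K] [CompleteSpace K] (p : ℕ) (hp : p.Prime) [CharP K p]
    (lam : K) (hlam : ‖lam‖ = 1) (hroot : ∀ n : ℕ, 1 ≤ n → lam ^ n ≠ 1)
    (F : PowerSeries K) (hF0 : PowerSeries.coeff 0 F = 0)
    (hF1 : PowerSeries.coeff 1 F = lam)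
    (hFdvd : ∀ i : ℕ, 2 ≤ i → PowerSeries.coeff i F ≠ 0 → p ∣ i)
    (b : ℕ → K) (hb0 : b 0 = 0) (hb1 : b 1 = 1)
    (hS : SchroderEq lam F b) :
    ∀ k : ℕ, 2 ≤ k → ¬ p ∣ k → b k = 0 := by
  haveI : CharP (PowerSeries K) p := charP_of_injective_ringHom (PowerSeries.C_injective) p
  -- `PDiv A` : all nonzero coefficients of `A` sit in degrees divisible by `p`.
  set PDiv : PowerSeries K → Prop := fun A => ∀ i : ℕ, PowerSeries.coeff i A ≠ 0 → p ∣ i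
    with hPDiv
  have pdiv_mul : ∀ {A B : PowerSeries K}, PDiv A → PDiv B → PDiv (A * B) := by
    intro A B hA hB i h
    rw [PowerSeries.coeff_mul] at h
    obtain ⟨x, hx, hne⟩ := Finset.exists_ne_zero_of_sum_ne_zero h
    have h1 : p ∣ x.1 := hA x.1 (fun h0 => hne (by simp [h0]))
    have h2 : p ∣ x.2 := hB x.2 (fun h0 => hne (by simp [h0]))
    have hxi : x.1 + x.2 = i := Finset.HasAntidiagonal.mem_antidiagonal.mp hx
    exact hxi ▸ dvd_add h1 h2
  have pdiv_pow : ∀ {A : PowerSeries K}, PDiv A → ∀ m : ℕ, PDiv (A ^ m) := by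
    intro A hA m
    induction m with
    | zero =>
      intro i h
      rw [pow_zero, PowerSeries.coeff_one] at h
      rcases Nat.eq_zero_or_pos i with h0 | h0
      · exact h0 ▸ dvd_zero p
      · simp [Nat.pos_iff_ne_zero.mp h0] at h
    | succ m ih =>
      rw [pow_succ]
      exact pdiv_mul ih hA
  -- G := F - λ X has all coefficients in degrees divisible by p (only degrees ≥ 2 survive)
  set G : PowerSeries K := F - PowerSeries.C lam * X with hGdef
  have hG : PDiv G := by
    intro i h
    rcases Nat.lt_or_ge i 2 with hi | hi
    · interval_cases i
      · exfalso; apply h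
        rw [hGdef, map_sub, hF0, PowerSeries.coeff_C_mul, PowerSeries.coeff_X]
        norm_num
      · exfalso; apply h
        rw [hGdef, map_sub, hF1, PowerSeries.coeff_C_mul, PowerSeries.coeff_X]
        norm_num
    · apply hFdvd i hi
      intro hFi
      apply h
      have : PowerSeries.coeff i (PowerSeries.C lam * X) = 0 := by
        rw [PowerSeries.coeff_C_mul, PowerSeries.coeff_X]
        simp [show i ≠ 1 by omega]
      simp [hGdef, hFi, this]
  -- F^p has all coefficients in degrees divisible by p
  haveI : Fact p.Prime := ⟨hp⟩
  have hFp : PDiv (F ^ p) := by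
    have hF : F = G + PowerSeries.C lam * X := by rw [hGdef]; ring
    rw [hF, add_pow_char]
    intro i h
    rw [map_add] at h
    rcases (by
      by_contra hcon
      push_neg at hcon
      simp [hcon.1, hcon.2] at h :
      PowerSeries.coeff i (G ^ p) ≠ 0 ∨
        PowerSeries.coeff i ((PowerSeries.C lam * X) ^ p) ≠ 0) with h' | h'
    · exact pdiv_pow hG p i h'
    · have : (PowerSeries.C lam * X) ^ p = PowerSeries.C (lam ^ p) * X ^ p := by
        rw [mul_pow, map_pow]
      rw [this, PowerSeries.coeff_C_mul, PowerSeries.coeff_X_pow] at h'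
      by_contra hip
      simp [show i ≠ p by rintro rfl; exact hip dvd_rfl] at h'
  have hFk : ∀ m : ℕ, PDiv (F ^ (p * m)) := by
    intro m
    rw [pow_mul]
    exact pdiv_pow hFp m
  -- coeff n (F^n) = lam ^ n
  obtain ⟨H, hH⟩ : X ∣ F := PowerSeries.X_dvd_iff.mpr (by rwa [← PowerSeries.coeff_zero_eq_constantCoeff])
  have hHc : PowerSeries.constantCoeff H = lam := by
    have := hF1
    rw [hH, PowerSeries.coeff_succ_X_mul 0 H, PowerSeries.coeff_zero_eq_constantCoeff] at this
    exact this
  have hcoeffFn : ∀ n : ℕ, PowerSeries.coeff n (F ^ n) = lam ^ n := by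
    intro n
    have hcx := PowerSeries.coeff_X_pow_mul (H ^ n) n 0
    rw [zero_add] at hcx
    rw [hH, mul_pow, hcx, PowerSeries.coeff_zero_eq_constantCoeff, map_pow, hHc]
  have hlam0 : lam ≠ 0 := by
    intro h; rw [h, norm_zero] at hlam; norm_num at hlam
  -- main strong induction
  intro k
  induction k using Nat.strong_induction_on with
  | _ n IH =>
  intro hn2 hnp
  have hSn := hS n
  have hzero : ∀ k ∈ Finset.range (n + 1), k ≠ n →
      PowerSeries.coeff n (PowerSeries.C (b k) * F ^ k) = 0 := by
    intro k hk hkn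
    rw [Finset.mem_range] at hk
    rw [PowerSeries.coeff_C_mul]
    rcases Nat.eq_zero_or_pos k with rfl | hk1
    · rw [hb0]; ring
    rcases eq_or_ne k 1 with rfl | hk2
    · have : PowerSeries.coeff n (F ^ 1) = 0 := by
        rw [pow_one]
        by_contra h
        exact hnp (hFdvd n hn2 h)
      rw [this, mul_zero]
    by_cases hpk : p ∣ k
    · obtain ⟨m, rfl⟩ := hpk
      have : PowerSeries.coeff n (F ^ (p * m)) = 0 := by
        by_contra h
        exact hnp (hFk m n h)
      rw [this, mul_zero]
    · have hk2' : 2 ≤ k := by omega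
      rw [IH k (by omega) hk2' hpk, zero_mul]
  rw [map_sum, Finset.sum_eq_single_of_mem n (Finset.mem_range.mpr (Nat.lt_succ_self n))
      hzero, PowerSeries.coeff_C_mul, hcoeffFn n] at hSn
  -- b n * lam ^ n = lam * b n  ⇒  b n = 0
  have hne : lam ^ n - lam ≠ 0 := by
    intro h
    have hl : lam ^ n = lam := sub_eq_zero.mp h
    have h2 : lam ^ (n - 1) * lam = 1 * lam := by
      rw [one_mul, ← pow_succ, show n - 1 + 1 = n by omega, hl]
    exact hroot (n - 1) (by omega) (mul_right_cancel₀ hlam0 h2)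
  rcases mul_eq_zero.mp (show b n * (lam ^ n - lam) = 0 by rw [mul_sub, hSn]; ring) with h | h
  · exact h
  · exact absurd h hne
end

section
/- Let p be a prime, m a positive integer with p ∤ m, and k' the least positive integer with p | k' and m | k'-1. Then k' - 1 < mp, and the function δ(k) = ⌊(k-k')/(mp) + 1⌋/(k-1) on integers k ≥ 2 (with δ(k) = 0 for k < k') attains its maximum value 1/(k'-1) exactly at k = k'. -/
/-- Let `p` be a prime, `m` a positive integer with `p ∤ m`, and `k'` the least positive
integer with `p ∣ k'` and `m ∣ k' - 1`.  Then `k' - 1 < mp`, and the function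
`δ(k) = ⌊(k-k')/(mp) + 1⌋/(k-1)` on integers `k ≥ 2` (with `δ(k) = 0` for `k < k'`) attains
its maximum value `1/(k'-1)` exactly at `k = k'`. -/
theorem delta_max_at_k' (p m k' : ℕ) (hp : p.Prime) (hm : 0 < m) (hpm : ¬ p ∣ m)
    (hk'pos : 0 < k') (hk'p : p ∣ k') (hk'm : m ∣ k' - 1)
    (hk'min : ∀ l : ℕ, 0 < l → p ∣ l → m ∣ l - 1 → k' ≤ l) :
    k' - 1 < m * p ∧
      (fun k : ℕ => if k < k' then (0 : ℝ)
          else (((k - k') / (m * p) + 1 : ℕ) : ℝ) / ((k : ℝ) - 1)) k' = 1 / ((k' : ℝ) - 1) ∧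
      ∀ k : ℕ, 2 ≤ k → k ≠ k' →
        (if k < k' then (0 : ℝ)
          else (((k - k') / (m * p) + 1 : ℕ) : ℝ) / ((k : ℝ) - 1)) < 1 / ((k' : ℝ) - 1) := by
  have hk'2 : 2 ≤ k' := le_trans hp.two_le (Nat.le_of_dvd hk'pos hk'p)
  have hmp : 0 < m * p := Nat.mul_pos hm hp.pos
  have h1 : k' - 1 < m * p := by
    by_contra h
    push_neg at h
    have hl : k' ≤ k' - m * p := by
      refine hk'min _ (by omega) (Nat.dvd_sub hk'p (dvd_mul_left p m)) ?_
      have : k' - m * p - 1 = (k' - 1) - m * p := by omega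
      rw [this]
      exact Nat.dvd_sub hk'm (dvd_mul_right m p)
    omega
  have hk'r : (1 : ℝ) < (k' : ℝ) := by exact_mod_cast hk'2
  refine ⟨h1, ?_, ?_⟩
  · simp only [lt_irrefl, if_false, Nat.sub_self, Nat.zero_div]
    norm_num
  · intro k hk hne
    by_cases hlt : k < k'
    · rw [if_pos hlt]
      have : (0:ℝ) < (k':ℝ) - 1 := by linarith
      positivity
    · rw [if_neg hlt]
      push_neg at hlt
      have hkgt : k' < k := lt_of_le_of_ne hlt (Ne.symm hne)
      set q := (k - k') / (m * p) with hq
      have hqle : q * (m * p) ≤ k - k' := Nat.div_mul_le_self _ _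
      have key : (k' - 1) * (q + 1) < k - 1 := by
        have hq0 : (k' - 1) * q < k - k' ∨ q = 0 := by
          rcases Nat.eq_zero_or_pos q with h0 | h0
          · right; exact h0
          · left
            calc (k' - 1) * q < (m * p) * q := by
                  exact Nat.mul_lt_mul_of_lt_of_le h1 le_rfl h0
              _ = q * (m * p) := Nat.mul_comm _ _
              _ ≤ k - k' := hqle
        have hms : (k' - 1) * (q + 1) = (k' - 1) * q + (k' - 1) := Nat.mul_succ _ _
        rcases hq0 with h0 | h0
        · omega
        · rw [h0] at hms ⊢; simp at hms ⊢; omega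
      have hk1 : (1 : ℝ) < (k : ℝ) := by exact_mod_cast (by omega : 1 < k)
      rw [div_lt_div_iff₀ (by linarith) (by linarith)]
      have : ((k' - 1 : ℕ) : ℝ) * ((q + 1 : ℕ) : ℝ) < ((k - 1 : ℕ) : ℝ) := by
        exact_mod_cast key
      push_cast [Nat.cast_sub (by omega : 1 ≤ k'), Nat.cast_sub (by omega : 1 ≤ k)] at this
      push_cast
      linarith
end

section
/- Let K be a complete algebraically closed non-Archimedean valued field and h(x) = Σ_{k≥1} c_k x^k a power series converging on the rational open disc D_R(0), with c_1 ≠ 0. If 0 < r ≤ R and |c_k| r^k ≤ |c_1| r for all k ≥ 2, then h maps the open disc D_r(0) bijectively onto D_{|c_1|r}(0). -/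
open IsUltrametricDist

set_option maxHeartbeats 1000000 in
/-- Let `K` be a complete algebraically closed non-Archimedean valued field and
`h(x) = ∑_{k ≥ 1} c_k xᵏ` a power series converging on the rational open disc `D_R(0)` with
`c₁ ≠ 0`.  If `0 < r ≤ R` and `‖c_k‖ rᵏ ≤ ‖c₁‖ r` for all `k ≥ 2`, then `h` maps the open
disc `D_r(0)` bijectively onto `D_{‖c₁‖ r}(0)`. -/
theorem power_series_bijOn_open_disc {K : Type*} [NontriviallyNormedField K]
    [IsUltrametricDist K] [CompleteSpace K] [IsAlgClosed K]
    (c : ℕ → K) (hc0 : c 0 = 0) (hc1 : c 1 ≠ 0)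
    (R : ℝ) (hRrat : ∃ z : K, z ≠ 0 ∧ ‖z‖ = R)
    (hconv : ∀ x : K, ‖x‖ < R → Summable fun k : ℕ => c k * x ^ k)
    (r : ℝ) (hr0 : 0 < r) (hrR : r ≤ R)
    (hdom : ∀ k : ℕ, 2 ≤ k → ‖c k‖ * r ^ k ≤ ‖c 1‖ * r) :
    Set.BijOn (fun x : K => ∑' k : ℕ, c k * x ^ k)
      (Metric.ball 0 r) (Metric.ball 0 (‖c 1‖ * r)) := by
  have hrne : r ≠ 0 := hr0.ne'
  have hc1n : (0:ℝ) < ‖c 1‖ := norm_pos_iff.2 hc1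
  have hrR' : ∀ x : K, ‖x‖ < r → ‖x‖ < R := fun x hx => lt_of_lt_of_le hx hrR
  have keyC : ∀ k : ℕ, ‖c (k+2)‖ * r ^ (k+1) ≤ ‖c 1‖ := by
    intro k
    have h2 := hdom (k+2) (by omega)
    have h3 : ‖c (k+2)‖ * r ^ (k+1) * r ≤ ‖c 1‖ * r := by
      calc ‖c (k+2)‖ * r ^ (k+1) * r = ‖c (k+2)‖ * r ^ (k+2) := by ring
        _ ≤ ‖c 1‖ * r := h2
    exact le_of_mul_le_mul_right h3 hr0
  have keyB : ∀ (k : ℕ) (s : ℝ), 0 ≤ s → s ≤ r → ‖c (k+2)‖ * s ^ (k+1) ≤ ‖c 1‖ * (s / r) := by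
    intro k s hs0 hsr
    calc ‖c (k+2)‖ * s ^ (k+1) ≤ ‖c (k+2)‖ * (r ^ k * s) := by
          rw [pow_succ]
          exact mul_le_mul_of_nonneg_left
            (mul_le_mul_of_nonneg_right (pow_le_pow_left₀ hs0 hsr k) hs0) (norm_nonneg _)
      _ = ‖c (k+2)‖ * r ^ (k+1) * (s / r) := by field_simp; ring
      _ ≤ ‖c 1‖ * (s / r) := mul_le_mul_of_nonneg_right (keyC k) (div_nonneg hs0 hr0.le)
  have powdiff : ∀ (x y : K) (s : ℝ), ‖x‖ ≤ s → ‖y‖ ≤ s → ∀ n : ℕ,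
      ‖x ^ (n+1) - y ^ (n+1)‖ ≤ ‖x - y‖ * s ^ n := by
    intro x y s hx hy n
    have hs0 : 0 ≤ s := le_trans (norm_nonneg x) hx
    rw [← geom_sum₂_mul x y (n+1), norm_mul, mul_comm]
    refine mul_le_mul_of_nonneg_left ?_ (norm_nonneg _)
    refine norm_sum_le_of_forall_le_of_nonneg (pow_nonneg hs0 n) ?_
    intro i hi
    rw [Finset.mem_range] at hi
    have hieq : i + (n + 1 - 1 - i) = n := by omega
    calc ‖x ^ i * y ^ (n + 1 - 1 - i)‖ = ‖x‖ ^ i * ‖y‖ ^ (n + 1 - 1 - i) := by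
          rw [norm_mul, norm_pow, norm_pow]
      _ ≤ s ^ i * s ^ (n + 1 - 1 - i) :=
          mul_le_mul (pow_le_pow_left₀ (norm_nonneg _) hx i)
            (pow_le_pow_left₀ (norm_nonneg _) hy _) (pow_nonneg (norm_nonneg _) _)
            (pow_nonneg hs0 _)
      _ = s ^ n := by rw [← pow_add, hieq]
  have hTsum : ∀ x : K, ‖x‖ < R → Summable fun k : ℕ => c (k+2) * x ^ (k+2) :=
    fun x hx => (summable_nat_add_iff 2).2 (hconv x hx)
  have hsplit : ∀ x : K, ‖x‖ < R →
      (∑' k : ℕ, c k * x ^ k) = c 1 * x + ∑' k : ℕ, c (k+2) * x ^ (k+2) := by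
    intro x hx
    have hs := hconv x hx
    rw [Summable.tsum_eq_zero_add hs, Summable.tsum_eq_zero_add ((summable_nat_add_iff 1).2 hs)]
    simp only [hc0, pow_zero, mul_one, zero_mul, zero_add, pow_one]
  have hTbound : ∀ (x : K) (s : ℝ), ‖x‖ ≤ s → s ≤ r →
      ‖∑' k : ℕ, c (k+2) * x ^ (k+2)‖ ≤ ‖c 1‖ * (s / r) * s := by
    intro x s hx hsr
    have hs0 : 0 ≤ s := le_trans (norm_nonneg x) hx
    refine norm_tsum_le_of_forall_le ?_
    intro k
    calc ‖c (k+2) * x ^ (k+2)‖ = ‖c (k+2)‖ * ‖x‖ ^ (k+2) := by rw [norm_mul, norm_pow]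
      _ ≤ ‖c (k+2)‖ * s ^ (k+2) := mul_le_mul_of_nonneg_left
          (pow_le_pow_left₀ (norm_nonneg _) hx _) (norm_nonneg _)
      _ = ‖c (k+2)‖ * s ^ (k+1) * s := by ring
      _ ≤ ‖c 1‖ * (s / r) * s := mul_le_mul_of_nonneg_right (keyB k s hs0 hsr) hs0
  refine ⟨?_, ?_, ?_⟩
  · -- MapsTo
    intro x hx
    rw [Metric.mem_ball, dist_zero_right] at hx ⊢
    have hxR := hrR' x hx
    show ‖∑' k : ℕ, c k * x ^ k‖ < ‖c 1‖ * r
    rw [hsplit x hxR]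
    have h1 : ‖(∑' k : ℕ, c (k+2) * x ^ (k+2))‖ ≤ ‖c 1‖ * (‖x‖/r) * ‖x‖ :=
      hTbound x ‖x‖ le_rfl hx.le
    have h2 : ‖c 1‖ * (‖x‖/r) * ‖x‖ ≤ ‖c 1‖ * ‖x‖ := by
      have hd1 : ‖x‖ / r ≤ 1 := div_le_one_of_le₀ hx.le hr0.le
      calc ‖c 1‖ * (‖x‖/r) * ‖x‖ ≤ ‖c 1‖ * 1 * ‖x‖ :=
            mul_le_mul_of_nonneg_right (mul_le_mul_of_nonneg_left hd1 hc1n.le) (norm_nonneg x)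
        _ = ‖c 1‖ * ‖x‖ := by ring
    calc ‖c 1 * x + ∑' k : ℕ, c (k+2) * x ^ (k+2)‖
        ≤ max ‖c 1 * x‖ ‖∑' k : ℕ, c (k+2) * x ^ (k+2)‖ := norm_add_le_max _ _
      _ ≤ ‖c 1‖ * ‖x‖ := max_le (by rw [norm_mul]) (le_trans h1 h2)
      _ < ‖c 1‖ * r := mul_lt_mul_of_pos_left hx hc1n
  · -- InjOn
    intro x hx y hy hxy
    rw [Metric.mem_ball, dist_zero_right] at hx hy
    simp only at hxy
    set s := max ‖x‖ ‖y‖ with hsdef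
    have hsr : s < r := max_lt hx hy
    have hs0 : 0 ≤ s := le_trans (norm_nonneg x) (le_max_left _ _)
    have hsx := hconv x (hrR' x hx)
    have hsy := hconv y (hrR' y hy)
    have hsum2 : Summable fun k : ℕ => c k * x ^ k - c k * y ^ k := hsx.sub hsy
    have hdiff : (∑' k : ℕ, (c k * x ^ k - c k * y ^ k)) = 0 := by
      rw [Summable.tsum_sub hsx hsy, hxy, sub_self]
    have hsplit2 : (∑' k : ℕ, (c k * x ^ k - c k * y ^ k)) =
        (c 1 * x - c 1 * y) + ∑' k : ℕ, (c (k+2) * x ^ (k+2) - c (k+2) * y ^ (k+2)) := by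
      rw [Summable.tsum_eq_zero_add hsum2, Summable.tsum_eq_zero_add ((summable_nat_add_iff 1).2 hsum2)]
      simp only [hc0, pow_zero, mul_one, zero_mul, sub_self, zero_add, pow_one]
    set S := ∑' k : ℕ, (c (k+2) * x ^ (k+2) - c (k+2) * y ^ (k+2)) with hSdef
    have hSeq : S = -(c 1 * x - c 1 * y) := by
      have h5 := hdiff
      rw [hsplit2] at h5
      linear_combination h5
    have hSnorm : ‖S‖ = ‖c 1‖ * ‖x - y‖ := by
      rw [hSeq, norm_neg, ← mul_sub, norm_mul]
    have hSle : ‖S‖ ≤ ‖x - y‖ * (‖c 1‖ * (s / r)) := by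
      rw [hSdef]
      refine norm_tsum_le_of_forall_le ?_
      intro k
      calc ‖c (k+2) * x ^ (k+2) - c (k+2) * y ^ (k+2)‖
          = ‖c (k+2)‖ * ‖x ^ (k+2) - y ^ (k+2)‖ := by rw [← mul_sub, norm_mul]
        _ ≤ ‖c (k+2)‖ * (‖x - y‖ * s ^ (k+1)) := mul_le_mul_of_nonneg_left
            (powdiff x y s (le_max_left _ _) (le_max_right _ _) (k+1)) (norm_nonneg _)
        _ = ‖x - y‖ * (‖c (k+2)‖ * s ^ (k+1)) := by ring
        _ ≤ ‖x - y‖ * (‖c 1‖ * (s / r)) := mul_le_mul_of_nonneg_left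
            (keyB k s hs0 hsr.le) (norm_nonneg _)
    have hsr1 : s / r < 1 := (div_lt_one hr0).2 hsr
    have hxy0 : ‖x - y‖ = 0 := by
      rw [hSnorm] at hSle
      by_contra hne
      have hpos : 0 < ‖x - y‖ := lt_of_le_of_ne (norm_nonneg _) (Ne.symm hne)
      have hcontra : ‖c 1‖ * ‖x - y‖ < ‖c 1‖ * ‖x - y‖ := by
        calc ‖c 1‖ * ‖x - y‖ ≤ ‖x - y‖ * (‖c 1‖ * (s / r)) := hSle
          _ < ‖x - y‖ * (‖c 1‖ * 1) :=
              mul_lt_mul_of_pos_left (mul_lt_mul_of_pos_left hsr1 hc1n) hpos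
          _ = ‖c 1‖ * ‖x - y‖ := by ring
      exact absurd hcontra (lt_irrefl _)
    exact sub_eq_zero.1 (norm_eq_zero.1 hxy0)
  · -- SurjOn
    intro y hy
    rw [Metric.mem_ball, dist_zero_right] at hy
    by_cases hy0 : y = 0
    · refine ⟨0, by simp [Metric.mem_ball, hr0], ?_⟩
      simp only
      rw [hy0]
      have hz : ∀ k : ℕ, c k * (0:K) ^ k = 0 := by
        intro k
        cases k with
        | zero => simp [hc0]
        | succ n => simp
      simp [hz]
    · have hyn : (0:ℝ) < ‖y‖ := norm_pos_iff.2 hy0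
      set ρ := ‖y‖ / ‖c 1‖ with hρdef
      have hρ0 : 0 < ρ := div_pos hyn hc1n
      have hρr : ρ < r := (div_lt_iff₀ hc1n).2 (by rwa [mul_comm] at hy)
      have hρR : ρ < R := lt_of_lt_of_le hρr hrR
      have hc1ρ : ‖c 1‖ * ρ = ‖y‖ := by rw [hρdef]; field_simp
      set T : K → K := fun x => ∑' k : ℕ, c (k+2) * x ^ (k+2) with hTdef
      set g : K → K := fun x => (c 1)⁻¹ * (y - T x) with hgdef
      have hTlt : ∀ x : K, ‖x‖ ≤ ρ → ‖T x‖ < ‖y‖ := by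
        intro x hx
        have h1 := hTbound x ρ hx hρr.le
        have hρr1 : ρ / r < 1 := (div_lt_one hr0).2 hρr
        have h2 : ‖c 1‖ * (ρ / r) * ρ < ‖c 1‖ * ρ := by
          nlinarith [hc1n, hρ0]
        calc ‖T x‖ ≤ ‖c 1‖ * (ρ / r) * ρ := h1
          _ < ‖c 1‖ * ρ := h2
          _ = ‖y‖ := hc1ρ
      have hmaps : Set.MapsTo g (Metric.closedBall (0:K) ρ) (Metric.closedBall (0:K) ρ) := by
        intro x hx
        rw [Metric.mem_closedBall, dist_zero_right] at hx ⊢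
        have h1 : ‖y - T x‖ ≤ ‖y‖ := by
          calc ‖y - T x‖ ≤ max ‖y‖ ‖T x‖ := by
                rw [sub_eq_add_neg]; simpa using norm_add_le_max y (-(T x))
            _ ≤ ‖y‖ := max_le le_rfl (hTlt x hx).le
        calc ‖g x‖ = ‖c 1‖⁻¹ * ‖y - T x‖ := by rw [hgdef]; simp [norm_mul, norm_inv]
          _ ≤ ‖c 1‖⁻¹ * ‖y‖ := mul_le_mul_of_nonneg_left h1 (by positivity)
          _ = ρ := by rw [hρdef]; field_simp
      have hlip : ∀ x x' : K, ‖x‖ ≤ ρ → ‖x'‖ ≤ ρ →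
          ‖g x - g x'‖ ≤ (ρ / r) * ‖x - x'‖ := by
        intro x x' hx hx'
        have hxR : ‖x‖ < R := lt_of_le_of_lt hx hρR
        have hx'R : ‖x'‖ < R := lt_of_le_of_lt hx' hρR
        have hgd : g x - g x' = (c 1)⁻¹ * (T x' - T x) := by rw [hgdef]; ring
        have hTd : T x' - T x = ∑' k : ℕ, (c (k+2) * x' ^ (k+2) - c (k+2) * x ^ (k+2)) := by
          rw [hTdef]
          exact (Summable.tsum_sub (hTsum x' hx'R) (hTsum x hxR)).symm
        have hTdle : ‖T x' - T x‖ ≤ ‖x' - x‖ * (‖c 1‖ * (ρ / r)) := by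
          rw [hTd]
          refine norm_tsum_le_of_forall_le ?_
          intro k
          calc ‖c (k+2) * x' ^ (k+2) - c (k+2) * x ^ (k+2)‖
              = ‖c (k+2)‖ * ‖x' ^ (k+2) - x ^ (k+2)‖ := by rw [← mul_sub, norm_mul]
            _ ≤ ‖c (k+2)‖ * (‖x' - x‖ * ρ ^ (k+1)) := mul_le_mul_of_nonneg_left
                (powdiff x' x ρ hx' hx (k+1)) (norm_nonneg _)
            _ = ‖x' - x‖ * (‖c (k+2)‖ * ρ ^ (k+1)) := by ring
            _ ≤ ‖x' - x‖ * (‖c 1‖ * (ρ / r)) := mul_le_mul_of_nonneg_left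
                (keyB k ρ hρ0.le hρr.le) (norm_nonneg _)
        calc ‖g x - g x'‖ = ‖c 1‖⁻¹ * ‖T x' - T x‖ := by rw [hgd, norm_mul, norm_inv]
          _ ≤ ‖c 1‖⁻¹ * (‖x' - x‖ * (‖c 1‖ * (ρ / r))) :=
              mul_le_mul_of_nonneg_left hTdle (by positivity)
          _ = (ρ / r) * ‖x' - x‖ := by field_simp
          _ = (ρ / r) * ‖x - x'‖ := by rw [norm_sub_rev]
      have hρr1 : ρ / r < 1 := (div_lt_one hr0).2 hρr
      set κ : NNReal := ⟨ρ / r, by positivity⟩ with hκdef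
      have hκ1 : κ < 1 := by
        rw [← NNReal.coe_lt_coe]
        exact hρr1
      have hsc : IsComplete (Metric.closedBall (0:K) ρ) :=
        Metric.isClosed_closedBall.isComplete
      have hcontr : ContractingWith κ (hmaps.restrict g _ _) := by
        refine ⟨hκ1, LipschitzWith.of_dist_le_mul ?_⟩
        rintro ⟨a, ha⟩ ⟨b, hb⟩
        rw [Metric.mem_closedBall, dist_zero_right] at ha hb
        simp only [Set.MapsTo.restrict, Subtype.dist_eq, dist_eq_norm,
          Set.MapsTo.val_restrict_apply]
        exact hlip a b ha hb
      have h0mem : (0:K) ∈ Metric.closedBall (0:K) ρ :=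
        Metric.mem_closedBall_self hρ0.le
      obtain ⟨x, hxmem, hfix, -, -⟩ :=
        hcontr.exists_fixedPoint' hsc hmaps h0mem (edist_ne_top _ _)
      rw [Metric.mem_closedBall, dist_zero_right] at hxmem
      have hxR : ‖x‖ < R := lt_of_le_of_lt hxmem hρR
      refine ⟨x, ?_, ?_⟩
      · rw [Metric.mem_ball, dist_zero_right]
        exact lt_of_le_of_lt hxmem hρr
      · have hfix' : (c 1)⁻¹ * (y - T x) = x := hfix
        have hc1x : c 1 * x = y - T x := by
          conv_lhs => rw [← hfix']
          rw [← mul_assoc, mul_inv_cancel₀ hc1, one_mul]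
        show (∑' k : ℕ, c k * x ^ k) = y
        rw [hsplit x hxR]
        have hTx : (∑' k : ℕ, c (k+2) * x ^ (k+2)) = T x := rfl
        rw [hTx, hc1x]
        ring
end

section
/- Let K be an algebraically closed complete non-Archimedean valued field and f(x) = λx + Σ_{i≥2} a_i x^i a power series over K with |λ| = 1 that converges on some nonempty disc about 0. Then a = sup_{i≥2} |a_i|^{1/(i-1)} is finite, |a_i| ≤ a^{i-1} for all i ≥ 2, the radius of convergence of f is at least 1/a, and f maps the open disc D_{1/a}(0) bijectively onto itself. -/
open IsUltrametricDist

lemma pow_sub_pow_norm_le' {K : Type*} [NormedField K] [IsUltrametricDist K]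
    {x y : K} {m : ℝ} (hx : ‖x‖ ≤ m) (hy : ‖y‖ ≤ m) (i : ℕ) :
    ‖x ^ i - y ^ i‖ ≤ m ^ (i - 1) * ‖x - y‖ := by
  have hm : 0 ≤ m := le_trans (norm_nonneg x) hx
  rcases Nat.eq_zero_or_pos i with h0 | hi
  · simp only [h0, pow_zero, sub_self, norm_zero]
    positivity
  · rw [← geom_sum₂_mul, norm_mul]
    gcongr
    apply norm_sum_le_of_forall_le_of_nonneg (by positivity)
    intro j hj
    rw [norm_mul, norm_pow, norm_pow]
    calc ‖x‖ ^ j * ‖y‖ ^ (i - 1 - j) ≤ m ^ j * m ^ (i - 1 - j) := by gcongr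
    _ = m ^ (i - 1) := by
        rw [← pow_add]
        congr 1
        simp only [Finset.mem_range] at hj
        omega

lemma summable_aux' {K : Type*} [NormedField K] [IsUltrametricDist K] [CompleteSpace K]
    (a : ℕ → K) (A : ℝ) (hA : ∀ i, 2 ≤ i → ‖a i‖ ≤ A ^ (i - 1))
    (ha0 : a 0 = 0) (ha1 : a 1 = 0)
    {x : K} (hx : A * ‖x‖ < 1) : Summable fun i : ℕ => a i * x ^ i := by
  have hA0 : 0 ≤ A := le_trans (norm_nonneg (a 2)) (by simpa using hA 2 le_rfl)
  set r : ℝ := A * ‖x‖ with hr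
  have hr0 : 0 ≤ r := by positivity
  have hbound : ∀ i : ℕ, ‖a i * x ^ i‖ ≤ ‖x‖ * r ^ (i - 1) := by
    intro i
    match i with
    | 0 => simp [ha0]
    | 1 => simp [ha1]
    | (n+2) =>
      rw [norm_mul, norm_pow]
      calc ‖a (n+2)‖ * ‖x‖ ^ (n+2) ≤ A ^ (n+1) * ‖x‖ ^ (n+2) := by
            gcongr
            exact hA (n+2) (by omega)
      _ = ‖x‖ * r ^ (n + 1) := by rw [hr, mul_pow]; ring
  refine Summable.of_norm_bounded ?_ hbound
  rw [← summable_nat_add_iff 1]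
  simpa using (summable_geometric_of_lt_one hr0 hx).mul_left ‖x‖

lemma tsum_diff_le' {K : Type*} [NormedField K] [IsUltrametricDist K] [CompleteSpace K]
    (a : ℕ → K) (A : ℝ) (hA : ∀ i, 2 ≤ i → ‖a i‖ ≤ A ^ (i - 1))
    (ha0 : a 0 = 0) (ha1 : a 1 = 0)
    {m : ℝ} (hm : A * m < 1) {x y : K} (hx : ‖x‖ ≤ m) (hy : ‖y‖ ≤ m) :
    ‖(∑' i : ℕ, a i * x ^ i) - ∑' i : ℕ, a i * y ^ i‖ ≤ (A * m) * ‖x - y‖ := by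
  have hA0 : 0 ≤ A := le_trans (norm_nonneg (a 2)) (by simpa using hA 2 le_rfl)
  have hm0 : 0 ≤ m := le_trans (norm_nonneg x) hx
  have hsx : Summable fun i : ℕ => a i * x ^ i :=
    summable_aux' a A hA ha0 ha1 (lt_of_le_of_lt (by gcongr) hm)
  have hsy : Summable fun i : ℕ => a i * y ^ i :=
    summable_aux' a A hA ha0 ha1 (lt_of_le_of_lt (by gcongr) hm)
  rw [← Summable.tsum_sub hsx hsy]
  apply norm_tsum_le_of_forall_le_of_nonneg (by positivity)
  intro i
  match i with
  | 0 => simp [ha0]; positivity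
  | 1 => simp [ha1]; positivity
  | (n+2) =>
    rw [← mul_sub, norm_mul]
    calc ‖a (n+2)‖ * ‖x ^ (n+2) - y ^ (n+2)‖
        ≤ A ^ (n+1) * (m ^ (n+1) * ‖x - y‖) := by
          gcongr
          · exact hA (n+2) (by omega)
          · exact pow_sub_pow_norm_le' hx hy (n+2)
      _ = (A * m) ^ (n+1) * ‖x - y‖ := by rw [mul_pow]; ring
      _ ≤ (A * m) ^ 1 * ‖x - y‖ :=
          mul_le_mul_of_nonneg_right
            (pow_le_pow_of_le_one (by positivity) hm.le (Nat.le_add_left 1 n)) (norm_nonneg _)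
      _ = (A * m) * ‖x - y‖ := by ring


/-- Let `K` be an algebraically closed complete non-Archimedean valued field and
`f(x) = λx + ∑_{i ≥ 2} aᵢ xⁱ` with `‖λ‖ = 1`, converging on some nonempty disc about `0`.
Then `a = sup_{i ≥ 2} ‖aᵢ‖^{1/(i-1)}` is finite, `‖aᵢ‖ ≤ a^{i-1}` for all `i ≥ 2`, the radius
of convergence of `f` is at least `1/a`, and `f` maps `D_{1/a}(0)` bijectively onto itself. -/
theorem f_bijective_on_disc {K : Type*} [NontriviallyNormedField K]
    [IsUltrametricDist K] [CompleteSpace K] [IsAlgClosed K]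
    (lam : K) (hlam : ‖lam‖ = 1)
    (a : ℕ → K) (ha0 : a 0 = 0) (ha1 : a 1 = 0)
    (hconv : ∃ r : ℝ, 0 < r ∧ ∀ x : K, ‖x‖ < r → Summable fun i : ℕ => a i * x ^ i) :
    ∃ A : ℝ,
      IsLUB (Set.range fun i : {i : ℕ // 2 ≤ i} =>
        ‖a (i : ℕ)‖ ^ ((1 : ℝ) / ((i : ℕ) - 1 : ℝ))) A ∧
      (∀ i : ℕ, 2 ≤ i → ‖a i‖ ≤ A ^ (i - 1)) ∧
      (∀ x : K, ‖x‖ < 1 / A → Summable fun i : ℕ => a i * x ^ i) ∧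
      Set.BijOn (fun x : K => lam * x + ∑' i : ℕ, a i * x ^ i)
        (Metric.ball 0 (1 / A)) (Metric.ball 0 (1 / A)) := by
  obtain ⟨r, hr, hs⟩ := hconv
  obtain ⟨x0, hx0, hx0r⟩ := NormedField.exists_norm_lt K hr
  -- a uniform bound on the coefficients from summability at `x0`
  obtain ⟨C, hC⟩ : ∃ C, ∀ i : ℕ, ‖a i‖ * ‖x0‖ ^ i ≤ C := by
    have h : Filter.Tendsto (fun i : ℕ => ‖a i * x0 ^ i‖) Filter.atTop (nhds 0) := by
      simpa using ((hs x0 hx0r).tendsto_atTop_zero).norm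
    obtain ⟨C, hC⟩ := h.bddAbove_range
    exact ⟨C, fun i => by
      simpa [norm_mul, norm_pow] using hC (Set.mem_range_self i)⟩
  set B : ℝ := max 1 C * (max 1 ‖x0‖⁻¹) ^ 2 with hB
  have hB1 : (1 : ℝ) ≤ B := by
    rw [hB]
    calc (1:ℝ) = 1 * 1 ^ 2 := by norm_num
    _ ≤ max 1 C * (max 1 ‖x0‖⁻¹) ^ 2 := by gcongr <;> simp
  have hB0 : (0 : ℝ) ≤ B := le_trans zero_le_one hB1
  have hBpow : ∀ i : ℕ, 2 ≤ i → ‖a i‖ ≤ B ^ (i - 1) := by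
    intro i hi
    have h1 : ‖a i‖ ≤ C * (‖x0‖⁻¹) ^ i := by
      have h2 := hC i
      rw [← le_div_iff₀ (pow_pos hx0 i)] at h2
      rwa [div_eq_mul_inv, ← inv_pow] at h2
    calc ‖a i‖ ≤ C * (‖x0‖⁻¹) ^ i := h1
    _ ≤ max 1 C * (max 1 ‖x0‖⁻¹) ^ i :=
        mul_le_mul (le_max_right 1 C)
          (pow_le_pow_left₀ (by positivity) (le_max_right 1 ‖x0‖⁻¹) i)
          (by positivity) (by positivity)
    _ ≤ (max 1 C) ^ (i - 1) * (max 1 ‖x0‖⁻¹) ^ (2 * (i - 1)) :=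
        mul_le_mul (le_self_pow₀ (le_max_left 1 C) (by omega))
          (pow_le_pow_right₀ (le_max_left 1 ‖x0‖⁻¹) (by omega : i ≤ 2 * (i - 1)))
          (by positivity) (by positivity)
    _ = B ^ (i - 1) := by
        rw [hB, mul_pow, ← pow_mul]
  -- the sup
  set S := Set.range (fun i : {i : ℕ // 2 ≤ i} =>
    ‖a (i : ℕ)‖ ^ ((1 : ℝ) / ((i : ℕ) - 1 : ℝ))) with hSdef
  have hSne : S.Nonempty := ⟨_, ⟨⟨2, le_rfl⟩, rfl⟩⟩
  have hcast : ∀ i : ℕ, 2 ≤ i → ((i : ℝ) - 1) = ((i - 1 : ℕ) : ℝ) := by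
    intro i hi
    rw [Nat.cast_sub (by omega), Nat.cast_one]
  have hepos : ∀ i : ℕ, 2 ≤ i → (0 : ℝ) < (i : ℝ) - 1 := by
    intro i hi
    have : (2 : ℝ) ≤ (i : ℝ) := by exact_mod_cast hi
    linarith
  have hSbdd : BddAbove S := by
    refine ⟨B, ?_⟩
    rintro s ⟨⟨i, hi⟩, rfl⟩
    simp only
    have he := hepos i hi
    have h1 : ‖a i‖ ≤ B ^ ((i : ℝ) - 1) := by
      rw [hcast i hi, Real.rpow_natCast]
      exact hBpow i hi
    calc ‖a i‖ ^ ((1 : ℝ) / ((i : ℝ) - 1)) ≤ (B ^ ((i : ℝ) - 1)) ^ ((1 : ℝ) / ((i : ℝ) - 1)) :=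
          Real.rpow_le_rpow (norm_nonneg _) h1 (by positivity)
    _ = B := by
        rw [← Real.rpow_mul hB0, mul_one_div_cancel (ne_of_gt he), Real.rpow_one]
  set A := sSup S with hAdef
  have hlub : IsLUB S A := isLUB_csSup hSne hSbdd
  have hA0 : 0 ≤ A :=
    le_trans (Real.rpow_nonneg (norm_nonneg (a 2)) _) (hlub.1 ⟨⟨2, le_rfl⟩, rfl⟩)
  have hAle : ∀ i : ℕ, 2 ≤ i → ‖a i‖ ≤ A ^ (i - 1) := by
    intro i hi
    have he := hepos i hi
    have hmem : ‖a i‖ ^ ((1 : ℝ) / ((i : ℝ) - 1)) ≤ A := hlub.1 ⟨⟨i, hi⟩, rfl⟩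
    have h2 : (‖a i‖ ^ ((1 : ℝ) / ((i : ℝ) - 1))) ^ (i - 1 : ℕ) ≤ A ^ (i - 1 : ℕ) :=
      pow_le_pow_left₀ (Real.rpow_nonneg (norm_nonneg _) _) hmem _
    calc ‖a i‖ = (‖a i‖ ^ ((1 : ℝ) / ((i : ℝ) - 1))) ^ (i - 1 : ℕ) := by
          rw [← Real.rpow_natCast (‖a i‖ ^ ((1 : ℝ) / ((i : ℝ) - 1))) (i - 1),
            ← Real.rpow_mul (norm_nonneg _), ← hcast i hi,
            one_div_mul_cancel (ne_of_gt he), Real.rpow_one]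
    _ ≤ A ^ (i - 1) := h2
  have hsummable : ∀ x : K, ‖x‖ < 1 / A → Summable fun i : ℕ => a i * x ^ i := by
    intro x hx
    rcases eq_or_lt_of_le hA0 with hA' | hA'
    · exfalso
      rw [← hA', div_zero] at hx
      exact absurd hx (not_lt.mpr (norm_nonneg x))
    · refine summable_aux' a A hAle ha0 ha1 ?_
      rw [mul_comm]
      exact (lt_div_iff₀ hA').mp hx
  refine ⟨A, hlub, hAle, hsummable, ?_⟩
  rcases eq_or_lt_of_le hA0 with hA' | hA'
  · rw [← hA', div_zero, Metric.ball_zero]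
    exact Set.bijOn_empty _
  -- main case : A > 0
  have hrA : 0 < 1 / A := by positivity
  have htzero : ∀ i : ℕ, a i * (0 : K) ^ i = 0 := by
    intro i
    match i with
    | 0 => simp [ha0]
    | (n+1) => simp
  have hT0 : (∑' i : ℕ, a i * (0 : K) ^ i) = 0 := by
    rw [tsum_congr htzero, tsum_zero]
  set F : K → K := fun x => lam * x + ∑' i : ℕ, a i * x ^ i with hFdef
  have hF0 : F 0 = 0 := by rw [hFdef]; simp [hT0]
  have hnorm : ∀ x y : K, ‖x‖ < 1 / A → ‖y‖ < 1 / A → ‖F x - F y‖ = ‖x - y‖ := by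
    intro x y hx hy
    rcases eq_or_ne x y with rfl | hxy
    · simp
    have hm : A * max ‖x‖ ‖y‖ < 1 := by
      rw [mul_comm]
      exact (lt_div_iff₀ hA').mp (max_lt hx hy)
    have hE := tsum_diff_le' a A hAle ha0 ha1 hm (le_max_left ‖x‖ ‖y‖) (le_max_right ‖x‖ ‖y‖)
    have hxy' : (0 : ℝ) < ‖x - y‖ := by
      rw [norm_pos_iff]
      exact sub_ne_zero_of_ne hxy
    have hlt : ‖(∑' i : ℕ, a i * x ^ i) - ∑' i : ℕ, a i * y ^ i‖ < ‖lam * (x - y)‖ := by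
      rw [norm_mul, hlam, one_mul]
      refine lt_of_le_of_lt hE ?_
      calc (A * max ‖x‖ ‖y‖) * ‖x - y‖ < 1 * ‖x - y‖ :=
            mul_lt_mul_of_pos_right hm hxy'
      _ = ‖x - y‖ := one_mul _
    have hkey : F x - F y = lam * (x - y) +
        ((∑' i : ℕ, a i * x ^ i) - ∑' i : ℕ, a i * y ^ i) := by
      rw [hFdef]; ring
    rw [hkey, norm_add_eq_max_of_norm_ne_norm hlt.ne',
      max_eq_left hlt.le, norm_mul, hlam, one_mul]
  have hmapsTo : Set.MapsTo F (Metric.ball 0 (1 / A)) (Metric.ball 0 (1 / A)) := by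
    intro x hx
    rw [Metric.mem_ball, dist_zero_right] at hx ⊢
    have := hnorm x 0 hx (by simpa using hrA)
    rw [hF0, sub_zero, sub_zero] at this
    rwa [this]
  have hinj : Set.InjOn F (Metric.ball 0 (1 / A)) := by
    intro x hx y hy hxy
    rw [Metric.mem_ball, dist_zero_right] at hx hy
    have := hnorm x y hx hy
    rw [hxy, sub_self, norm_zero] at this
    have := (norm_eq_zero.mp this.symm)
    exact sub_eq_zero.mp this
  have hsurj : Set.SurjOn F (Metric.ball 0 (1 / A)) (Metric.ball 0 (1 / A)) := by
    intro w hw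
    rw [Metric.mem_ball, dist_zero_right] at hw
    set rr := ‖w‖ with hrr
    have hrr0 : 0 ≤ rr := norm_nonneg w
    have hr1 : A * rr < 1 := by
      rw [mul_comm]
      exact (lt_div_iff₀ hA').mp hw
    have hlamne : lam ≠ 0 := by
      intro h
      rw [h, norm_zero] at hlam
      norm_num at hlam
    set T : K → K := fun x => ∑' i : ℕ, a i * x ^ i with hTdef
    have hTbound : ∀ x : K, ‖x‖ ≤ rr → ‖T x‖ ≤ (A * rr) * rr := by
      intro x hx
      have := tsum_diff_le' a A hAle ha0 ha1 hr1 hx (y := (0:K)) (by simpa using hrr0)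
      rw [hT0, sub_zero, sub_zero] at this
      calc ‖T x‖ ≤ (A * rr) * ‖x‖ := this
      _ ≤ (A * rr) * rr := by
          apply mul_le_mul_of_nonneg_left hx
          positivity
    set g : K → K := fun x => lam⁻¹ * (w - T x) with hgdef
    have hmaps : Set.MapsTo g (Metric.closedBall 0 rr) (Metric.closedBall 0 rr) := by
      intro x hx
      rw [Metric.mem_closedBall, dist_zero_right] at hx ⊢
      have h1 : ‖g x‖ = ‖w - T x‖ := by
        rw [hgdef]
        simp only [norm_mul, norm_inv, hlam, inv_one, one_mul]
      rw [h1, sub_eq_add_neg]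
      refine le_trans (norm_add_le_max _ _) (max_le le_rfl ?_)
      rw [norm_neg]
      calc ‖T x‖ ≤ (A * rr) * rr := hTbound x hx
      _ ≤ 1 * rr := mul_le_mul_of_nonneg_right hr1.le hrr0
      _ = rr := one_mul _
    have hgdiff : ∀ x y : K, ‖x‖ ≤ rr → ‖y‖ ≤ rr → ‖g x - g y‖ ≤ (A * rr) * ‖x - y‖ := by
      intro x y hx hy
      have h1 : g x - g y = lam⁻¹ * (T y - T x) := by rw [hgdef]; ring
      rw [h1, norm_mul, norm_inv, hlam, inv_one, one_mul]
      have h3 := tsum_diff_le' a A hAle ha0 ha1 hr1 hy hx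
      rw [norm_sub_rev x y]
      exact h3
    set c : NNReal := ⟨A * rr, by positivity⟩ with hcdef
    have hcon : ContractingWith c (hmaps.restrict g _ _) := by
      constructor
      · rw [← NNReal.coe_lt_coe]
        push_cast
        exact hr1
      · apply LipschitzWith.of_dist_le_mul
        rintro ⟨x, hx⟩ ⟨y, hy⟩
        rw [Metric.mem_closedBall, dist_zero_right] at hx hy
        have h2 := hgdiff x y hx hy
        simp only [Set.MapsTo.restrict, Subtype.dist_eq, Subtype.map_coe, dist_eq_norm]
        exact h2
    have hcomplete : IsComplete (Metric.closedBall (0 : K) rr) :=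
      Metric.isClosed_closedBall.isComplete
    obtain ⟨y, hyS, hfix, -, -⟩ :=
      ContractingWith.exists_fixedPoint' hcomplete hmaps hcon
        (Metric.mem_closedBall_self hrr0) (edist_ne_top _ _)
    rw [Metric.mem_closedBall, dist_zero_right] at hyS
    have hyball : y ∈ Metric.ball (0 : K) (1 / A) := by
      rw [Metric.mem_ball, dist_zero_right]
      calc ‖y‖ ≤ rr := hyS
      _ < 1 / A := hw
    refine ⟨y, hyball, ?_⟩
    have h1 : lam⁻¹ * (w - T y) = y := hfix
    have h2 : lam * (lam⁻¹ * (w - T y)) = lam * y := by rw [h1]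
    rw [← mul_assoc, mul_inv_cancel₀ hlamne, one_mul] at h2
    show lam * y + T y = w
    rw [← h2]
    ring
  exact ⟨hmapsTo, hinj, hsurj⟩
end

section
/- Let K be a complete algebraically closed non-Archimedean valued field, f(x) = λx + Σ_{i≥2} a_i x^i with |λ| = 1, a = sup_{i≥2}|a_i|^{1/(i-1)}, and suppose f is linearizable with conjugacy g. Let τ < 1/a be such that g maps D_τ(0) bijectively onto itself (Weierstrass degree 1) and g maps the closed disc of radius τ onto itself d-to-1 with d > 1. Then f has a periodic point x̂ on the sphere S_τ(0) = {x : |x| = τ} of period κ ≤ d, and x̂ is indifferent: |(f^κ)'(x̂)| = 1. -/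
open Polynomial IsUltrametricDist Finset

set_option linter.unusedSectionVars false
set_option linter.unusedVariables false
set_option maxHeartbeats 1000000

section Aux

variable {K : Type*} [NontriviallyNormedField K] [IsUltrametricDist K]

lemma aux_pow_sub {τ : ℝ} {u v : K} (hu : ‖u‖ ≤ τ) (hv : ‖v‖ ≤ τ) :
    ∀ k : ℕ, ‖u ^ (k + 1) - v ^ (k + 1)‖ ≤ ‖u - v‖ * τ ^ k := by
  have hτ : 0 ≤ τ := le_trans (norm_nonneg u) hu
  intro k
  induction k with
  | zero => simp
  | succ k ih =>
    have hid : u ^ (k + 2) - v ^ (k + 2)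
        = u * (u ^ (k + 1) - v ^ (k + 1)) + (u - v) * v ^ (k + 1) := by ring
    rw [hid]
    refine le_trans (norm_add_le_max _ _) (max_le ?_ ?_)
    · rw [norm_mul]
      calc ‖u‖ * ‖u ^ (k + 1) - v ^ (k + 1)‖ ≤ τ * (‖u - v‖ * τ ^ k) :=
            mul_le_mul hu ih (norm_nonneg _) hτ
        _ = ‖u - v‖ * τ ^ (k + 1) := by ring
    · rw [norm_mul, norm_pow]
      exact mul_le_mul_of_nonneg_left (pow_le_pow_left₀ (norm_nonneg _) hv _) (norm_nonneg _)

lemma aux_norm_multiset_prod (F : K → K) (s : Multiset K) :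
    ‖(s.map F).prod‖ = (s.map fun r => ‖F r‖).prod := by
  induction s using Multiset.induction_on with
  | empty => simp
  | cons a t ih => simp [norm_mul, ih]

lemma aux_prod_const (c : ℝ) (F : K → ℝ) (s : Multiset K) (h : ∀ r ∈ s, F r = c) :
    (s.map F).prod = c ^ Multiset.card s := by
  induction s using Multiset.induction_on with
  | empty => simp
  | cons a t ih =>
    simp only [Multiset.map_cons, Multiset.prod_cons, Multiset.card_cons, pow_succ']
    rw [h a (Multiset.mem_cons_self a t), ih (fun r hr => h r (Multiset.mem_cons_of_mem hr))]

lemma aux_pow_card_le_prod (c : ℝ) (hc : 0 ≤ c) (F : K → ℝ) (hF : ∀ r : K, 0 ≤ F r) :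
    ∀ s : Multiset K, (∀ r ∈ s, c ≤ F r) → c ^ Multiset.card s ≤ (s.map F).prod := by
  intro s
  induction s using Multiset.induction_on with
  | empty => simp
  | cons a t ih =>
    intro h
    simp only [Multiset.map_cons, Multiset.prod_cons, Multiset.card_cons, pow_succ']
    exact mul_le_mul (h a (Multiset.mem_cons_self a t))
      (ih (fun r hr => h r (Multiset.mem_cons_of_mem hr))) (pow_nonneg hc _)
      (le_trans hc (h a (Multiset.mem_cons_self a t)))

lemma aux_no_small_roots {τ : ℝ} (hτ : 0 < τ) {p : K[X]} (hc0 : p.coeff 0 ≠ 0)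
    (hle : ∀ k, ‖p.coeff k‖ * τ ^ k ≤ ‖p.coeff 0‖) {z : K} (hz : ‖z‖ < τ) :
    p.eval z ≠ 0 := by
  have h0 : 0 < ‖p.coeff 0‖ := norm_pos_iff.mpr hc0
  have heval : p.eval z
      = (∑ i ∈ Finset.range p.natDegree, p.coeff (i + 1) * z ^ (i + 1)) + p.coeff 0 := by
    rw [Polynomial.eval_eq_sum_range, Finset.sum_range_succ']
    simp
  have hzτ : 0 ≤ ‖z‖ / τ := div_nonneg (norm_nonneg z) hτ.le
  have hterm : ∀ i, ‖p.coeff (i + 1) * z ^ (i + 1)‖ ≤ ‖p.coeff 0‖ * (‖z‖ / τ) := by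
    intro i
    rw [norm_mul, norm_pow]
    have h1 : ‖z‖ ^ (i + 1) ≤ τ ^ i * ‖z‖ := by
      rw [pow_succ]
      exact mul_le_mul_of_nonneg_right (pow_le_pow_left₀ (norm_nonneg _) hz.le _) (norm_nonneg _)
    calc ‖p.coeff (i + 1)‖ * ‖z‖ ^ (i + 1) ≤ ‖p.coeff (i + 1)‖ * (τ ^ i * ‖z‖) :=
          mul_le_mul_of_nonneg_left h1 (norm_nonneg _)
      _ = (‖p.coeff (i + 1)‖ * τ ^ (i + 1)) * (‖z‖ / τ) := by
          field_simp; ring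
      _ ≤ ‖p.coeff 0‖ * (‖z‖ / τ) := mul_le_mul_of_nonneg_right (hle (i + 1)) hzτ
  have hrest : ‖∑ i ∈ Finset.range p.natDegree, p.coeff (i + 1) * z ^ (i + 1)‖
      < ‖p.coeff 0‖ := by
    refine lt_of_le_of_lt
      (norm_sum_le_of_forall_le_of_nonneg (mul_nonneg h0.le hzτ) fun i _ => hterm i) ?_
    exact mul_lt_of_lt_one_right h0 ((div_lt_one hτ).mpr hz)
  have hne : ‖p.eval z‖ = ‖p.coeff 0‖ := by
    rw [heval, norm_add_eq_max_of_norm_ne_norm (ne_of_lt hrest), max_eq_right hrest.le]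
  intro hzero
  rw [hzero, norm_zero] at hne
  exact h0.ne hne

/-- Counting lemma: if the weighted coefficients are bounded by `M`, with the bound attained
at index `D` and not attained above `D`, then `p` has at most `D` roots in the closed disc. -/
lemma aux_roots_card_le {τ : ℝ} (hτ : 0 < τ) :
    ∀ (D : ℕ) (p : K[X]) (M : ℝ), 0 < M → p ≠ 0 →
      (∀ k, ‖p.coeff k‖ * τ ^ k ≤ M) →
      (‖p.coeff D‖ * τ ^ D = M) →
      (∀ k, D < k → ‖p.coeff k‖ * τ ^ k < M) →
      Multiset.card (p.roots.filter (fun r => ‖r‖ ≤ τ)) ≤ D := by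
  classical
  intro D
  induction D with
  | zero =>
    intro p M hM hp hle heq hlt
    simp only [pow_zero, mul_one] at heq
    -- no roots at all in the closed disc
    have : p.roots.filter (fun r => ‖r‖ ≤ τ) = 0 := by
      rw [Multiset.eq_zero_iff_forall_notMem]
      intro z hzmem
      rw [Multiset.mem_filter, Polynomial.mem_roots'] at hzmem
      obtain ⟨⟨_, hroot⟩, hzτ⟩ := hzmem
      have heval : p.eval z
          = (∑ i ∈ Finset.range p.natDegree, p.coeff (i + 1) * z ^ (i + 1)) + p.coeff 0 := by
        rw [Polynomial.eval_eq_sum_range, Finset.sum_range_succ']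
        simp
      have hterm : ∀ i, ‖p.coeff (i + 1) * z ^ (i + 1)‖ < M := by
        intro i
        rw [norm_mul, norm_pow]
        calc ‖p.coeff (i + 1)‖ * ‖z‖ ^ (i + 1)
            ≤ ‖p.coeff (i + 1)‖ * τ ^ (i + 1) :=
              mul_le_mul_of_nonneg_left (pow_le_pow_left₀ (norm_nonneg _) hzτ _) (norm_nonneg _)
          _ < M := hlt (i + 1) (Nat.succ_pos i)
      have hrest : ‖∑ i ∈ Finset.range p.natDegree, p.coeff (i + 1) * z ^ (i + 1)‖ < M := by
        rcases Finset.eq_empty_or_nonempty (Finset.range p.natDegree) with he | hne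
        · rw [he, Finset.sum_empty, norm_zero]; exact hM
        · obtain ⟨i, _, hib⟩ := exists_norm_finset_sum_le_of_nonempty hne
            (fun i => p.coeff (i + 1) * z ^ (i + 1))
          exact lt_of_le_of_lt hib (hterm i)
      have : ‖p.eval z‖ = ‖p.coeff 0‖ := by
        rw [heval, norm_add_eq_max_of_norm_ne_norm (by rw [heq]; exact ne_of_lt hrest),
          max_eq_right (by rw [heq]; exact hrest.le)]
      rw [hroot, norm_zero, heq] at this
      exact hM.ne this
    rw [this]; simp
  | succ D ih =>
    intro p M hM hp hle heq hlt
    by_cases hnil : p.roots.filter (fun r => ‖r‖ ≤ τ) = 0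
    · rw [hnil]; simp
    obtain ⟨z, hz⟩ := Multiset.exists_mem_of_ne_zero hnil
    rw [Multiset.mem_filter, Polynomial.mem_roots'] at hz
    obtain ⟨⟨_, hroot⟩, hzτ⟩ := hz
    obtain ⟨q, hq⟩ := (Polynomial.dvd_iff_isRoot.mpr hroot)
    have hqne : q ≠ 0 := by
      rintro rfl
      rw [mul_zero] at hq
      exact hp hq
    -- coefficient recurrence
    have hrec : ∀ k, q.coeff k = p.coeff (k + 1) + z * q.coeff (k + 1) := by
      intro k
      have : p.coeff (k + 1) = ((X - C z) * q).coeff (k + 1) := by rw [← hq]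
      rw [sub_mul, Polynomial.coeff_sub, Polynomial.coeff_X_mul, Polynomial.coeff_C_mul] at this
      rw [this]; ring
    have hMτ : 0 < M / τ := div_pos hM hτ
    -- downward induction bounds on q's coefficients
    have hbound : ∀ m k, q.natDegree + 1 ≤ k + m →
        ‖q.coeff k‖ * τ ^ k ≤ M / τ ∧ (D < k → ‖q.coeff k‖ * τ ^ k < M / τ) := by
      intro m
      induction m with
      | zero =>
        intro k hk
        rw [Polynomial.coeff_eq_zero_of_natDegree_lt (by omega)]
        simp only [norm_zero, zero_mul]
        exact ⟨hMτ.le, fun _ => hMτ⟩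
      | succ m ihm =>
        intro k hk
        by_cases hk2 : q.natDegree + 1 ≤ k
        · rw [Polynomial.coeff_eq_zero_of_natDegree_lt (by omega)]
          simp only [norm_zero, zero_mul]
          exact ⟨hMτ.le, fun _ => hMτ⟩
        · have ih1 := ihm (k + 1) (by omega)
          have hstep : ‖q.coeff k‖ * τ ^ k
              ≤ max (‖p.coeff (k + 1)‖ * τ ^ k) (‖z * q.coeff (k + 1)‖ * τ ^ k) := by
            rw [hrec k, ← max_mul_of_nonneg _ _ (pow_nonneg hτ.le k)]
            exact mul_le_mul_of_nonneg_right (norm_add_le_max _ _) (pow_nonneg hτ.le k)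
          have ht1le : ‖p.coeff (k + 1)‖ * τ ^ k ≤ M / τ := by
            rw [le_div_iff₀ hτ, mul_assoc, ← pow_succ]; exact hle (k + 1)
          have ht2 : ‖z * q.coeff (k + 1)‖ * τ ^ k ≤ ‖q.coeff (k + 1)‖ * τ ^ (k + 1) := by
            rw [norm_mul, pow_succ]
            calc ‖z‖ * ‖q.coeff (k + 1)‖ * τ ^ k ≤ τ * ‖q.coeff (k + 1)‖ * τ ^ k := by
                  exact mul_le_mul_of_nonneg_right
                    (mul_le_mul_of_nonneg_right hzτ (norm_nonneg _)) (pow_nonneg hτ.le k)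
              _ = ‖q.coeff (k + 1)‖ * (τ ^ k * τ) := by ring
          constructor
          · refine le_trans hstep (max_le ht1le (le_trans ht2 ih1.1))
          · intro hDk
            refine lt_of_le_of_lt hstep (max_lt ?_ (lt_of_le_of_lt ht2 (ih1.2 (by omega))))
            rw [lt_div_iff₀ hτ, mul_assoc, ← pow_succ]
            exact hlt (k + 1) (by omega)
    -- equality at D for q
    have heqq : ‖q.coeff D‖ * τ ^ D = M / τ := by
      have h1 : ‖p.coeff (D + 1)‖ * τ ^ D = M / τ := by
        rw [eq_div_iff hτ.ne', mul_assoc, ← pow_succ, heq]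
      have h2 : ‖z * q.coeff (D + 1)‖ * τ ^ D < M / τ := by
        have := (hbound (q.natDegree + 1) (D + 1) (by omega)).2 (by omega)
        calc ‖z * q.coeff (D + 1)‖ * τ ^ D ≤ ‖q.coeff (D + 1)‖ * τ ^ (D + 1) := by
              rw [norm_mul, pow_succ]
              calc ‖z‖ * ‖q.coeff (D + 1)‖ * τ ^ D ≤ τ * ‖q.coeff (D + 1)‖ * τ ^ D :=
                    mul_le_mul_of_nonneg_right
                      (mul_le_mul_of_nonneg_right hzτ (norm_nonneg _)) (pow_nonneg hτ.le D)
                _ = ‖q.coeff (D + 1)‖ * (τ ^ D * τ) := by ring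
          _ < M / τ := this
      have hne : ‖z * q.coeff (D + 1)‖ ≠ ‖p.coeff (D + 1)‖ := by
        intro hcontra
        rw [hcontra, h1] at h2
        exact lt_irrefl _ h2
      rw [hrec D, norm_add_eq_max_of_norm_ne_norm (fun hcontra => hne hcontra.symm),
        max_mul_of_nonneg _ _ (pow_nonneg hτ.le D),
        max_eq_left (by rw [h1]; exact h2.le), h1]
    -- apply induction hypothesis to q
    have hcard : Multiset.card (q.roots.filter (fun r => ‖r‖ ≤ τ)) ≤ D := by
      refine ih q (M / τ) hMτ hqne (fun k => (hbound (q.natDegree + 1) k (by omega)).1) heqq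
        (fun k hk => (hbound (q.natDegree + 1) k (by omega)).2 hk)
    have hroots : p.roots = {z} + q.roots := by
      rw [hq, Polynomial.roots_mul (hq ▸ hp), Polynomial.roots_X_sub_C]
    rw [hroots, Multiset.filter_add, Multiset.card_add]
    have : Multiset.card (Multiset.filter (fun r => ‖r‖ ≤ τ) {z}) ≤ 1 := by
      rw [Multiset.filter_singleton]
      split <;> simp
    omega

end Aux

section Key

variable {K : Type*} [NontriviallyNormedField K] [IsUltrametricDist K] [IsAlgClosed K]

/-- Key approximation lemma: for every truncation level `N ≥ d` there is a finite set `S`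
of at most `d - 1` points of the sphere of radius `τ`, all roots of the truncated series,
such that any point of the sphere where the truncated series is small is close to `S`. -/
lemma aux_key {τ : ℝ} (hτ0 : 0 < τ) (b : ℕ → K) (hb0 : b 0 = 0) (hb1 : b 1 = 1)
    {d : ℕ} (hd1 : 1 < d)
    (hmax : ∀ k, ‖b k‖ * τ ^ k ≤ τ)
    (hdeg : ‖b d‖ * τ ^ d = τ)
    (htop : ∀ k, d < k → ‖b k‖ * τ ^ k < τ)
    (N : ℕ) (hN : d ≤ N) :
    ∃ S : Finset K, S.card ≤ d - 1 ∧
      (∀ r ∈ S, ‖r‖ = τ ∧ (∑ k ∈ Finset.range (N + 1), b k * r ^ k) = 0) ∧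
      (∀ x : K, ‖x‖ = τ → ∀ ε : ℝ, 0 < ε → ε < τ →
        ‖∑ k ∈ Finset.range (N + 1), b k * x ^ k‖ ≤ ε →
        ∃ r ∈ S, ‖x - r‖ ≤ τ * (ε / τ) ^ ((1 : ℝ) / d)) := by
  classical
  have hN0 : 0 < N := lt_of_lt_of_le (by omega) hN
  set Q : K[X] := ∑ k ∈ Finset.range N, C (b (k + 1)) * X ^ k with hQdef
  have hQcoeff : ∀ n, Q.coeff n = if n < N then b (n + 1) else 0 := by
    intro n
    rw [hQdef, Polynomial.finset_sum_coeff]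
    simp only [Polynomial.coeff_C_mul, Polynomial.coeff_X_pow, mul_ite, mul_one, mul_zero,
      Finset.sum_ite_eq, Finset.mem_range]
  have hQeval : ∀ x : K, Q.eval x = ∑ k ∈ Finset.range N, b (k + 1) * x ^ k := by
    intro x
    rw [hQdef, Polynomial.eval_finset_sum]
    simp
  have hPQ : ∀ x : K, (∑ k ∈ Finset.range (N + 1), b k * x ^ k) = x * Q.eval x := by
    intro x
    rw [Finset.sum_range_succ', hQeval, Finset.mul_sum]
    simp only [hb0, zero_mul, add_zero]
    refine Finset.sum_congr rfl fun k _ => by ring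
  have hQ0 : Q.coeff 0 = 1 := by rw [hQcoeff 0, if_pos hN0, hb1]
  have hQne : Q ≠ 0 := fun h => one_ne_zero (hQ0 ▸ h ▸ Polynomial.coeff_zero (n := 0))
  have hQle : ∀ k, ‖Q.coeff k‖ * τ ^ k ≤ 1 := by
    intro k
    rw [hQcoeff k]
    split
    · have h := hmax (k + 1)
      rw [pow_succ, ← mul_assoc] at h
      nlinarith [pow_nonneg hτ0.le k, norm_nonneg (b (k + 1))]
    · simp
  have hQd : ‖Q.coeff (d - 1)‖ * τ ^ (d - 1) = 1 := by
    have hdN : d - 1 < N := by omega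
    have hd' : d - 1 + 1 = d := by omega
    rw [hQcoeff (d - 1), if_pos hdN, hd']
    have h : ‖b d‖ * τ ^ (d - 1) * τ = 1 * τ := by
      rw [one_mul, mul_assoc, ← pow_succ, hd']; exact hdeg
    exact mul_right_cancel₀ hτ0.ne' h
  have hQtop : ∀ k, d - 1 < k → ‖Q.coeff k‖ * τ ^ k < 1 := by
    intro k hk
    rw [hQcoeff k]
    split
    · have h := htop (k + 1) (by omega)
      rw [pow_succ, ← mul_assoc] at h
      nlinarith [pow_nonneg hτ0.le k, norm_nonneg (b (k + 1))]
    · simp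
  have hNS : ∀ z : K, ‖z‖ < τ → Q.eval z ≠ 0 := by
    intro z hz
    refine aux_no_small_roots hτ0 (by rw [hQ0]; exact one_ne_zero) ?_ hz
    intro k
    rw [hQ0, norm_one]
    exact hQle k
  have hRC : Multiset.card (Q.roots.filter (fun r => ‖r‖ ≤ τ)) ≤ d - 1 :=
    aux_roots_card_le hτ0 (d - 1) Q 1 one_pos hQne hQle hQd hQtop
  have hsp : Multiset.card Q.roots = Q.natDegree :=
    (Polynomial.splits_iff_card_roots).mp (IsAlgClosed.splits Q)
  have hfact : C Q.leadingCoeff * (Q.roots.map fun a => X - C a).prod = Q :=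
    Polynomial.C_leadingCoeff_mul_prod_multiset_X_sub_C hsp
  have hevalP : ∀ x : K, ‖Q.eval x‖
      = ‖Q.leadingCoeff‖ * ((Q.roots.map fun r => ‖x - r‖).prod) := by
    intro x
    conv_lhs => rw [← hfact]
    rw [Polynomial.eval_mul, Polynomial.eval_C, norm_mul, Polynomial.eval_multiset_prod,
      Multiset.map_map]
    congr 1
    have hcomp : ((fun p => Polynomial.eval x p) ∘ fun a : K => X - C a)
        = fun a : K => x - a := by
      funext a; simp
    rw [hcomp, ← aux_norm_multiset_prod (fun r : K => x - r) Q.roots]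
  set Rτ : Multiset K := Q.roots.filter (fun r => ‖r‖ ≤ τ) with hRτdef
  set Rb : Multiset K := Q.roots.filter (fun r => ¬ ‖r‖ ≤ τ) with hRbdef
  have hsplitR : Rτ + Rb = Q.roots := Multiset.filter_add_not _ _
  have hRτnorm : ∀ r ∈ Rτ, ‖r‖ = τ := by
    intro r hr
    rw [hRτdef, Multiset.mem_filter, Polynomial.mem_roots'] at hr
    obtain ⟨⟨_, hroot⟩, hrτ⟩ := hr
    rcases lt_or_eq_of_le hrτ with h | h
    · exact absurd hroot (hNS r h)
    · exact h
  have hRτroot : ∀ r ∈ Rτ, Q.eval r = 0 := by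
    intro r hr
    rw [hRτdef, Multiset.mem_filter, Polynomial.mem_roots'] at hr
    exact hr.1.2
  have hCB : ∀ x : K, ‖x‖ ≤ τ →
      ‖Q.eval x‖ = (‖Q.leadingCoeff‖ * (Rb.map fun r => ‖r‖).prod)
        * (Rτ.map fun r => ‖x - r‖).prod := by
    intro x hx
    rw [hevalP x, ← hsplitR, Multiset.map_add, Multiset.prod_add]
    have hmapb : (Rb.map fun r => ‖x - r‖) = Rb.map fun r => ‖r‖ := by
      refine Multiset.map_congr rfl fun r hr => ?_
      rw [hRbdef, Multiset.mem_filter] at hr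
      have hrτ : τ < ‖r‖ := lt_of_not_ge hr.2
      have hne : ‖x‖ ≠ ‖-r‖ := by rw [norm_neg]; exact ne_of_lt (lt_of_le_of_lt hx hrτ)
      rw [sub_eq_add_neg, norm_add_eq_max_of_norm_ne_norm hne, norm_neg,
        max_eq_right (le_of_lt (lt_of_le_of_lt hx hrτ))]
    rw [hmapb]; ring
  set CB : ℝ := ‖Q.leadingCoeff‖ * (Rb.map fun r => ‖r‖).prod with hCBdef
  set m : ℕ := Multiset.card Rτ with hmdef
  have hm : m ≤ d - 1 := hRC
  have hCB1 : CB * τ ^ m = 1 := by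
    have h0 : ‖Q.eval 0‖ = 1 := by
      rw [← Polynomial.coeff_zero_eq_eval_zero, hQ0, norm_one]
    have h1 := hCB 0 (by rw [norm_zero]; exact hτ0.le)
    rw [h0] at h1
    have h2 : (Rτ.map fun r => ‖(0 : K) - r‖).prod = τ ^ m := by
      refine aux_prod_const τ _ Rτ fun r hr => ?_
      rw [zero_sub, norm_neg]
      exact hRτnorm r hr
    rw [h2] at h1
    exact h1.symm
  refine ⟨Rτ.toFinset, le_trans (Multiset.toFinset_card_le _) hm, ?_, ?_⟩
  · intro r hr
    rw [Multiset.mem_toFinset] at hr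
    refine ⟨hRτnorm r hr, ?_⟩
    rw [hPQ r, hRτroot r hr, mul_zero]
  · intro x hx ε hε0 hετ hsmall
    have hxle : ‖x‖ ≤ τ := le_of_eq hx
    have hQx : τ * ‖Q.eval x‖ ≤ ε := by
      have hxq : ‖x * Q.eval x‖ = τ * ‖Q.eval x‖ := by rw [norm_mul, hx]
      rw [hPQ x, hxq] at hsmall
      exact hsmall
    have hprod : (Rτ.map fun r => ‖x - r‖).prod ≤ (ε / τ) * τ ^ m := by
      have h2 : τ * (CB * (Rτ.map fun r => ‖x - r‖).prod) ≤ ε := by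
        rw [← hCB x hxle]; exact hQx
      rw [div_mul_eq_mul_div, le_div_iff₀ hτ0]
      calc (Rτ.map fun r => ‖x - r‖).prod * τ
          = (Rτ.map fun r => ‖x - r‖).prod * τ * (CB * τ ^ m) := by rw [hCB1, mul_one]
        _ = (τ * (CB * (Rτ.map fun r => ‖x - r‖).prod)) * τ ^ m := by ring
        _ ≤ ε * τ ^ m := mul_le_mul_of_nonneg_right h2 (pow_nonneg hτ0.le m)
    have hm1 : 1 ≤ m := by
      by_contra hc
      push_neg at hc
      have hm0 : m = 0 := by omega
      have hRτ0 : Rτ = 0 := Multiset.card_eq_zero.mp hm0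
      have hone : (Rτ.map fun r => ‖x - r‖).prod = 1 := by rw [hRτ0]; simp
      have hQx1 : ‖Q.eval x‖ = CB := by rw [hCB x hxle, hone, mul_one]
      have hCB1' : CB = 1 := by rw [hm0, pow_zero, mul_one] at hCB1; exact hCB1
      rw [hQx1, hCB1', mul_one] at hQx
      exact absurd hQx (not_le.mpr hετ)
    set δ : ℝ := τ * (ε / τ) ^ ((1 : ℝ) / d) with hδdef
    have hδpos : 0 < δ := mul_pos hτ0 (Real.rpow_pos_of_pos (div_pos hε0 hτ0) _)
    have hqpos : 0 < ε / τ := div_pos hε0 hτ0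
    have hq1 : ε / τ ≤ 1 := (div_le_one hτ0).mpr hετ.le
    have hδm : (ε / τ) * τ ^ m ≤ δ ^ m := by
      rw [hδdef, mul_pow, ← Real.rpow_natCast ((ε / τ) ^ ((1 : ℝ) / d)) m,
        ← Real.rpow_mul hqpos.le]
      have hexp : (1 : ℝ) / d * m ≤ 1 := by
        rw [div_mul_eq_mul_div, div_le_one (by positivity)]
        have hmd : (m : ℝ) ≤ (d : ℝ) := by exact_mod_cast (by omega : m ≤ d)
        linarith
      have hge := Real.rpow_le_rpow_of_exponent_ge hqpos hq1 hexp
      rw [Real.rpow_one] at hge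
      calc (ε / τ) * τ ^ m ≤ (ε / τ) ^ ((1 : ℝ) / d * m) * τ ^ m :=
            mul_le_mul_of_nonneg_right hge (pow_nonneg hτ0.le m)
        _ = τ ^ m * (ε / τ) ^ ((1 : ℝ) / d * m) := by ring
    by_contra hno
    push_neg at hno
    have hno' : ∀ r ∈ Rτ, δ < ‖x - r‖ := by
      intro r hr
      exact hno r (Multiset.mem_toFinset.mpr hr)
    obtain ⟨r₀, hr₀⟩ := Multiset.card_pos_iff_exists_mem.mp
      (by omega : 0 < Multiset.card Rτ)
    obtain ⟨T, hT⟩ := Multiset.exists_cons_of_mem hr₀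
    have hTprod : δ ^ Multiset.card T ≤ (T.map fun r => ‖x - r‖).prod := by
      refine aux_pow_card_le_prod δ hδpos.le _ (fun r => norm_nonneg _) T fun r hr => ?_
      exact (hno' r (by rw [hT]; exact Multiset.mem_cons_of_mem hr)).le
    have hcardT : m = Multiset.card T + 1 := by rw [hmdef, hT, Multiset.card_cons]
    have hlt2 : δ ^ m < (Rτ.map fun r => ‖x - r‖).prod := by
      rw [hT, Multiset.map_cons, Multiset.prod_cons, hcardT, pow_succ']
      calc δ * δ ^ Multiset.card T < ‖x - r₀‖ * δ ^ Multiset.card T :=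
            mul_lt_mul_of_pos_right (hno' r₀ hr₀) (pow_pos hδpos _)
        _ ≤ ‖x - r₀‖ * (T.map fun r => ‖x - r‖).prod :=
            mul_le_mul_of_nonneg_left hTprod (norm_nonneg _)
    exact absurd (lt_of_lt_of_le hlt2 (le_trans hprod hδm)) (lt_irrefl _)

end Key

section Init

variable {K : Type*} [NontriviallyNormedField K] [IsUltrametricDist K] [IsAlgClosed K]

/-- Existence of an initial approximate point: a root of the degree-`d` truncation lying
exactly on the sphere of radius `τ`. -/
lemma aux_init {τ : ℝ} (hτ0 : 0 < τ) (b : ℕ → K) (hb0 : b 0 = 0) (hb1 : b 1 = 1)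
    {d : ℕ} (hd1 : 1 < d)
    (hmax : ∀ k, ‖b k‖ * τ ^ k ≤ τ)
    (hdeg : ‖b d‖ * τ ^ d = τ) :
    ∃ x : K, ‖x‖ = τ ∧ (∑ k ∈ Finset.range (d + 1), b k * x ^ k) = 0 := by
  classical
  have hN0 : 0 < d := by omega
  set Q : K[X] := ∑ k ∈ Finset.range d, C (b (k + 1)) * X ^ k with hQdef
  have hQcoeff : ∀ n, Q.coeff n = if n < d then b (n + 1) else 0 := by
    intro n
    rw [hQdef, Polynomial.finset_sum_coeff]
    simp only [Polynomial.coeff_C_mul, Polynomial.coeff_X_pow, mul_ite, mul_one, mul_zero,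
      Finset.sum_ite_eq, Finset.mem_range]
  have hQeval : ∀ x : K, Q.eval x = ∑ k ∈ Finset.range d, b (k + 1) * x ^ k := by
    intro x
    rw [hQdef, Polynomial.eval_finset_sum]
    simp
  have hPQ : ∀ x : K, (∑ k ∈ Finset.range (d + 1), b k * x ^ k) = x * Q.eval x := by
    intro x
    rw [Finset.sum_range_succ', hQeval, Finset.mul_sum]
    simp only [hb0, zero_mul, add_zero]
    refine Finset.sum_congr rfl fun k _ => by ring
  have hQ0 : Q.coeff 0 = 1 := by rw [hQcoeff 0, if_pos hN0, hb1]
  have hble : ∀ k : ℕ, ‖b (k + 1)‖ * τ ^ k ≤ 1 := by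
    intro k
    have h := hmax (k + 1)
    rw [pow_succ, ← mul_assoc] at h
    nlinarith [pow_nonneg hτ0.le k, norm_nonneg (b (k + 1))]
  have hQle : ∀ k, ‖Q.coeff k‖ * τ ^ k ≤ 1 := by
    intro k
    rw [hQcoeff k]
    split
    · exact hble k
    · simp
  have hd' : d - 1 + 1 = d := by omega
  have hQd : ‖b d‖ * τ ^ (d - 1) = 1 := by
    have h : ‖b d‖ * τ ^ (d - 1) * τ = 1 * τ := by
      rw [one_mul, mul_assoc, ← pow_succ, hd']; exact hdeg
    exact mul_right_cancel₀ hτ0.ne' h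
  have hbd0 : b d ≠ 0 := by
    intro h
    rw [h, norm_zero, zero_mul] at hQd
    exact one_ne_zero hQd.symm
  have hNS : ∀ z : K, ‖z‖ < τ → Q.eval z ≠ 0 := by
    intro z hz
    refine aux_no_small_roots hτ0 (by rw [hQ0]; exact one_ne_zero) ?_ hz
    intro k
    rw [hQ0, norm_one]
    exact hQle k
  -- Q has natDegree d - 1
  have hdeg_le : Q.natDegree ≤ d - 1 := by
    refine Polynomial.natDegree_sum_le_of_forall_le _ _ fun k hk => ?_
    refine le_trans (Polynomial.natDegree_C_mul_le _ _) ?_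
    rw [Polynomial.natDegree_X_pow]
    rw [Finset.mem_range] at hk
    omega
  have hcoeffd : Q.coeff (d - 1) = b d := by
    rw [hQcoeff (d - 1), if_pos (by omega)]
    congr 1
  have hdeg_ge : d - 1 ≤ Q.natDegree :=
    Polynomial.le_natDegree_of_ne_zero (by rw [hcoeffd]; exact hbd0)
  have hQdeg : Q.natDegree = d - 1 := le_antisymm hdeg_le hdeg_ge
  have hQne : Q ≠ 0 := fun h => one_ne_zero (hQ0 ▸ h ▸ Polynomial.coeff_zero (n := 0))
  have hsp : Multiset.card Q.roots = Q.natDegree :=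
    (Polynomial.splits_iff_card_roots).mp (IsAlgClosed.splits Q)
  have hroots_pos : 0 < Multiset.card Q.roots := by rw [hsp, hQdeg]; omega
  obtain ⟨z, hz⟩ := Multiset.card_pos_iff_exists_mem.mp hroots_pos
  rw [Polynomial.mem_roots'] at hz
  obtain ⟨_, hroot⟩ := hz
  have hzle : ‖z‖ ≤ τ := by
    by_contra hgt
    push_neg at hgt
    have hs1 : (1 : ℝ) < ‖z‖ / τ := (one_lt_div hτ0).mpr hgt
    have hspos : 0 < ‖z‖ := lt_trans hτ0 hgt
    set B : ℝ := ‖b d‖ * ‖z‖ ^ (d - 1) with hBdef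
    have hBpos : 0 < B := by
      have : 0 < ‖b d‖ := norm_pos_iff.mpr hbd0
      positivity
    have heval : Q.eval z
        = (∑ k ∈ Finset.range (d - 1), b (k + 1) * z ^ k) + b d * z ^ (d - 1) := by
      rw [hQeval z]
      conv_lhs => rw [← hd']
      rw [Finset.sum_range_succ, hd']
    have hB' : B = (‖b d‖ * τ ^ (d - 1)) * (‖z‖ / τ) ^ (d - 1) := by
      rw [hBdef, mul_assoc, ← mul_pow]
      congr 2
      field_simp
    have hterm : ∀ k ∈ Finset.range (d - 1), ‖b (k + 1) * z ^ k‖ < B := by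
      intro k hk
      rw [Finset.mem_range] at hk
      rw [norm_mul, norm_pow]
      have h1 : ‖b (k + 1)‖ * ‖z‖ ^ k = (‖b (k + 1)‖ * τ ^ k) * (‖z‖ / τ) ^ k := by
        rw [mul_assoc, ← mul_pow]
        congr 2
        field_simp
      rw [h1, hB', hQd, one_mul]
      calc (‖b (k + 1)‖ * τ ^ k) * (‖z‖ / τ) ^ k ≤ 1 * (‖z‖ / τ) ^ k :=
            mul_le_mul_of_nonneg_right (hble k) (by positivity)
        _ = (‖z‖ / τ) ^ k := one_mul _
        _ < (‖z‖ / τ) ^ (d - 1) := pow_lt_pow_right₀ hs1 hk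
    have hrest : ‖∑ k ∈ Finset.range (d - 1), b (k + 1) * z ^ k‖ < B := by
      rcases Finset.eq_empty_or_nonempty (Finset.range (d - 1)) with he | hne
      · rw [he, Finset.sum_empty, norm_zero]; exact hBpos
      · obtain ⟨i, hi, hib⟩ := exists_norm_finset_sum_le_of_nonempty hne
          (fun k => b (k + 1) * z ^ k)
        exact lt_of_le_of_lt hib (hterm i hi)
    have hevalnorm : ‖Q.eval z‖ = B := by
      have hBnorm : ‖b d * z ^ (d - 1)‖ = B := by rw [norm_mul, norm_pow]
      rw [heval, norm_add_eq_max_of_norm_ne_norm (by rw [hBnorm]; exact ne_of_lt hrest),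
        hBnorm, max_eq_right (by rw [hBnorm] at *; exact hrest.le)]
    rw [hroot, norm_zero] at hevalnorm
    exact hBpos.ne hevalnorm
  have hzτ : ‖z‖ = τ := by
    rcases lt_or_eq_of_le hzle with h | h
    · exact absurd hroot (hNS z h)
    · exact h
  exact ⟨z, hzτ, by rw [hPQ z, hroot, mul_zero]⟩

end Init

section Deriv

variable {K : Type*} [NontriviallyNormedField K] [IsUltrametricDist K] [CompleteSpace K]

/-- Derivative of `f` at points of the closed disc, with norm `1`. -/
lemma aux_deriv (lam : K) (hlam : ‖lam‖ = 1) (a : ℕ → K) (ha0 : a 0 = 0) (ha1 : a 1 = 0)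
    {A τ : ℝ} (hApos : 0 < A) (hτ0 : 0 < τ) (hAτ : A * τ < 1)
    (haA : ∀ i : ℕ, 2 ≤ i → ‖a i‖ ≤ A ^ (i - 1))
    (f : K → K) (hf : ∀ x : K, f x = lam * x + ∑' i : ℕ, a i * x ^ i)
    (hfc : ∀ x : K, ‖x‖ ≤ τ → Summable fun i : ℕ => a i * x ^ i)
    {z : K} (hz : ‖z‖ ≤ τ) :
    ∃ L : K, HasDerivAt f L z ∧ ‖L‖ = 1 := by
  have hAτ0 : 0 < A * τ := by positivity
  have hkey : ∀ m : ℕ, ‖((m + 2 : ℕ) : K) * a (m + 2) * z ^ (m + 2 - 1)‖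
      ≤ (A * τ) ^ (m + 1) := by
    intro m
    have h1 : ‖((m + 2 : ℕ) : K) * a (m + 2) * z ^ (m + 2 - 1)‖
        ≤ ‖a (m + 2)‖ * ‖z‖ ^ (m + 1) := by
      rw [norm_mul, norm_mul, norm_pow]
      have hcast := IsUltrametricDist.norm_natCast_le_one K (m + 2)
      have hz1 : (m + 2 - 1) = m + 1 := by omega
      rw [hz1, mul_assoc]
      exact mul_le_of_le_one_left (by positivity) hcast
    refine le_trans h1 (le_trans (mul_le_mul (by simpa using haA (m + 2) (by omega))
      (pow_le_pow_left₀ (norm_nonneg z) hz _) (pow_nonneg (norm_nonneg z) _)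
      (pow_nonneg hApos.le _)) ?_)
    rw [← mul_pow]
  -- summability of the derivative series
  have hsumD : Summable fun i : ℕ => (i : K) * a i * z ^ (i - 1) := by
    refine Summable.of_norm_bounded (g := fun i => (A * τ)⁻¹ * (A * τ) ^ i)
      ((summable_geometric_of_lt_one hAτ0.le hAτ).mul_left _) ?_
    intro i
    show ‖(i : K) * a i * z ^ (i - 1)‖ ≤ (A * τ)⁻¹ * (A * τ) ^ i
    match i with
    | 0 => simp only [Nat.cast_zero, zero_mul, norm_zero]; positivity
    | 1 => simp only [ha1, mul_zero, zero_mul, norm_zero]; positivity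
    | (m + 2) =>
      refine le_trans (hkey m) ?_
      rw [inv_mul_eq_div, le_div_iff₀ hAτ0, ← pow_succ]
  set S3 : K := ∑' i : ℕ, (i : K) * a i * z ^ (i - 1) with hS3def
  have hS3 : ‖S3‖ ≤ A * τ := by
    rw [hS3def]
    refine norm_tsum_le_of_forall_le_of_nonneg hAτ0.le ?_
    intro i
    show ‖(i : K) * a i * z ^ (i - 1)‖ ≤ A * τ
    match i with
    | 0 => simp only [Nat.cast_zero, zero_mul, norm_zero]; positivity
    | 1 => simp only [ha1, mul_zero, zero_mul, norm_zero]; positivity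
    | (m + 2) =>
      refine le_trans (hkey m) ?_
      calc (A * τ) ^ (m + 1) ≤ (A * τ) ^ 1 :=
            pow_le_pow_of_le_one hAτ0.le hAτ.le (by omega)
        _ = A * τ := pow_one _
  set L : K := lam + S3 with hLdef
  have hLnorm : ‖L‖ = 1 := by
    rw [hLdef, norm_add_eq_max_of_norm_ne_norm
      (by rw [hlam]; exact (ne_of_lt (lt_of_le_of_lt hS3 hAτ)).symm),
      hlam, max_eq_left (le_of_lt (lt_of_le_of_lt hS3 hAτ))]
  refine ⟨L, ?_, hLnorm⟩
  rw [hasDerivAt_iff_isLittleO_nhds_zero, Asymptotics.isLittleO_iff]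
  intro c hc
  -- the core quadratic estimate
  have hcore : ∀ h : K, ‖h‖ ≤ τ → ‖f (z + h) - f z - h * L‖ ≤ (A * ‖h‖) * ‖h‖ := by
    intro h hh
    have hw : ‖z + h‖ ≤ τ := le_trans (norm_add_le_max z h) (max_le hz hh)
    have hs1 : Summable fun i : ℕ => a i * (z + h) ^ i := hfc _ hw
    have hs2 : Summable fun i : ℕ => a i * z ^ i := hfc _ hz
    have hs4 : Summable fun i : ℕ => ((i : K) * a i * z ^ (i - 1)) * h := hsumD.mul_right h
    -- the auxiliary sequence T
    set T : ℕ → K := fun i => Nat.rec (0 : K)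
      (fun i ti => (z + h) * ti + (i : K) * z ^ (i - 1)) i with hTdef
    have hT0 : T 0 = 0 := rfl
    have hTs : ∀ i : ℕ, T (i + 1) = (z + h) * T i + (i : K) * z ^ (i - 1) := fun i => rfl
    have hTid : ∀ i : ℕ, (z + h) ^ i - z ^ i - (i : K) * z ^ (i - 1) * h = h ^ 2 * T i := by
      intro i
      induction i with
      | zero => rw [hT0]; simp
      | succ i ih =>
        match i, ih with
        | 0, _ =>
          rw [hTs 0, hT0]
          norm_num
        | (m + 1), ih =>
          have hm1 : m + 1 - 1 = m := by omega
          have hm2 : m + 2 - 1 = m + 1 := by omega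
          rw [hm1] at ih
          rw [hTs (m + 1), hm1, hm2]
          have hprev : (z + h) ^ (m + 1)
              = z ^ (m + 1) + ((m + 1 : ℕ) : K) * z ^ m * h + h ^ 2 * T (m + 1) := by
            rw [← ih]; ring
          calc (z + h) ^ (m + 2) - z ^ (m + 2) - ((m + 2 : ℕ) : K) * z ^ (m + 1) * h
              = (z + h) * (z + h) ^ (m + 1) - z ^ (m + 2)
                - ((m + 2 : ℕ) : K) * z ^ (m + 1) * h := by ring
            _ = h ^ 2 * ((z + h) * T (m + 1) + ((m + 1 : ℕ) : K) * z ^ m) := by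
                rw [hprev]; push_cast; ring
    have hTbd : ∀ i : ℕ, ‖T i‖ * τ ^ 2 ≤ τ ^ i := by
      intro i
      induction i with
      | zero => rw [hT0]; simp
      | succ i ih =>
        match i, ih with
        | 0, _ =>
          rw [hTs 0, hT0]
          simp only [mul_zero, Nat.cast_zero, zero_mul, add_zero, norm_zero]
          positivity
        | (m + 1), ih =>
          rw [hTs (m + 1)]
          refine le_trans (mul_le_mul_of_nonneg_right (norm_add_le_max _ _)
            (by positivity : (0:ℝ) ≤ τ ^ 2)) ?_
          rw [max_mul_of_nonneg _ _ (by positivity : (0:ℝ) ≤ τ ^ 2)]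
          refine max_le ?_ ?_
          · rw [norm_mul]
            calc ‖z + h‖ * ‖T (m + 1)‖ * τ ^ 2 ≤ τ * (‖T (m + 1)‖ * τ ^ 2) := by
                  rw [mul_assoc]
                  exact mul_le_mul_of_nonneg_right hw (by positivity)
              _ ≤ τ * τ ^ (m + 1) := mul_le_mul_of_nonneg_left ih hτ0.le
              _ = τ ^ (m + 2) := by ring
          · rw [norm_mul, norm_pow]
            have hm1 : m + 1 - 1 = m := by omega
            rw [hm1]
            have h1 : ‖((m + 1 : ℕ) : K)‖ * ‖z‖ ^ m ≤ τ ^ m := by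
              refine le_trans (mul_le_of_le_one_left (by positivity)
                (IsUltrametricDist.norm_natCast_le_one K (m + 1))) ?_
              exact pow_le_pow_left₀ (norm_nonneg z) hz m
            calc ‖((m + 1 : ℕ) : K)‖ * ‖z‖ ^ m * τ ^ 2 ≤ τ ^ m * τ ^ 2 :=
                  mul_le_mul_of_nonneg_right h1 (by positivity)
              _ = τ ^ (m + 2) := by ring
    have hfz : f (z + h) - f z - h * L
        = ∑' i : ℕ, (a i * (z + h) ^ i - a i * z ^ i - ((i : K) * a i * z ^ (i - 1)) * h) := by
      have e1 : ∑' i : ℕ, (a i * (z + h) ^ i - a i * z ^ i - ((i : K) * a i * z ^ (i - 1)) * h)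
          = ((∑' i : ℕ, a i * (z + h) ^ i) - ∑' i : ℕ, a i * z ^ i)
            - (∑' i : ℕ, (i : K) * a i * z ^ (i - 1)) * h := by
        rw [Summable.tsum_sub (hs1.sub hs2) hs4, Summable.tsum_sub hs1 hs2, tsum_mul_right]
      rw [e1, hf (z + h), hf z, hLdef, hS3def]
      ring
    rw [hfz]
    refine norm_tsum_le_of_forall_le_of_nonneg (by positivity) ?_
    intro i
    have hterm : a i * (z + h) ^ i - a i * z ^ i - ((i : K) * a i * z ^ (i - 1)) * h
        = a i * (h ^ 2 * T i) := by
      rw [← hTid i]; ring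
    rw [hterm, norm_mul, norm_mul, norm_pow]
    match i with
    | 0 =>
      simp only [ha0, norm_zero, zero_mul]
      positivity
    | 1 =>
      simp only [ha1, norm_zero, zero_mul]
      positivity
    | (m + 2) =>
      have hTle : ‖T (m + 2)‖ ≤ τ ^ m := by
        have hbd := hTbd (m + 2)
        have hτ2 : (0:ℝ) < τ ^ 2 := by positivity
        have heq2 : τ ^ (m + 2) = τ ^ m * τ ^ 2 := by ring
        rw [heq2] at hbd
        exact le_of_mul_le_mul_right hbd hτ2
      have h1 : ‖a (m + 2)‖ * ‖T (m + 2)‖ ≤ A := by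
        calc ‖a (m + 2)‖ * ‖T (m + 2)‖ ≤ A ^ (m + 1) * τ ^ m :=
              mul_le_mul (by simpa using haA (m + 2) (by omega)) hTle (norm_nonneg _)
                (pow_nonneg hApos.le _)
          _ = A * (A * τ) ^ m := by rw [mul_pow]; ring
          _ ≤ A * 1 := mul_le_mul_of_nonneg_left (pow_le_one₀ hAτ0.le hAτ.le) hApos.le
          _ = A := mul_one A
      calc ‖a (m + 2)‖ * (‖h‖ ^ 2 * ‖T (m + 2)‖)
          = (‖a (m + 2)‖ * ‖T (m + 2)‖) * ‖h‖ ^ 2 := by ring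
        _ ≤ A * ‖h‖ ^ 2 := mul_le_mul_of_nonneg_right h1 (by positivity)
        _ = (A * ‖h‖) * ‖h‖ := by ring
  -- conclude the little-o bound
  have hδpos : 0 < min τ (c / A) := lt_min hτ0 (by positivity)
  filter_upwards [Metric.ball_mem_nhds (0 : K) hδpos] with h hh
  rw [mem_ball_zero_iff] at hh
  have hhτ : ‖h‖ ≤ τ := le_of_lt (lt_of_lt_of_le hh (min_le_left _ _))
  have hhc : A * ‖h‖ ≤ c := by
    have hcc : ‖h‖ ≤ c / A := le_of_lt (lt_of_lt_of_le hh (min_le_right _ _))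
    rw [le_div_iff₀ hApos] at hcc
    linarith
  calc ‖f (z + h) - f z - h • L‖ = ‖f (z + h) - f z - h * L‖ := by rw [smul_eq_mul]
    _ ≤ (A * ‖h‖) * ‖h‖ := hcore h hhτ
    _ ≤ c * ‖h‖ := mul_le_mul_of_nonneg_right hhc (norm_nonneg h)

end Deriv

lemma aux_norm_sub_le_max {K : Type*} [NontriviallyNormedField K] [IsUltrametricDist K]
    (a b : K) : ‖a - b‖ ≤ max ‖a‖ ‖b‖ := by
  rw [sub_eq_add_neg]
  simpa [norm_neg] using IsUltrametricDist.norm_add_le_max a (-b)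

/-- Let `K` be a complete algebraically closed non-Archimedean valued field,
`f(x) = λx + ∑_{i ≥ 2} aᵢ xⁱ` with `‖λ‖ = 1` and `a = sup_{i ≥ 2} ‖aᵢ‖^{1/(i-1)}`, and
suppose `f` is linearizable with conjugacy `g = x + ∑_{k ≥ 2} b_k xᵏ`.  Let `τ < 1/a` be
such that `g` has Weierstrass degree `1` on the open disc of radius `τ` and degree `d > 1`
on the closed disc of radius `τ` (expressed via the coefficients: `‖b_k‖τᵏ ≤ ‖b₁‖τ` for all
`k`, with the maximum attained at `k = d` and at no larger index).  Then `f` has a periodic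
point `xhat` on the sphere `‖xhat‖ = τ` of period `κ ≤ d`, and `xhat` is indifferent:
`‖(f^κ)'(xhat)‖ = 1`. -/
theorem periodic_point_on_boundary {K : Type*} [NontriviallyNormedField K]
    [IsUltrametricDist K] [CompleteSpace K] [IsAlgClosed K]
    (lam : K) (hlam : ‖lam‖ = 1)
    (a : ℕ → K) (ha0 : a 0 = 0) (ha1 : a 1 = 0)
    (A : ℝ)
    (hA : IsLUB (Set.range fun i : {i : ℕ // 2 ≤ i} =>
      ‖a (i : ℕ)‖ ^ ((1 : ℝ) / ((i : ℕ) - 1 : ℝ))) A)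
    (f : K → K) (hf : ∀ x : K, f x = lam * x + ∑' i : ℕ, a i * x ^ i)
    (hfc : ∀ x : K, ‖x‖ < 1 / A → Summable fun i : ℕ => a i * x ^ i)
    (τ : ℝ) (hτ0 : 0 < τ) (hτA : τ < 1 / A)
    (b : ℕ → K) (hb0 : b 0 = 0) (hb1 : b 1 = 1)
    (g : K → K) (hg : ∀ x : K, g x = ∑' k : ℕ, b k * x ^ k)
    (hgc : ∀ x : K, ‖x‖ ≤ τ → Summable fun k : ℕ => b k * x ^ k)
    (hconj : ∀ x : K, ‖x‖ ≤ τ → g (f x) = lam * g x)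
    (d : ℕ) (hd1 : 1 < d)
    (hmax : ∀ k : ℕ, ‖b k‖ * τ ^ k ≤ ‖b 1‖ * τ)
    (hdeg : ‖b d‖ * τ ^ d = ‖b 1‖ * τ)
    (htop : ∀ k : ℕ, d < k → ‖b k‖ * τ ^ k < ‖b 1‖ * τ) :
    ∃ xhat : K, ‖xhat‖ = τ ∧ ∃ κ : ℕ, 1 ≤ κ ∧ κ ≤ d ∧ f^[κ] xhat = xhat ∧
      ∃ L : K, HasDerivAt (f^[κ]) L xhat ∧ ‖L‖ = 1 := by

  classical
  -- basic constants
  have hA0 : 0 ≤ A := by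
    have h2 := hA.1 (Set.mem_range_self (⟨2, le_refl 2⟩ : {i : ℕ // 2 ≤ i}))
    exact le_trans (Real.rpow_nonneg (norm_nonneg _) _) h2
  have hApos : 0 < A := by
    rcases hA0.lt_or_eq with h | h
    · exact h
    · exfalso
      rw [← h] at hτA
      norm_num at hτA
      linarith
  have hAτ : A * τ < 1 := by
    rw [mul_comm]
    rw [lt_div_iff₀ hApos] at hτA
    exact hτA
  have haA : ∀ i : ℕ, 2 ≤ i → ‖a i‖ ≤ A ^ (i - 1) := by
    intro i hi
    have hmem := hA.1 (Set.mem_range_self (⟨i, hi⟩ : {i : ℕ // 2 ≤ i}))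
    have hι : (0:ℝ) < (i:ℝ) - 1 := by
      have h2 : (2:ℝ) ≤ (i:ℝ) := by exact_mod_cast hi
      linarith
    have hid : (‖a i‖ ^ ((1:ℝ)/((i:ℝ) - 1))) ^ ((i:ℝ) - 1) = ‖a i‖ := by
      rw [← Real.rpow_mul (norm_nonneg _), one_div_mul_cancel hι.ne', Real.rpow_one]
    have h2 : ‖a i‖ ≤ A ^ ((i:ℝ) - 1) := by
      rw [← hid]
      exact Real.rpow_le_rpow (Real.rpow_nonneg (norm_nonneg _) _) hmem hι.le
    have h3 : A ^ ((i:ℝ) - 1) = A ^ (i - 1 : ℕ) := by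
      rw [← Real.rpow_natCast A (i - 1)]
      congr 1
      rw [Nat.cast_sub (by omega), Nat.cast_one]
    rw [← h3]
    exact h2
  -- b facts
  have hbmax : ∀ k, ‖b k‖ * τ ^ k ≤ τ := by
    intro k
    have h := hmax k
    rwa [hb1, norm_one, one_mul] at h
  have hbdeg : ‖b d‖ * τ ^ d = τ := by
    have h := hdeg
    rwa [hb1, norm_one, one_mul] at h
  have hbtop : ∀ k, d < k → ‖b k‖ * τ ^ k < τ := by
    intro k hk
    have h := htop k hk
    rwa [hb1, norm_one, one_mul] at h
  -- there is an element of norm exactly τ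
  have hd' : d - 1 + 1 = d := by omega
  have hbd1 : ‖b d‖ * τ ^ (d - 1) = 1 := by
    have h : ‖b d‖ * τ ^ (d - 1) * τ = 1 * τ := by
      rw [one_mul, mul_assoc, ← pow_succ, hd']
      exact hbdeg
    exact mul_right_cancel₀ hτ0.ne' h
  have hbdpos : 0 < ‖b d‖ := by
    rcases (norm_nonneg (b d)).lt_or_eq with h | h
    · exact h
    · exfalso
      rw [← h, zero_mul] at hbd1
      exact one_ne_zero hbd1.symm
  obtain ⟨t0, ht0⟩ := IsAlgClosed.exists_pow_nat_eq (b d)⁻¹ (n := d - 1) (by omega)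
  have htτ : ‖t0‖ = τ := by
    have h1 : ‖t0‖ ^ (d - 1) = τ ^ (d - 1) := by
      rw [← norm_pow, ht0, norm_inv]
      rw [inv_eq_iff_eq_inv, eq_comm, inv_eq_iff_eq_inv, eq_comm]
      field_simp
      linarith [hbd1]
    exact (pow_left_inj₀ (norm_nonneg t0) hτ0.le (by omega)).mp h1
  -- coefficient decay
  have htend : Filter.Tendsto (fun k => ‖b k‖ * τ ^ k) Filter.atTop (nhds 0) := by
    have h1 := (hgc t0 (le_of_eq htτ)).tendsto_atTop_zero
    have h2 := tendsto_zero_iff_norm_tendsto_zero.mp h1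
    refine h2.congr fun k => ?_
    rw [norm_mul, norm_pow, htτ]
  have htail : ∀ ε : ℝ, 0 < ε → ∃ N : ℕ, d ≤ N ∧ ∀ k, N < k → ‖b k‖ * τ ^ k ≤ ε := by
    intro ε hε
    have h1 : ∀ᶠ k in Filter.atTop, ‖b k‖ * τ ^ k < ε := htend.eventually (gt_mem_nhds hε)
    obtain ⟨N0, hN0⟩ := Filter.eventually_atTop.mp h1
    exact ⟨max N0 d, le_max_right _ _, fun k hk => (hN0 k (by omega)).le⟩
  -- tail bound for g
  have hgtail : ∀ (x : K), ‖x‖ ≤ τ → ∀ (N : ℕ) (C : ℝ), 0 ≤ C →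
      (∀ k, N < k → ‖b k‖ * τ ^ k ≤ C) →
      ‖g x - ∑ k ∈ Finset.range (N + 1), b k * x ^ k‖ ≤ C := by
    intro x hx N C hC0 hC
    rw [hg x]
    have hsx := hgc x hx
    rw [← Summable.sum_add_tsum_nat_add (N + 1) hsx, add_sub_cancel_left]
    refine norm_tsum_le_of_forall_le_of_nonneg hC0 ?_
    intro i
    calc ‖b (i + (N + 1)) * x ^ (i + (N + 1))‖ ≤ ‖b (i + (N + 1))‖ * τ ^ (i + (N + 1)) := by
          rw [norm_mul, norm_pow]
          exact mul_le_mul_of_nonneg_left (pow_le_pow_left₀ (norm_nonneg x) hx _)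
            (norm_nonneg _)
      _ ≤ C := hC _ (by omega)
  -- g is 1-Lipschitz on the closed disc
  have hgLip : ∀ u v : K, ‖u‖ ≤ τ → ‖v‖ ≤ τ → ‖g u - g v‖ ≤ ‖u - v‖ := by
    intro u v hu hv
    rw [hg u, hg v, ← Summable.tsum_sub (hgc u hu) (hgc v hv)]
    refine norm_tsum_le_of_forall_le_of_nonneg (norm_nonneg _) ?_
    intro k
    match k with
    | 0 => simp
    | (m + 1) =>
      rw [← mul_sub, norm_mul]
      have h1 := aux_pow_sub hu hv m
      have h2 : ‖b (m + 1)‖ * τ ^ m ≤ 1 := by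
        have h := hbmax (m + 1)
        rw [pow_succ, ← mul_assoc] at h
        nlinarith [pow_nonneg hτ0.le m, norm_nonneg (b (m + 1))]
      calc ‖b (m + 1)‖ * ‖u ^ (m + 1) - v ^ (m + 1)‖
          ≤ ‖b (m + 1)‖ * (‖u - v‖ * τ ^ m) :=
            mul_le_mul_of_nonneg_left h1 (norm_nonneg _)
        _ = (‖b (m + 1)‖ * τ ^ m) * ‖u - v‖ := by ring
        _ ≤ 1 * ‖u - v‖ := mul_le_mul_of_nonneg_right h2 (norm_nonneg _)
        _ = ‖u - v‖ := one_mul _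
  -- f preserves the sphere
  have hfc' : ∀ x : K, ‖x‖ ≤ τ → Summable fun i : ℕ => a i * x ^ i :=
    fun x hx => hfc x (lt_of_le_of_lt hx hτA)
  have hfsphere : ∀ x : K, ‖x‖ = τ → ‖f x‖ = τ := by
    intro x hx
    rw [hf x]
    have htb : ‖∑' i : ℕ, a i * x ^ i‖ ≤ (A * τ) * τ := by
      refine norm_tsum_le_of_forall_le_of_nonneg (by positivity) ?_
      intro i
      match i with
      | 0 => simp only [ha0, zero_mul, norm_zero]; positivity
      | 1 => simp only [ha1, zero_mul, norm_zero]; positivity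
      | (m + 2) =>
        rw [norm_mul, norm_pow, hx]
        calc ‖a (m + 2)‖ * τ ^ (m + 2) ≤ A ^ (m + 1) * τ ^ (m + 2) :=
              mul_le_mul_of_nonneg_right (by simpa using haA (m + 2) (by omega))
                (by positivity)
          _ = (A * τ) ^ (m + 1) * τ := by rw [mul_pow]; ring
          _ ≤ (A * τ) ^ 1 * τ :=
              mul_le_mul_of_nonneg_right
                (pow_le_pow_of_le_one (by positivity) hAτ.le (by omega)) hτ0.le
          _ = (A * τ) * τ := by rw [pow_one]
    have hlx : ‖lam * x‖ = τ := by rw [norm_mul, hlam, one_mul, hx]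
    have hlt : ‖∑' i : ℕ, a i * x ^ i‖ < τ := by
      refine lt_of_le_of_lt htb ?_
      nlinarith
    rw [norm_add_eq_max_of_norm_ne_norm (by rw [hlx]; exact (ne_of_lt hlt).symm), hlx,
      max_eq_left (by rw [hlx] at *; exact hlt.le)]
  have hZiter : ∀ (n : ℕ) (x : K), ‖x‖ = τ → g x = 0 →
      (‖f^[n] x‖ = τ ∧ g (f^[n] x) = 0) := by
    intro n
    induction n with
    | zero => intro x hx hgx; simpa using ⟨hx, hgx⟩
    | succ n ih =>
      intro x hx hgx
      rw [Function.iterate_succ_apply']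
      obtain ⟨h1, h2⟩ := ih x hx hgx
      exact ⟨hfsphere _ h1, by rw [hconj _ (le_of_eq h1), h2, mul_zero]⟩
  -- initial point
  obtain ⟨x0, hx0τ, hx0root⟩ := aux_init hτ0 b hb0 hb1 hd1 hbmax hbdeg
  obtain ⟨N1, hN1d, hN1tail⟩ := htail (τ/2) (by positivity)
  have hPN1x0 : ‖∑ k ∈ Finset.range (N1 + 1), b k * x0 ^ k‖ < τ := by
    have hsub : (Finset.range (d + 1)) ⊆ Finset.range (N1 + 1) :=
      Finset.range_subset_range.mpr (by omega)
    have hsd : ∑ k ∈ Finset.range (N1 + 1) \ Finset.range (d + 1), b k * x0 ^ k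
        = ∑ k ∈ Finset.range (N1 + 1), b k * x0 ^ k
          - ∑ k ∈ Finset.range (d + 1), b k * x0 ^ k :=
      Finset.sum_sdiff_eq_sub hsub
    rw [hx0root, sub_zero] at hsd
    rw [← hsd]
    rcases Finset.eq_empty_or_nonempty (Finset.range (N1 + 1) \ Finset.range (d + 1))
      with he | hne
    · rw [he, Finset.sum_empty, norm_zero]; exact hτ0
    · obtain ⟨i, hi, hib⟩ := exists_norm_finset_sum_le_of_nonempty hne
        (fun k => b k * x0 ^ k)
      refine lt_of_le_of_lt hib ?_
      rw [Finset.mem_sdiff, Finset.mem_range, Finset.mem_range] at hi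
      rw [norm_mul, norm_pow, hx0τ]
      exact hbtop i (by omega)
  set ε1 : ℝ := max (‖∑ k ∈ Finset.range (N1 + 1), b k * x0 ^ k‖) (τ/2) with hε1def
  have hε1pos : 0 < ε1 := lt_of_lt_of_le (by positivity) (le_max_right _ _)
  have hε1τ : ε1 < τ := max_lt hPN1x0 (by linarith)
  obtain ⟨S1, hS1card, hS1mem, hS1close⟩ :=
    aux_key hτ0 b hb0 hb1 hd1 hbmax hbdeg hbtop N1 hN1d
  obtain ⟨x1, hx1S, hx1close⟩ := hS1close x0 hx0τ ε1 hε1pos hε1τ (le_max_left _ _)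
  obtain ⟨hx1τ, hx1root⟩ := hS1mem x1 hx1S
  have hgx1 : ‖g x1‖ ≤ τ/2 := by
    have h1 := hgtail x1 (le_of_eq hx1τ) N1 (τ/2) (by positivity) hN1tail
    rwa [hx1root, sub_zero] at h1
  -- the geometric sequence of bounds
  set β : ℕ → ℝ := fun n => τ * (1/2 : ℝ) ^ (n + 1) with hβdef
  have hβpos : ∀ n, 0 < β n := fun n => by simp only [hβdef]; positivity
  have hβτ : ∀ n, β n < τ := by
    intro n
    simp only [hβdef]
    have : (1/2 : ℝ) ^ (n + 1) < 1 := pow_lt_one₀ (by norm_num) (by norm_num) (by omega)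
    nlinarith
  have hβmono : ∀ n, β (n + 1) ≤ β n := by
    intro n
    simp only [hβdef]
    exact mul_le_mul_of_nonneg_left
      (pow_le_pow_of_le_one (by norm_num) (by norm_num) (by omega)) hτ0.le
  have hgx10 : ‖g x1‖ ≤ β 0 := by
    have hβ0 : β 0 = τ/2 := by simp only [hβdef]; ring
    rw [hβ0]
    exact hgx1
  -- one improvement step
  have hstep : ∀ (n : ℕ) (x : K), ‖x‖ = τ → ‖g x‖ ≤ β n →
      ∃ x' : K, (‖x'‖ = τ ∧ ‖g x'‖ ≤ β (n + 1)) ∧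
        ‖x' - x‖ ≤ (τ * (1/2 : ℝ) ^ ((1:ℝ)/d)) * ((1/2 : ℝ) ^ ((1:ℝ)/d)) ^ n := by
    intro n x hx hgx
    obtain ⟨N, hNd, hNtail⟩ := htail (β (n + 1)) (hβpos _)
    have hT : ‖∑ k ∈ Finset.range (N + 1), b k * x ^ k‖ ≤ β n := by
      have h1 := hgtail x (le_of_eq hx) N (β (n + 1)) (hβpos _).le hNtail
      have h2 : ∑ k ∈ Finset.range (N + 1), b k * x ^ k
          = g x - (g x - ∑ k ∈ Finset.range (N + 1), b k * x ^ k) := by ring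
      rw [h2]
      exact le_trans (aux_norm_sub_le_max _ _)
        (max_le hgx (le_trans h1 (hβmono n)))
    obtain ⟨S, hScard, hSmem, hSclose⟩ :=
      aux_key hτ0 b hb0 hb1 hd1 hbmax hbdeg hbtop N hNd
    obtain ⟨x', hx'S, hx'close⟩ := hSclose x hx (β n) (hβpos n) (hβτ n) hT
    obtain ⟨hx'τ, hx'root⟩ := hSmem x' hx'S
    have hgx' : ‖g x'‖ ≤ β (n + 1) := by
      have h1 := hgtail x' (le_of_eq hx'τ) N (β (n + 1)) (hβpos _).le hNtail
      rwa [hx'root, sub_zero] at h1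
    refine ⟨x', ⟨hx'τ, hgx'⟩, ?_⟩
    have hconv : τ * (β n / τ) ^ ((1:ℝ)/d)
        = (τ * (1/2 : ℝ) ^ ((1:ℝ)/d)) * ((1/2 : ℝ) ^ ((1:ℝ)/d)) ^ n := by
      have h1 : β n / τ = (1/2 : ℝ) ^ (n + 1) := by
        simp only [hβdef]
        field_simp
      rw [h1, ← Real.rpow_natCast (1/2 : ℝ) (n + 1),
        ← Real.rpow_mul (by norm_num : (0:ℝ) ≤ 1/2),
        ← Real.rpow_natCast ((1/2 : ℝ) ^ ((1:ℝ)/d)) n,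
        ← Real.rpow_mul (by norm_num : (0:ℝ) ≤ 1/2),
        mul_assoc, ← Real.rpow_add (by norm_num : (0:ℝ) < 1/2)]
      congr 1
      push_cast
      ring
    rw [← hconv, norm_sub_rev]
    exact hx'close
  -- construct the Cauchy sequence
  let T : ∀ n : ℕ, {x : K // ‖x‖ = τ ∧ ‖g x‖ ≤ β n} := fun n =>
    Nat.rec (motive := fun n => {x : K // ‖x‖ = τ ∧ ‖g x‖ ≤ β n})
      ⟨x1, hx1τ, hgx10⟩
      (fun n p => ⟨(hstep n p.1 p.2.1 p.2.2).choose,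
        (hstep n p.1 p.2.1 p.2.2).choose_spec.1⟩) n
  let u : ℕ → K := fun n => (T n).1
  have hud : ∀ n, ‖u (n + 1) - u n‖
      ≤ (τ * (1/2 : ℝ) ^ ((1:ℝ)/d)) * ((1/2 : ℝ) ^ ((1:ℝ)/d)) ^ n :=
    fun n => (hstep n (T n).1 (T n).2.1 (T n).2.2).choose_spec.2
  have hr1 : ((1/2 : ℝ) ^ ((1:ℝ)/d)) < 1 :=
    Real.rpow_lt_one (by norm_num) (by norm_num) (by positivity)
  have hcauchy : CauchySeq u := by
    refine cauchySeq_of_le_geometric ((1/2 : ℝ) ^ ((1:ℝ)/d)) (τ * (1/2 : ℝ) ^ ((1:ℝ)/d)) hr1 fun n => ?_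
    rw [dist_eq_norm, norm_sub_rev]
    exact hud n
  obtain ⟨xh, hxh⟩ := cauchySeq_tendsto_of_complete hcauchy
  have hxhτ : ‖xh‖ = τ := by
    have h1 : Filter.Tendsto (fun n => ‖u n‖) Filter.atTop (nhds ‖xh‖) := hxh.norm
    have h2 : (fun n => ‖u n‖) = fun _ => τ := funext fun n => (T n).2.1
    rw [h2] at h1
    exact (tendsto_nhds_unique h1 tendsto_const_nhds)
  have hβtend : Filter.Tendsto β Filter.atTop (nhds 0) := by
    have h1 : Filter.Tendsto (fun n : ℕ => (1/2 : ℝ) ^ n) Filter.atTop (nhds 0) :=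
      tendsto_pow_atTop_nhds_zero_of_lt_one (by norm_num) (by norm_num)
    have h2 := h1.const_mul (τ * (1/2))
    rw [mul_zero] at h2
    refine h2.congr fun n => ?_
    simp only [hβdef]
    ring
  have hgxh : g xh = 0 := by
    have hkey : ∀ ε : ℝ, 0 < ε → ‖g xh‖ ≤ ε := by
      intro ε hε
      obtain ⟨N0, hN0⟩ := Metric.tendsto_atTop.mp hxh ε hε
      obtain ⟨N2, hN2⟩ := Filter.eventually_atTop.mp (hβtend.eventually (gt_mem_nhds hε))
      have hdd1 := hN0 (max N0 N2) (le_max_left _ _)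
      have hdd2 := hN2 (max N0 N2) (le_max_right _ _)
      have hsplit : g xh = (g xh - g (u (max N0 N2))) + g (u (max N0 N2)) := by ring
      rw [hsplit]
      refine le_trans (IsUltrametricDist.norm_add_le_max _ _) (max_le ?_ ?_)
      · refine le_trans (hgLip xh (u (max N0 N2)) (le_of_eq hxhτ)
          (le_of_eq (T (max N0 N2)).2.1)) ?_
        rw [← dist_eq_norm, dist_comm]
        exact hdd1.le
      · exact le_trans (T (max N0 N2)).2.2 hdd2.le
    have h0 : ‖g xh‖ ≤ 0 := by
      by_contra hc
      push_neg at hc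
      have := hkey (‖g xh‖ / 2) (by linarith)
      linarith
    exact norm_le_zero_iff.mp h0
  -- the orbit
  set o : ℕ → K := fun i => f^[i] xh with hodef
  have ho : ∀ i : ℕ, ‖o i‖ = τ ∧ g (o i) = 0 := fun i => hZiter i xh hxhτ hgxh
  have hnotinj : ¬ Function.Injective (fun i : Fin (d + 1) => o i.1) := by
    intro hinj
    set pairs : Finset (Fin (d + 1) × Fin (d + 1)) :=
      Finset.univ.filter (fun p => p.1 ≠ p.2) with hpairs
    have hpairs_ne : pairs.Nonempty := by
      refine ⟨(⟨0, by omega⟩, ⟨1, by omega⟩), ?_⟩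
      rw [hpairs, Finset.mem_filter]
      refine ⟨Finset.mem_univ _, ?_⟩
      intro h
      have := congrArg Fin.val h
      simp at this
    set msep : ℝ := pairs.inf' hpairs_ne (fun p => ‖o p.1.1 - o p.2.1‖) with hmsep
    have hmseppos : 0 < msep := by
      rw [hmsep, Finset.lt_inf'_iff]
      intro p hp
      rw [hpairs, Finset.mem_filter] at hp
      have hne : o p.1.1 ≠ o p.2.1 := fun h => hp.2 (hinj h)
      exact norm_pos_iff.mpr (sub_ne_zero_of_ne hne)
    set εf : ℝ := min (τ/2) (τ * ((msep/τ) ^ d / 2)) with hεf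
    have hεfpos : 0 < εf := lt_min (by positivity) (by positivity)
    have hεfτ : εf < τ := lt_of_le_of_lt (min_le_left _ _) (by linarith)
    have hδlt : τ * (εf/τ) ^ ((1:ℝ)/d) < msep := by
      have h1 : εf/τ ≤ (msep/τ) ^ d / 2 := by
        have h0 : εf ≤ τ * ((msep/τ) ^ d / 2) := min_le_right _ _
        rw [div_le_iff₀ hτ0]
        nlinarith
      have h2 : εf/τ < (msep/τ) ^ d :=
        lt_of_le_of_lt h1 (by nlinarith [pow_pos (div_pos hmseppos hτ0) d])
      have h3 : (εf/τ) ^ ((1:ℝ)/d) < ((msep/τ) ^ d) ^ ((1:ℝ)/d) :=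
        Real.rpow_lt_rpow (by positivity) h2 (by positivity)
      have h4 : (((msep/τ) ^ d : ℝ)) ^ ((1:ℝ)/d) = msep/τ := by
        rw [← Real.rpow_natCast (msep/τ) d, ← Real.rpow_mul (by positivity),
          mul_one_div, div_self (by positivity : (d:ℝ) ≠ 0), Real.rpow_one]
      have h5 : τ * (εf/τ) ^ ((1:ℝ)/d) < τ * (msep/τ) := by
        refine mul_lt_mul_of_pos_left ?_ hτ0
        rw [← h4]
        exact h3
      calc τ * (εf/τ) ^ ((1:ℝ)/d) < τ * (msep/τ) := h5
        _ = msep := by field_simp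
    obtain ⟨Nf, hNfd, hNftail⟩ := htail εf hεfpos
    obtain ⟨S, hScard, hSmem, hSclose⟩ :=
      aux_key hτ0 b hb0 hb1 hd1 hbmax hbdeg hbtop Nf hNfd
    have hchoice : ∀ i : Fin (d + 1), ∃ rr ∈ S,
        ‖o i.1 - rr‖ ≤ τ * (εf/τ) ^ ((1:ℝ)/d) := by
      intro i
      have hoi := ho i.1
      have hsmall : ‖∑ k ∈ Finset.range (Nf + 1), b k * (o i.1) ^ k‖ ≤ εf := by
        have h1 := hgtail (o i.1) (le_of_eq hoi.1) Nf εf hεfpos.le hNftail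
        rwa [hoi.2, zero_sub, norm_neg] at h1
      exact hSclose (o i.1) hoi.1 εf hεfpos hεfτ hsmall
    choose ρ hρS hρclose using hchoice
    have hρinj : Set.InjOn ρ ((Finset.univ : Finset (Fin (d + 1))) : Set (Fin (d + 1))) := by
      intro i _ j _ hij
      by_contra hne
      have hp : (i, j) ∈ pairs := by
        rw [hpairs, Finset.mem_filter]
        exact ⟨Finset.mem_univ _, hne⟩
      have hms : msep ≤ ‖o i.1 - o j.1‖ := by
        rw [hmsep]
        exact Finset.inf'_le _ hp
      have hup : ‖o i.1 - o j.1‖ ≤ τ * (εf/τ) ^ ((1:ℝ)/d) := by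
        have hdecomp : o i.1 - o j.1 = (o i.1 - ρ i) - (o j.1 - ρ j) := by
          rw [hij]; ring
        rw [hdecomp]
        exact le_trans (aux_norm_sub_le_max _ _) (max_le (hρclose i) (hρclose j))
      linarith
    have hcard := Finset.card_le_card_of_injOn ρ (fun i _ => hρS i) hρinj
    rw [Finset.card_univ, Fintype.card_fin] at hcard
    omega
  rw [Function.not_injective_iff] at hnotinj
  obtain ⟨i, j, hoij, hij⟩ := hnotinj
  obtain ⟨i', j', hij', hlt'⟩ : ∃ i' j' : Fin (d + 1), o i'.1 = o j'.1 ∧ i'.1 < j'.1 := by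
    rcases lt_or_gt_of_ne (fun h : i.1 = j.1 => hij (Fin.ext h)) with h | h
    · exact ⟨i, j, hoij, h⟩
    · exact ⟨j, i, hoij.symm, h⟩
  have hyZ := ho i'.1
  have hfix : f^[j'.1 - i'.1] (o i'.1) = o i'.1 := by
    show f^[j'.1 - i'.1] (f^[i'.1] xh) = o i'.1
    rw [← Function.iterate_add_apply]
    have hsum : j'.1 - i'.1 + i'.1 = j'.1 := by omega
    rw [hsum]
    exact hij'.symm
  have hderiv : ∀ (n : ℕ) (w : K), ‖w‖ = τ → g w = 0 →
      ∃ L : K, HasDerivAt (f^[n]) L w ∧ ‖L‖ = 1 := by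
    intro n
    induction n with
    | zero =>
      intro w hw hgw
      exact ⟨1, by simpa using hasDerivAt_id w, norm_one⟩
    | succ n ih =>
      intro w hw hgw
      obtain ⟨L1, hL1, hL1n⟩ := ih w hw hgw
      obtain ⟨hwn, hgwn⟩ := hZiter n w hw hgw
      obtain ⟨L2, hL2, hL2n⟩ := aux_deriv lam hlam a ha0 ha1 hApos hτ0 hAτ haA f hf hfc'
        (le_of_eq hwn)
      refine ⟨L2 * L1, ?_, by rw [norm_mul, hL1n, hL2n, mul_one]⟩
      rw [Function.iterate_succ']
      exact HasDerivAt.comp w hL2 hL1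
  obtain ⟨L, hL, hLn⟩ := hderiv (j'.1 - i'.1) (o i'.1) hyZ.1 hyZ.2
  refine ⟨o i'.1, hyZ.1, j'.1 - i'.1, by omega, ?_, hfix, L, hL, hLn⟩
  have := j'.isLt
  omega
end
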